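/- arXiv:0805.0359 — 9 statements merged into one kernel-verified Lean document; each statement's English description precedes it below -/
import Mathlib

section
/- For an endomorphism φ of a right R-module M, φ is strongly clean in End(M_R) if and only if there is a decomposition M = P ⊕ Q where P and Q are φ-invariant submodules, φ restricted to P is an automorphism of P, and (1 - φ) restricted to Q is an automorphism of Q. -/
/-- An element of a ring is strongly clean if it is the sum of an idempotent and a unit
that commute with each other. -/
def IsStronglyClean {S : Type*} [Ring S] (a : S) : Prop :=
  ∃ e u : S, IsIdempotentElem e ∧ IsUnit u ∧ a = e + u ∧ e * u = u * e

/-- Nicholson: an endomorphism of a module is strongly clean iff the module decomposes as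
`P ⊕ Q` with both summands `φ`-invariant, `φ` an automorphism of `P`, and `1 - φ` an
automorphism of `Q`. -/
theorem stronglyClean_end_iff {R M : Type*} [Ring R] [AddCommGroup M] [Module R M]
    (φ : Module.End R M) :
    IsStronglyClean φ ↔
      ∃ (P Q : Submodule R M), IsCompl P Q ∧
        ∃ (hP : ∀ x ∈ P, φ x ∈ P) (hQ : ∀ x ∈ Q, φ x ∈ Q),
          Function.Bijective (fun x : P => (⟨φ x.1, hP x.1 x.2⟩ : P)) ∧
          Function.Bijective
            (fun x : Q => (⟨x.1 - φ x.1, Q.sub_mem x.2 (hQ x.1 x.2)⟩ : Q)) := by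
  constructor
  · rintro ⟨e, u, he, hu, rfl, hcomm⟩
    set φ := e + u with hφ
    set w : Module.End R M := ↑hu.unit⁻¹ with hw
    have hcu : Commute e u := hcomm
    have hueq : (↑hu.unit : Module.End R M) = u := hu.unit_spec
    have hcw : Commute e w := by
      have : Commute e (↑hu.unit : Module.End R M) := by rw [hueq]; exact hcu
      exact this.units_inv_right
    have huw : ∀ m, u (w m) = m := fun m => by
      have : (↑hu.unit * ↑hu.unit⁻¹ : Module.End R M) = 1 := by
        exact_mod_cast hu.unit.mul_inv
      rw [hueq] at this
      exact congrArg (fun f : Module.End R M => f m) this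
    have hinj : Function.Injective u := (Module.End.isUnit_iff u |>.mp hu).1
    have hew : ∀ m, e (w m) = w (e m) := fun m =>
      congrArg (fun f : Module.End R M => f m) hcw
    have heu : ∀ m, e (u m) = u (e m) := fun m =>
      congrArg (fun f : Module.End R M => f m) hcu
    have hee : ∀ m, e (e m) = e m := fun m =>
      congrArg (fun f : Module.End R M => f m) he
    -- range membership iff fixed
    have hfix : ∀ x, x ∈ LinearMap.range e ↔ e x = x := by
      intro x
      constructor
      · rintro ⟨y, rfl⟩; exact hee y
      · intro h; exact ⟨x, h⟩
    refine ⟨LinearMap.ker e, LinearMap.range e, ?_, ?_, ?_, ?_, ?_⟩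
    · constructor
      · rw [disjoint_iff_inf_le]
        intro x hx
        rw [Submodule.mem_inf] at hx
        obtain ⟨hk, hr⟩ := hx
        rw [Submodule.mem_bot, ← (hfix x).mp hr, LinearMap.mem_ker.mp hk]
      · rw [codisjoint_iff_le_sup]
        intro x _
        have h1 : x - e x ∈ LinearMap.ker e := by
          simp only [LinearMap.mem_ker, map_sub, hee, sub_self]
        have := Submodule.add_mem_sup h1 (LinearMap.mem_range_self e x)
        rwa [sub_add_cancel] at this
    · intro x hx
      simp only [LinearMap.mem_ker] at hx ⊢
      show e (e x + u x) = 0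
      rw [map_add, hee, heu, hx, map_zero, add_zero]
    · intro x hx
      rw [hfix] at hx ⊢
      show e (e x + u x) = e x + u x
      rw [map_add, hee, heu, hx]
    · -- bijective φ|ker e ; here φ x = u x since e x = 0
      constructor
      · rintro ⟨a, ha⟩ ⟨b, hb⟩ h
        simp only [Subtype.mk.injEq] at h ⊢
        simp only [LinearMap.mem_ker] at ha hb
        have : u a = u b := by
          have h' : e a + u a = e b + u b := h
          rwa [ha, hb, zero_add, zero_add] at h'
        exact hinj this
      · rintro ⟨y, hy⟩
        simp only [LinearMap.mem_ker] at hy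
        refine ⟨⟨w y, ?_⟩, ?_⟩
        · simp only [LinearMap.mem_ker, hew, hy, map_zero]
        · apply Subtype.ext
          show e (w y) + u (w y) = y
          rw [hew, hy, map_zero, zero_add, huw]
    · -- bijective (1-φ)|range e ; here x - φ x = -(u x) since e x = x
      have key : ∀ x, e x = x → x - (e x + u x) = -(u x) := by
        intro x hx; rw [hx]; abel
      constructor
      · rintro ⟨a, ha⟩ ⟨b, hb⟩ h
        rw [hfix] at ha hb
        simp only [Subtype.mk.injEq] at h ⊢
        have h' : a - (e a + u a) = b - (e b + u b) := h
        rw [key a ha, key b hb, neg_inj] at h'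
        exact hinj h'
      · rintro ⟨y, hy⟩
        rw [hfix] at hy
        refine ⟨⟨-(w y), ?_⟩, ?_⟩
        · rw [hfix]; rw [map_neg, hew, hy]
        · apply Subtype.ext
          show -(w y) - (e (-(w y)) + u (-(w y))) = y
          rw [key _ (by rw [map_neg, hew, hy]), map_neg, neg_neg, huw]
  · rintro ⟨P, Q, hc, hP, hQ, hbP, hbQ⟩
    set π : M →ₗ[R] Q := Q.projectionOnto P hc.symm with hπ
    set e : Module.End R M := Q.subtype ∘ₗ π with hedef
    have heQ : ∀ x ∈ Q, e x = x := fun x hx => by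
      show ((π x : Q) : M) = x
      exact congrArg Subtype.val
        (Submodule.linearProjOfIsCompl_apply_left hc.symm ⟨x, hx⟩)
    have heP : ∀ x ∈ P, e x = 0 := fun x hx => by
      show (π x : M) = 0
      rw [Submodule.projectionOnto_apply_of_mem_right hc.symm (x := x) hx]; rfl
    have heQ' : ∀ x, e x ∈ Q := fun x => (π x).2
    -- decomposition
    have hdec : ∀ m : M, ∃ p ∈ P, ∃ q ∈ Q, m = p + q := by
      intro m
      obtain ⟨p, q, h, -⟩ := Submodule.existsUnique_add_of_isCompl hc m
      exact ⟨p, p.2, q, q.2, h.symm⟩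
    have hzero : ∀ p ∈ P, ∀ q ∈ Q, p + q = 0 → p = 0 ∧ q = 0 := by
      intro p hp q hq h
      have hpq : p = -q := eq_neg_of_add_eq_zero_left h
      have hpQ : p ∈ Q := hpq ▸ Q.neg_mem hq
      have hp0 : p = 0 := Submodule.disjoint_def.mp hc.disjoint p hp hpQ
      refine ⟨hp0, ?_⟩
      rw [hp0, zero_add] at h
      exact h
    have he : IsIdempotentElem e := by
      ext m
      exact heQ (e m) (heQ' m)
    have hcomm : e * φ = φ * e := by
      ext m
      obtain ⟨p, hp, q, hq, rfl⟩ := hdec (m)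
      show e (φ (p + q)) = φ (e (p + q))
      have l1 : e (p + q) = q := by rw [map_add, heP p hp, heQ q hq, zero_add]
      have l2 : e (φ (p + q)) = φ q := by
        rw [map_add φ, map_add, heP _ (hP p hp), heQ _ (hQ q hq), zero_add]
      rw [l1, l2]
    set u : Module.End R M := φ - e with hudef
    have hubij : Function.Bijective u := by
      constructor
      · rw [← LinearMap.ker_eq_bot, LinearMap.ker_eq_bot']
        intro m hm
        obtain ⟨p, hp, q, hq, rfl⟩ := hdec m
        have hval : φ p + (φ q - q) = 0 := by
          have h2 : φ p - e p + (φ q - e q) = 0 := by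
            simpa [hudef, map_add, LinearMap.sub_apply] using hm
          rw [heP p hp, heQ q hq, sub_zero] at h2
          exact h2
        obtain ⟨h1, h2⟩ := hzero _ (hP p hp) _ (Q.sub_mem (hQ q hq) hq) hval
        have hp0 : p = 0 := by
          have := hbP.1 (a₁ := ⟨p, hp⟩) (a₂ := ⟨0, P.zero_mem⟩) (by
            apply Subtype.ext; simpa using h1)
          simpa using congrArg Subtype.val this
        have hq0 : q = 0 := by
          have := hbQ.1 (a₁ := ⟨q, hq⟩) (a₂ := ⟨0, Q.zero_mem⟩) (by
            apply Subtype.ext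
            show q - φ q = (0 : M) - φ 0
            rw [map_zero, sub_zero, sub_eq_zero]
            rw [sub_eq_zero] at h2
            exact h2.symm)
          simpa using congrArg Subtype.val this
        rw [hp0, hq0, add_zero]
      · intro m
        obtain ⟨p, hp, q, hq, rfl⟩ := hdec m
        obtain ⟨⟨x, hxP⟩, hx⟩ := hbP.2 ⟨p, hp⟩
        obtain ⟨⟨y, hyQ⟩, hy⟩ := hbQ.2 ⟨-q, Q.neg_mem hq⟩
        have hx' : φ x = p := congrArg Subtype.val hx
        have hy' : y - φ y = -q := congrArg Subtype.val hy
        refine ⟨x + y, ?_⟩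
        show φ (x + y) - e (x + y) = p + q
        rw [map_add, map_add, heP x hxP, heQ y hyQ, zero_add, hx']
        have : φ y - y = q := by rw [← neg_sub, hy', neg_neg]
        rw [add_sub_assoc, this]
    refine ⟨e, u, he, Module.End.isUnit_iff u |>.mpr hubij, by rw [hudef]; abel, ?_⟩
    rw [hudef, mul_sub, sub_mul, hcomm, he.eq]
end

section
/- For an endomorphism φ of a right R-module M, φ is strongly π-regular in End(M_R) if and only if there is a decomposition M = P ⊕ Q where P and Q are φ-invariant, φ restricted to P is an automorphism, and φ restricted to Q is nilpotent. -/
/-- An element of a ring is strongly π-regular if both chains `aS ⊇ a²S ⊇ ⋯` and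
`Sa ⊇ Sa² ⊇ ⋯` terminate; equivalently `aⁿ ∈ aⁿ⁺¹S` and `aᵐ ∈ Saᵐ⁺¹` for some `n, m`. -/
def IsStronglyPiRegular {S : Type*} [Ring S] (a : S) : Prop :=
  (∃ (n : ℕ) (x : S), a ^ n = a ^ (n + 1) * x) ∧
  (∃ (n : ℕ) (x : S), a ^ n = x * a ^ (n + 1))

private lemma spr_right_iter {S : Type*} [Ring S] {a x : S} {n : ℕ}
    (h : a ^ n = a ^ (n + 1) * x) : ∀ k, a ^ n = a ^ (n + k) * x ^ k := by
  intro k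
  induction k with
  | zero => simp
  | succ k ih =>
    have h2 : a ^ (n + k) = a ^ (n + k + 1) * x := by
      calc a ^ (n + k) = a ^ k * a ^ n := by rw [← pow_add, Nat.add_comm]
        _ = a ^ k * (a ^ (n + 1) * x) := by rw [h]
        _ = (a ^ k * a ^ (n + 1)) * x := by rw [mul_assoc]
        _ = a ^ (n + k + 1) * x := by rw [← pow_add]; ring_nf
    calc a ^ n = a ^ (n + k) * x ^ k := ih
      _ = (a ^ (n + k + 1) * x) * x ^ k := by rw [h2]
      _ = a ^ (n + (k + 1)) * x ^ (k + 1) := by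
          rw [mul_assoc, ← pow_succ']; ring_nf

private lemma spr_left_iter {S : Type*} [Ring S] {a y : S} {m : ℕ}
    (h : a ^ m = y * a ^ (m + 1)) : ∀ k, a ^ m = y ^ k * a ^ (m + k) := by
  intro k
  induction k with
  | zero => simp
  | succ k ih =>
    have h2 : a ^ (m + k) = y * a ^ (m + k + 1) := by
      calc a ^ (m + k) = a ^ m * a ^ k := by rw [← pow_add]
        _ = (y * a ^ (m + 1)) * a ^ k := by rw [h]
        _ = y * (a ^ (m + 1) * a ^ k) := by rw [mul_assoc]
        _ = y * a ^ (m + k + 1) := by rw [← pow_add]; ring_nf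
    calc a ^ m = y ^ k * a ^ (m + k) := ih
      _ = y ^ k * (y * a ^ (m + k + 1)) := by rw [h2]
      _ = y ^ (k + 1) * a ^ (m + (k + 1)) := by
          rw [← mul_assoc, ← pow_succ]; ring_nf

private lemma end_pow_succ_apply {R M : Type*} [Ring R] [AddCommGroup M] [Module R M]
    (φ : Module.End R M) (k : ℕ) (v : M) : (φ ^ (k + 1)) v = φ ((φ ^ k) v) := by
  rw [pow_succ', Module.End.mul_apply]

private lemma end_pow_succ_apply' {R M : Type*} [Ring R] [AddCommGroup M] [Module R M]
    (φ : Module.End R M) (k : ℕ) (v : M) : (φ ^ (k + 1)) v = (φ ^ k) (φ v) := by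
  rw [pow_succ, Module.End.mul_apply]

private lemma end_pow_add_apply {R M : Type*} [Ring R] [AddCommGroup M] [Module R M]
    (φ : Module.End R M) (a b : ℕ) (v : M) : (φ ^ (a + b)) v = (φ ^ a) ((φ ^ b) v) := by
  rw [pow_add, Module.End.mul_apply]

/-- An endomorphism of a module is strongly π-regular iff the module decomposes as
`P ⊕ Q` with both summands `φ`-invariant, `φ` an automorphism of `P`, and `φ`
nilpotent on `Q`. -/
theorem stronglyPiRegular_end_iff {R M : Type*} [Ring R] [AddCommGroup M] [Module R M]
    (φ : Module.End R M) :
    IsStronglyPiRegular φ ↔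
      ∃ (P Q : Submodule R M), IsCompl P Q ∧
        ∃ (hP : ∀ x ∈ P, φ x ∈ P) (_hQ : ∀ x ∈ Q, φ x ∈ Q),
          Function.Bijective (fun x : P => (⟨φ x.1, hP x.1 x.2⟩ : P)) ∧
          ∃ n : ℕ, ∀ x ∈ Q, (φ ^ n) x = 0 := by
  constructor
  · rintro ⟨⟨n, x, hx⟩, ⟨m, y, hy⟩⟩
    obtain ⟨N, hn, hm⟩ : ∃ N, n ≤ N ∧ m ≤ N :=
      ⟨max n m, le_max_left _ _, le_max_right _ _⟩
    -- right divisibility at all levels beyond N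
    have hR : ∀ j : ℕ, ∃ u : Module.End R M, φ ^ N = φ ^ (N + j) * u := by
      intro j
      refine ⟨x ^ j, ?_⟩
      have h1 : φ ^ n = φ ^ (n + j) * x ^ j := spr_right_iter hx _
      calc φ ^ N = φ ^ (N - n) * φ ^ n := by rw [← pow_add]; congr 1; omega
        _ = φ ^ (N - n) * (φ ^ (n + j) * x ^ j) := by rw [h1]
        _ = (φ ^ (N - n) * φ ^ (n + j)) * x ^ j := by rw [mul_assoc]
        _ = φ ^ (N + j) * x ^ j := by rw [← pow_add]; congr 2; omega
    have hL : ∀ j : ℕ, ∃ u : Module.End R M, φ ^ N = u * φ ^ (N + j) := by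
      intro j
      refine ⟨y ^ j, ?_⟩
      have h1 : φ ^ m = y ^ j * φ ^ (m + j) := spr_left_iter hy _
      calc φ ^ N = φ ^ m * φ ^ (N - m) := by rw [← pow_add]; congr 1; omega
        _ = (y ^ j * φ ^ (m + j)) * φ ^ (N - m) := by rw [h1]
        _ = y ^ j * (φ ^ (m + j) * φ ^ (N - m)) := by rw [mul_assoc]
        _ = y ^ j * φ ^ (N + j) := by rw [← pow_add]; congr 2; omega
    refine ⟨LinearMap.range (φ ^ N), LinearMap.ker (φ ^ N), ?_, ?_, ?_, ?_, N, ?_⟩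
    · constructor
      · rw [disjoint_iff_inf_le]
        rintro v ⟨⟨w, hw⟩, hv0⟩
        obtain ⟨u, hu⟩ := hL N
        have h2N : (φ ^ (N + N)) w = 0 := by
          rw [end_pow_add_apply, hw]
          exact hv0
        have h0 : (φ ^ N) w = 0 := by
          rw [hu, Module.End.mul_apply, h2N, map_zero]
        rw [Submodule.mem_bot, ← hw]
        exact h0
      · rw [codisjoint_iff_le_sup]
        intro v _
        obtain ⟨u, hu⟩ := hR N
        refine Submodule.mem_sup.2 ⟨(φ ^ N) (u v), ⟨u v, rfl⟩, v - (φ ^ N) (u v), ?_, by abel⟩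
        rw [LinearMap.mem_ker, map_sub, ← end_pow_add_apply, ← Module.End.mul_apply, ← hu]
        exact sub_self _
    · rintro v ⟨w, hw⟩
      refine ⟨φ w, ?_⟩
      rw [← end_pow_succ_apply', end_pow_succ_apply, hw]
    · intro v hv
      rw [LinearMap.mem_ker] at hv ⊢
      rw [← end_pow_succ_apply', end_pow_succ_apply, hv, map_zero]
    · constructor
      · rintro ⟨a, ha⟩ ⟨b, hb⟩ hab
        have h1 : φ a = φ b := congrArg Subtype.val hab
        ext
        obtain ⟨w, hw⟩ := ha
        obtain ⟨w', hw'⟩ := hb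
        obtain ⟨u, hu⟩ := hL 1
        have h2 : (φ ^ (N + 1)) (w - w') = 0 := by
          rw [map_sub, end_pow_succ_apply, end_pow_succ_apply, hw, hw'] at *
          rw [h1, sub_self]
        have h3 : (φ ^ N) (w - w') = 0 := by
          rw [hu, Module.End.mul_apply, h2, map_zero]
        have h4 : a - b = 0 := by rw [← hw, ← hw', ← map_sub, h3]
        exact sub_eq_zero.1 h4
      · rintro ⟨b, hb⟩
        obtain ⟨w, hw⟩ := hb
        obtain ⟨u, hu⟩ := hR 1
        refine ⟨⟨(φ ^ N) (u w), ⟨u w, rfl⟩⟩, ?_⟩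
        apply Subtype.ext
        show φ ((φ ^ N) (u w)) = b
        rw [← end_pow_succ_apply, ← Module.End.mul_apply, ← hu, hw]
    · intro v hv
      exact LinearMap.mem_ker.1 hv
  · rintro ⟨P, Q, hc, hP, hQ, hbij, n, hnil⟩
    have hbij' : Function.Bijective (φ.restrict hP) := hbij
    set e : P ≃ₗ[R] P := LinearEquiv.ofBijective (φ.restrict hP) hbij' with he
    set pr : M →ₗ[R] P := P.linearProjOfIsCompl Q hc with hpr
    set ψ : Module.End R M := P.subtype ∘ₗ (e.symm : P →ₗ[R] P) ∘ₗ pr with hψ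
    -- decomposition facts
    have hdec : ∀ v : M, v - (pr v : M) ∈ Q := by
      intro v
      rw [← Submodule.linearProjOfIsCompl_apply_eq_zero_iff hc, map_sub,
        Submodule.linearProjOfIsCompl_apply_left hc]
      exact sub_self _
    have hkey : ∀ z : P, φ ((e.symm z : P) : M) = z := by
      intro z
      have h1 := e.apply_symm_apply z
      have h2 : e (e.symm z) = φ.restrict hP (e.symm z) := rfl
      rw [h2] at h1
      exact congrArg Subtype.val h1
    have hφn : ∀ v : M, (φ ^ n) v = (φ ^ n) (pr v : M) := by
      intro v
      have h0 : (φ ^ n) (v - (pr v : M)) = 0 := hnil _ (hdec v)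
      rw [map_sub, sub_eq_zero] at h0
      exact h0
    constructor
    · refine ⟨n, ψ, ?_⟩
      ext v
      rw [Module.End.mul_apply, end_pow_succ_apply']
      have h2 : φ (ψ v) = (pr v : M) := by
        simp only [hψ, LinearMap.coe_comp, Function.comp_apply, Submodule.coe_subtype,
          LinearEquiv.coe_coe]
        exact hkey (pr v)
      rw [h2, ← hφn]
    · refine ⟨n, ψ, ?_⟩
      ext v
      rw [Module.End.mul_apply]
      have hpq : (φ ^ (n + 1)) v = (φ ^ (n + 1)) (pr v : M) := by
        have h0 : (φ ^ (n + 1)) (v - (pr v : M)) = 0 := by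
          rw [end_pow_succ_apply, hnil _ (hdec v), map_zero]
        rw [map_sub, sub_eq_zero] at h0
        exact h0
      have hPpow : ∀ (k : ℕ) (p : M), p ∈ P → (φ ^ k) p ∈ P := by
        intro k
        induction k with
        | zero => intro p hp; simpa using hp
        | succ k ih =>
          intro p hp
          rw [end_pow_succ_apply]
          exact hP _ (ih p hp)
      have hmem : (φ ^ n) (pr v : M) ∈ P := hPpow n _ (pr v).2
      have hmem1 : (φ ^ (n + 1)) (pr v : M) ∈ P := hPpow (n + 1) _ (pr v).2
      have heq : e ⟨(φ ^ n) (pr v : M), hmem⟩ = ⟨(φ ^ (n + 1)) (pr v : M), hmem1⟩ := by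
        apply Subtype.ext
        show φ ((φ ^ n) (pr v : M)) = (φ ^ (n + 1)) (pr v : M)
        rw [end_pow_succ_apply]
      have hfin : ψ ((φ ^ (n + 1)) v) = (φ ^ n) (pr v : M) := by
        rw [hpq]
        simp only [hψ, LinearMap.coe_comp, Function.comp_apply, Submodule.coe_subtype,
          LinearEquiv.coe_coe]
        have hprv : pr ((φ ^ (n + 1)) (pr v : M)) =
            ⟨(φ ^ (n + 1)) (pr v : M), hmem1⟩ := by
          have h5 := Submodule.linearProjOfIsCompl_apply_left hc
            (⟨(φ ^ (n + 1)) (pr v : M), hmem1⟩ : P)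
          exact h5
        rw [hprv, ← heq, e.symm_apply_apply]
      rw [hfin, hφn]
end

section
/- Let R be a projective-free ring and A an n×n matrix over R. Then A is a non-trivial strongly clean matrix if and only if A is similar to a block diagonal matrix diag(T₀, T₁) where T₀ and I - T₁ are invertible while neither I - T₀ nor T₁ is invertible. -/
/-- A ring is projective-free if every finitely generated projective module is free,
of unique rank. -/
def IsProjectiveFree (R : Type) [Ring R] : Prop :=
  InvariantBasisNumber R ∧
    ∀ (M : Type) [AddCommGroup M] [Module R M],
      Module.Finite R M → Module.Projective R M → Module.Free R M

namespace SCAux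

open Matrix

variable {R : Type} [Ring R]

theorem conj_mul {m n : Type} [Fintype m] [Fintype n] [DecidableEq m] [DecidableEq n]
    {P : Matrix m n R} {Q : Matrix n m R} (hQP : Q * P = 1)
    (X Y : Matrix n n R) : (P * X * Q) * (P * Y * Q) = P * (X * Y) * Q := by
  simp only [Matrix.mul_assoc]
  rw [← Matrix.mul_assoc Q P, hQP, Matrix.one_mul]

theorem conj_back {m n : Type} [Fintype m] [Fintype n] [DecidableEq m] [DecidableEq n]
    {P : Matrix m n R} {Q : Matrix n m R} (hQP : Q * P = 1)
    (X : Matrix n n R) : Q * (P * X * Q) * P = X := by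
  simp only [Matrix.mul_assoc]
  rw [hQP, Matrix.mul_one, ← Matrix.mul_assoc Q P, hQP, Matrix.one_mul]

theorem isUnit_conj {m n : Type} [Fintype m] [Fintype n] [DecidableEq m] [DecidableEq n]
    {P : Matrix m n R} {Q : Matrix n m R} (hPQ : P * Q = 1) (hQP : Q * P = 1)
    {M : Matrix n n R} (hM : IsUnit M) : IsUnit (P * M * Q) := by
  obtain ⟨N, hN1, hN2⟩ := isUnit_iff_exists.mp hM
  refine isUnit_iff_exists.mpr ⟨P * N * Q, ?_, ?_⟩
  · rw [conj_mul hQP, hN1, Matrix.mul_one, hPQ]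
  · rw [conj_mul hQP, hN2, Matrix.mul_one, hPQ]

theorem conj_one_sub {m n : Type} [Fintype m] [Fintype n] [DecidableEq m] [DecidableEq n]
    {P : Matrix m n R} {Q : Matrix n m R} (hPQ : P * Q = 1)
    (M : Matrix n n R) : 1 - P * M * Q = P * (1 - M) * Q := by
  rw [Matrix.mul_sub, Matrix.sub_mul, Matrix.mul_one, hPQ]

theorem isUnit_fromBlocks {k l : Type} [Fintype k] [Fintype l] [DecidableEq k] [DecidableEq l]
    {a : Matrix k k R} {d : Matrix l l R} :
    IsUnit (Matrix.fromBlocks a 0 0 d) ↔ IsUnit a ∧ IsUnit d := by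
  constructor
  · intro h
    obtain ⟨W, h1, h2⟩ := isUnit_iff_exists.mp h
    rw [← Matrix.fromBlocks_toBlocks W] at h1 h2
    rw [Matrix.fromBlocks_multiply, ← Matrix.fromBlocks_one] at h1 h2
    have e11 := congrArg Matrix.toBlocks₁₁ h1
    have e22 := congrArg Matrix.toBlocks₂₂ h1
    have f11 := congrArg Matrix.toBlocks₁₁ h2
    have f22 := congrArg Matrix.toBlocks₂₂ h2
    simp only [Matrix.toBlocks_fromBlocks₁₁, Matrix.toBlocks_fromBlocks₂₂, Matrix.zero_mul,
      Matrix.mul_zero, add_zero, zero_add] at e11 e22 f11 f22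
    exact ⟨isUnit_iff_exists.mpr ⟨_, e11, f11⟩, isUnit_iff_exists.mpr ⟨_, e22, f22⟩⟩
  · rintro ⟨ha, hd⟩
    obtain ⟨a', ha1, ha2⟩ := isUnit_iff_exists.mp ha
    obtain ⟨d', hd1, hd2⟩ := isUnit_iff_exists.mp hd
    refine isUnit_iff_exists.mpr ⟨Matrix.fromBlocks a' 0 0 d', ?_, ?_⟩ <;>
      rw [Matrix.fromBlocks_multiply] <;>
      simp [ha1, ha2, hd1, hd2, ← Matrix.fromBlocks_one]

theorem fromBlocks_sub {k l : Type} (a a' : Matrix k k R) (d d' : Matrix l l R) :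
    Matrix.fromBlocks a 0 0 d - Matrix.fromBlocks a' 0 0 d' =
      Matrix.fromBlocks (a - a') 0 0 (d - d') := by
  rw [sub_eq_add_neg, Matrix.fromBlocks_neg, Matrix.fromBlocks_add]
  simp [sub_eq_add_neg]

theorem one_sub_fromBlocks {k l : Type} [DecidableEq k] [DecidableEq l]
    (a : Matrix k k R) (d : Matrix l l R) :
    (1 : Matrix (k ⊕ l) (k ⊕ l) R) - Matrix.fromBlocks a 0 0 d =
      Matrix.fromBlocks (1 - a) 0 0 (1 - d) := by
  rw [← Matrix.fromBlocks_one, fromBlocks_sub]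

/-- `Matrix.reindex` as a ring equivalence (entries in a noncommutative ring). -/
def reindexRingEquiv {m n : Type} [Fintype m] [Fintype n] [DecidableEq m] [DecidableEq n]
    (e : m ≃ n) : Matrix m m R ≃+* Matrix n n R :=
  { Matrix.reindex e e with
    map_mul' := fun M N => by
      change (M * N).submatrix e.symm e.symm = M.submatrix e.symm e.symm * N.submatrix e.symm e.symm
      exact (Matrix.submatrix_mul_equiv M N _ _ _).symm
    map_add' := fun M N => rfl }

theorem reindexRingEquiv_apply {m n : Type} [Fintype m] [Fintype n] [DecidableEq m]
    [DecidableEq n] (e : m ≃ n) (M : Matrix m m R) :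
    reindexRingEquiv e M = Matrix.reindex e e M := rfl

theorem isUnit_reindexRingEquiv {m n : Type} [Fintype m] [Fintype n] [DecidableEq m]
    [DecidableEq n] (e : m ≃ n) {M : Matrix m m R} :
    IsUnit (reindexRingEquiv e M) ↔ IsUnit M := by
  constructor
  · intro h
    have := h.map (reindexRingEquiv (R := R) e).symm.toRingHom
    simpa using this
  · intro h
    exact h.map (reindexRingEquiv (R := R) e).toRingHom

theorem toLinRight_inj {m n' : Type} [Fintype m] [DecidableEq m] {M N : Matrix m n' R}
    (h : Matrix.toLinearMapRight' M = Matrix.toLinearMapRight' N) : M = N :=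
  LinearMap.toMatrixRight'.symm.injective h

theorem summand_finite_projective {n : ℕ} (p q : Submodule R (Fin n → R)) (h : IsCompl p q) :
    Module.Finite R p ∧ Module.Projective R p := by
  let eqv := Submodule.prodEquivOfIsCompl p q h
  let i : p →ₗ[R] (Fin n → R) := eqv.toLinearMap ∘ₗ LinearMap.inl R p q
  let s : (Fin n → R) →ₗ[R] p := LinearMap.fst R p q ∘ₗ eqv.symm.toLinearMap
  have hsi : s ∘ₗ i = LinearMap.id := by
    ext x
    simp [i, s, eqv]
  have hs : Function.Surjective s := fun x =>
    ⟨i x, by rw [← LinearMap.comp_apply, hsi]; rfl⟩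
  exact ⟨Module.Finite.of_surjective s hs, Module.Projective.of_split i s hsi⟩

theorem exists_conj_idem (hR : IsProjectiveFree R) {n : ℕ} (E : Matrix (Fin n) (Fin n) R)
    (hE : E * E = E) :
    ∃ (k l : ℕ) (P : Matrix (Fin n) (Fin (k + l)) R) (Q : Matrix (Fin (k + l)) (Fin n) R),
      P * Q = 1 ∧ Q * P = 1 ∧
      E = P * (Matrix.reindex finSumFinEquiv finSumFinEquiv
          (Matrix.fromBlocks (0 : Matrix (Fin k) (Fin k) R) 0 0
            (1 : Matrix (Fin l) (Fin l) R))) * Q := by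
  classical
  set f : (Fin n → R) →ₗ[R] (Fin n → R) := Matrix.toLinearMapRight' E with hfdef
  have hff : f ∘ₗ f = f := by
    rw [hfdef, ← Matrix.toLinearMapRight'_mul, hE]
  have hproj : LinearMap.IsProj (LinearMap.range f) f :=
    ⟨fun x => LinearMap.mem_range_self f x, fun x hx => by
      obtain ⟨y, rfl⟩ := hx
      rw [← LinearMap.comp_apply, hff]⟩
  have hcompl : IsCompl (LinearMap.range f) (LinearMap.ker f) := hproj.isCompl
  obtain ⟨finp, projp⟩ := summand_finite_projective _ _ hcompl
  obtain ⟨finq, projq⟩ := summand_finite_projective _ _ hcompl.symm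
  haveI := finp; haveI := projp; haveI := finq; haveI := projq
  haveI freep : Module.Free R (LinearMap.range f) := hR.2 _ finp projp
  haveI freeq : Module.Free R (LinearMap.ker f) := hR.2 _ finq projq
  set k := Fintype.card (Module.Free.ChooseBasisIndex R (LinearMap.ker f)) with hk
  set l := Fintype.card (Module.Free.ChooseBasisIndex R (LinearMap.range f)) with hl
  let bq : Module.Basis (Fin k) R (LinearMap.ker f) :=
    (Module.Free.chooseBasis R _).reindex (Fintype.equivFin _)
  let bp : Module.Basis (Fin l) R (LinearMap.range f) :=
    (Module.Free.chooseBasis R _).reindex (Fintype.equivFin _)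
  let B : Module.Basis (Fin k ⊕ Fin l) R (Fin n → R) :=
    (bq.prod bp).map (Submodule.prodEquivOfIsCompl _ _ hcompl.symm)
  have hBl : ∀ i, f (B (Sum.inl i)) = 0 := by
    intro i
    have h1 : B (Sum.inl i) = (bq i : Fin n → R) := by
      simp [B, Module.Basis.prod_apply, Submodule.coe_prodEquivOfIsCompl']
    rw [h1]
    exact LinearMap.mem_ker.mp (bq i).2
  have hBr : ∀ i, f (B (Sum.inr i)) = B (Sum.inr i) := by
    intro i
    have h1 : B (Sum.inr i) = (bp i : Fin n → R) := by
      simp [B, Module.Basis.prod_apply, Submodule.coe_prodEquivOfIsCompl']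
    rw [h1]
    exact hproj.2 _ (bp i).2
  let B' : Module.Basis (Fin (k + l)) R (Fin n → R) := B.reindex finSumFinEquiv
  let g : (Fin (k + l) → R) ≃ₗ[R] (Fin n → R) := B'.equivFun.symm
  have hg : ∀ j, g (Pi.single j 1) = B' j := by
    intro j
    show B'.equivFun.symm _ = _
    rw [Module.Basis.equivFun_symm_apply]
    simp [Pi.single_apply]
  set D : Matrix (Fin (k + l)) (Fin (k + l)) R :=
    Matrix.reindex finSumFinEquiv finSumFinEquiv
      (Matrix.fromBlocks (0 : Matrix (Fin k) (Fin k) R) 0 0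
        (1 : Matrix (Fin l) (Fin l) R)) with hD
  set P : Matrix (Fin n) (Fin (k + l)) R := LinearMap.toMatrixRight' g.symm.toLinearMap with hPdef
  set Q : Matrix (Fin (k + l)) (Fin n) R := LinearMap.toMatrixRight' g.toLinearMap with hQdef
  have htP : Matrix.toLinearMapRight' P = g.symm.toLinearMap :=
    LinearMap.toMatrixRight'.symm_apply_apply _
  have htQ : Matrix.toLinearMapRight' Q = g.toLinearMap :=
    LinearMap.toMatrixRight'.symm_apply_apply _
  have hPQ : P * Q = 1 := by
    apply toLinRight_inj
    rw [Matrix.toLinearMapRight'_mul, htP, htQ, Matrix.toLinearMapRight'_one]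
    ext v
    simp
  have hQP : Q * P = 1 := by
    apply toLinRight_inj
    rw [Matrix.toLinearMapRight'_mul, htP, htQ, Matrix.toLinearMapRight'_one]
    ext v
    simp
  have key : f ∘ₗ g.toLinearMap = g.toLinearMap ∘ₗ (Matrix.toLinearMapRight' D) := by
    apply (Pi.basisFun R (Fin (k + l))).ext
    intro j
    obtain ⟨s, rfl⟩ := finSumFinEquiv.surjective j
    rw [Pi.basisFun_apply]
    have hB' : B' (finSumFinEquiv s) = B s := by
      simp [B']
    cases s with
    | inl i =>
      have hrow : (Matrix.toLinearMapRight' D) (Pi.single (finSumFinEquiv (Sum.inl i)) 1)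
          = 0 := by
        rw [Matrix.toLinearMapRight'_apply, Matrix.single_one_vecMul]
        ext j'
        obtain ⟨t, rfl⟩ := finSumFinEquiv.surjective j'
        cases t <;> simp [hD]
      simp only [LinearMap.comp_apply, LinearEquiv.coe_coe, hrow, map_zero,
        LinearEquiv.coe_toLinearMap]
      rw [hg, hB', hBl]
    | inr i =>
      have hrow : (Matrix.toLinearMapRight' D) (Pi.single (finSumFinEquiv (Sum.inr i)) 1)
          = Pi.single (finSumFinEquiv (Sum.inr i)) 1 := by
        rw [Matrix.toLinearMapRight'_apply, Matrix.single_one_vecMul]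
        ext j'
        obtain ⟨t, rfl⟩ := finSumFinEquiv.surjective j'
        cases t with
        | inl v =>
          have hL : D (finSumFinEquiv (Sum.inr i)) (finSumFinEquiv (Sum.inl v)) = 0 := by
            rw [hD, Matrix.reindex_apply, Matrix.submatrix_apply, Equiv.symm_apply_apply,
              Equiv.symm_apply_apply, Matrix.fromBlocks_apply₂₁, Matrix.zero_apply]
          rw [show D.row (finSumFinEquiv (Sum.inr i)) = D (finSumFinEquiv (Sum.inr i)) from rfl, hL, Pi.single_apply,
            if_neg (fun h => Sum.inl_ne_inr (finSumFinEquiv.injective h))]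
        | inr v =>
          have hL : D (finSumFinEquiv (Sum.inr i)) (finSumFinEquiv (Sum.inr v)) =
              if i = v then 1 else 0 := by
            rw [hD, Matrix.reindex_apply, Matrix.submatrix_apply, Equiv.symm_apply_apply,
              Equiv.symm_apply_apply, Matrix.fromBlocks_apply₂₂, Matrix.one_apply]
          rw [show D.row (finSumFinEquiv (Sum.inr i)) = D (finSumFinEquiv (Sum.inr i)) from rfl, hL, Pi.single_apply]
          by_cases h : i = v
          · subst h; simp
          · rw [if_neg h, if_neg (fun hc =>
              h (Sum.inr.inj (finSumFinEquiv.injective hc)).symm)]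
      simp only [LinearMap.comp_apply, LinearEquiv.coe_coe, hrow]
      rw [hg, hB', hBr]
  refine ⟨k, l, P, Q, hPQ, hQP, ?_⟩
  apply toLinRight_inj
  rw [Matrix.toLinearMapRight'_mul, Matrix.toLinearMapRight'_mul, htP, htQ, ← hD, ← hfdef]
  refine LinearMap.ext fun v => ?_
  have hk := LinearMap.congr_fun key (g.symm v)
  simp only [LinearMap.comp_apply, LinearEquiv.coe_toLinearMap,
    LinearEquiv.apply_symm_apply] at hk
  simp only [LinearMap.comp_apply, LinearEquiv.coe_toLinearMap]
  exact hk

end SCAux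

/-- Over a projective-free ring, `A ∈ Mₙ(R)` is a non-trivial strongly clean matrix iff
`A` is similar to a block diagonal matrix `diag(T₀, T₁)` where `T₀` and `I - T₁` are
invertible while neither `I - T₀` nor `T₁` is invertible. -/
theorem nontrivial_stronglyClean_matrix_iff {R : Type} [Ring R]
    (hR : IsProjectiveFree R) (n : ℕ) (A : Matrix (Fin n) (Fin n) R) :
    (IsStronglyClean A ∧ ¬ IsUnit A ∧ ¬ IsUnit (1 - A)) ↔
      ∃ (k l : ℕ) (T₀ : Matrix (Fin k) (Fin k) R) (T₁ : Matrix (Fin l) (Fin l) R)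
        (P : Matrix (Fin n) (Fin (k + l)) R) (Q : Matrix (Fin (k + l)) (Fin n) R),
          P * Q = 1 ∧ Q * P = 1 ∧
          A = P * (Matrix.reindex finSumFinEquiv finSumFinEquiv
                    (Matrix.fromBlocks T₀ 0 0 T₁)) * Q ∧
          IsUnit T₀ ∧ IsUnit (1 - T₁) ∧ ¬ IsUnit (1 - T₀) ∧ ¬ IsUnit T₁ := by
  classical
  constructor
  · rintro ⟨⟨e, u, he, hu, hAeu, heu⟩, hA1, hA2⟩
    obtain ⟨k, l, P, Q, hPQ, hQP, hEdec⟩ := SCAux.exists_conj_idem hR e he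
    set r := SCAux.reindexRingEquiv (R := R) (finSumFinEquiv : Fin k ⊕ Fin l ≃ Fin (k + l))
      with hr
    set D0 : Matrix (Fin k ⊕ Fin l) (Fin k ⊕ Fin l) R := Matrix.fromBlocks 0 0 0 1 with hD0
    have hEdec' : e = P * r D0 * Q := hEdec
    have hQeP : Q * e * P = r D0 := by
      rw [hEdec', SCAux.conj_back hQP]
    set W : Matrix (Fin (k + l)) (Fin (k + l)) R := Q * u * P with hW
    have hcomm : W * r D0 = r D0 * W := by
      rw [← hQeP, hW, SCAux.conj_mul hPQ, SCAux.conj_mul hPQ, heu]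
    set V := r.symm W with hV
    have hWV : W = r V := by rw [hV, RingEquiv.apply_symm_apply]
    have hcommV : V * D0 = D0 * V := by
      apply r.injective
      rw [map_mul, map_mul, ← hWV, hcomm]
    set a := V.toBlocks₁₁ with ha
    set b := V.toBlocks₁₂ with hbdef
    set c := V.toBlocks₂₁ with hcdef
    set d := V.toBlocks₂₂ with hd
    have hVblocks : V = Matrix.fromBlocks a b c d := (Matrix.fromBlocks_toBlocks V).symm
    have hb : b = 0 := by
      have h := hcommV
      rw [hVblocks, hD0, Matrix.fromBlocks_multiply, Matrix.fromBlocks_multiply] at h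
      have := congrArg Matrix.toBlocks₁₂ h
      simpa using this
    have hc : c = 0 := by
      have h := hcommV
      rw [hVblocks, hD0, Matrix.fromBlocks_multiply, Matrix.fromBlocks_multiply] at h
      have := congrArg Matrix.toBlocks₂₁ h
      simpa using this.symm
    have hV2 : V = Matrix.fromBlocks a 0 0 d := by rw [hVblocks, hb, hc]
    have hUnitW : IsUnit W := by
      rw [hW]; exact SCAux.isUnit_conj hQP hPQ hu
    have hUnitV : IsUnit V := by
      rw [hV]
      exact hUnitW.map (SCAux.reindexRingEquiv (R := R)
        (finSumFinEquiv : Fin k ⊕ Fin l ≃ Fin (k + l))).symm.toRingHom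
    obtain ⟨hUa, hUd⟩ := SCAux.isUnit_fromBlocks.mp (hV2 ▸ hUnitV)
    have hu' : u = P * r V * Q := by
      rw [← hWV, hW, SCAux.conj_back hPQ]
    have hsum : D0 + V = Matrix.fromBlocks a 0 0 (1 + d) := by
      rw [hV2, hD0, Matrix.fromBlocks_add]
      simp
    have hAdec : A = P * (Matrix.reindex finSumFinEquiv finSumFinEquiv
        (Matrix.fromBlocks a 0 0 (1 + d))) * Q := by
      rw [hAeu, hEdec', hu', ← SCAux.reindexRingEquiv_apply, ← hr, ← hsum, map_add,
        Matrix.mul_add, Matrix.add_mul]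
    refine ⟨k, l, a, 1 + d, P, Q, hPQ, hQP, hAdec, hUa, ?_, ?_, ?_⟩
    · have h1 : (1 : Matrix (Fin l) (Fin l) R) - (1 + d) = -d := by abel
      rw [h1]
      exact hUd.neg
    · intro hcon
      apply hA2
      rw [hAdec, SCAux.conj_one_sub hPQ, ← SCAux.reindexRingEquiv_apply, ← hr,
        ← map_one r, ← map_sub, SCAux.one_sub_fromBlocks]
      refine SCAux.isUnit_conj hPQ hQP ((SCAux.isUnit_reindexRingEquiv _).mpr
        (SCAux.isUnit_fromBlocks.mpr ⟨hcon, ?_⟩))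
      have h1 : (1 : Matrix (Fin l) (Fin l) R) - (1 + d) = -d := by abel
      rw [h1]
      exact hUd.neg
    · intro hcon
      apply hA1
      rw [hAdec, ← SCAux.reindexRingEquiv_apply, ← hr]
      exact SCAux.isUnit_conj hPQ hQP ((SCAux.isUnit_reindexRingEquiv _).mpr
        (SCAux.isUnit_fromBlocks.mpr ⟨hUa, hcon⟩))
  · rintro ⟨k, l, T₀, T₁, P, Q, hPQ, hQP, hAdec, hT0, hT1, hT0', hT1'⟩
    set r := SCAux.reindexRingEquiv (R := R) (finSumFinEquiv : Fin k ⊕ Fin l ≃ Fin (k + l))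
      with hr
    rw [← SCAux.reindexRingEquiv_apply, ← hr] at hAdec
    have hT1n : IsUnit (T₁ - 1) := by
      rw [← neg_sub]
      exact hT1.neg
    refine ⟨?_, ?_, ?_⟩
    · refine ⟨P * r (Matrix.fromBlocks 0 0 0 1) * Q,
        P * r (Matrix.fromBlocks T₀ 0 0 (T₁ - 1)) * Q, ?_, ?_, ?_, ?_⟩
      · show _ * _ = _
        have hmul : (Matrix.fromBlocks (0 : Matrix (Fin k) (Fin k) R) 0 0
            (1 : Matrix (Fin l) (Fin l) R)) * (Matrix.fromBlocks 0 0 0 1) =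
            Matrix.fromBlocks 0 0 0 1 := by
          rw [Matrix.fromBlocks_multiply]; simp
        rw [SCAux.conj_mul hQP, ← map_mul, hmul]
      · exact SCAux.isUnit_conj hPQ hQP ((SCAux.isUnit_reindexRingEquiv _).mpr
          (SCAux.isUnit_fromBlocks.mpr ⟨hT0, hT1n⟩))
      · have hsum : (Matrix.fromBlocks (0 : Matrix (Fin k) (Fin k) R) 0 0
            (1 : Matrix (Fin l) (Fin l) R)) + Matrix.fromBlocks T₀ 0 0 (T₁ - 1) =
            Matrix.fromBlocks T₀ 0 0 T₁ := by
          have h1 : (1 : Matrix (Fin l) (Fin l) R) + (T₁ - 1) = T₁ := by abel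
          rw [Matrix.fromBlocks_add]
          simp [h1]
        rw [hAdec, ← hsum, map_add, Matrix.mul_add, Matrix.add_mul]
      · rw [SCAux.conj_mul hQP, SCAux.conj_mul hQP, ← map_mul, ← map_mul]
        have hmul : (Matrix.fromBlocks (0 : Matrix (Fin k) (Fin k) R) 0 0
            (1 : Matrix (Fin l) (Fin l) R)) * (Matrix.fromBlocks T₀ 0 0 (T₁ - 1)) =
            (Matrix.fromBlocks T₀ 0 0 (T₁ - 1)) * (Matrix.fromBlocks 0 0 0 1) := by
          rw [Matrix.fromBlocks_multiply, Matrix.fromBlocks_multiply]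
          simp
        rw [hmul]
    · intro hcon
      have hM : IsUnit (r (Matrix.fromBlocks T₀ 0 0 T₁)) := by
        have hback : r (Matrix.fromBlocks T₀ 0 0 T₁) = Q * A * P := by
          rw [hAdec, SCAux.conj_back hQP]
        rw [hback]
        exact SCAux.isUnit_conj hQP hPQ hcon
      exact hT1' ((SCAux.isUnit_fromBlocks.mp
        ((SCAux.isUnit_reindexRingEquiv _).mp hM)).2)
    · intro hcon
      have h1 : 1 - A = P * (r (Matrix.fromBlocks (1 - T₀) 0 0 (1 - T₁))) * Q := by
        rw [hAdec, SCAux.conj_one_sub hPQ, ← map_one r, ← map_sub,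
          SCAux.one_sub_fromBlocks]
      have hM : IsUnit (r (Matrix.fromBlocks (1 - T₀) 0 0 (1 - T₁))) := by
        have hback : r (Matrix.fromBlocks (1 - T₀) 0 0 (1 - T₁)) = Q * (1 - A) * P := by
          rw [h1, SCAux.conj_back hQP]
        rw [hback]
        exact SCAux.isUnit_conj hQP hPQ hcon
      exact hT0' ((SCAux.isUnit_fromBlocks.mp
        ((SCAux.isUnit_reindexRingEquiv _).mp hM)).1)
end

section
/- Let R be a local ring. A 2×2 matrix A over R is a non-trivial strongly clean element of M₂(R) if and only if A is similar to a diagonal matrix diag(t₀, t₁) with 1 - t₀ ∈ J(R) and t₁ ∈ J(R). -/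
set_option linter.unusedSectionVars false

section SCAux
variable {R : Type*} [Ring R] [IsLocalRing R]

lemma unit_one_sub {x : R} (h : ¬IsUnit x) : IsUnit (1 - x) :=
  (IsLocalRing.isUnit_or_isUnit_of_add_one (a := x) (b := 1 - x) (by abel)).resolve_left h

lemma unit_of_left_inv {x y : R} (h : y * x = 1) : IsUnit x := by
  have he : (x * y) * (x * y) = (x * y) * 1 := by
    calc (x * y) * (x * y) = x * (y * x) * y := by noncomm_ring
      _ = (x * y) * 1 := by rw [h]; noncomm_ring
  rcases IsLocalRing.isUnit_or_isUnit_of_add_one (a := x * y) (b := 1 - x * y) (by abel)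
    with hu | hu
  · have h1 : x * y = 1 := hu.mul_left_cancel he
    exact ⟨⟨x, y, h1, h⟩, rfl⟩
  · exfalso
    have h0 : (x * y) * (1 - x * y) = 0 * (1 - x * y) := by
      rw [zero_mul, mul_sub, mul_one, ← mul_assoc]
      rw [mul_assoc x y x, h, mul_one, sub_self]
    have hxy : x * y = 0 := hu.mul_right_cancel h0
    have hx : x = 0 := by
      calc x = x * (y * x) := by rw [h, mul_one]
        _ = (x * y) * x := by rw [mul_assoc]
        _ = 0 := by rw [hxy, zero_mul]
    rw [hx, mul_zero] at h
    exact one_ne_zero h.symm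

lemma unit_of_right_inv {x y : R} (h : x * y = 1) : IsUnit x := by
  have hy : IsUnit y := unit_of_left_inv h
  obtain ⟨v, hv⟩ := hy
  have hx : x = ↑v⁻¹ := by
    calc x = x * (↑v * ↑v⁻¹) := by rw [v.mul_inv, mul_one]
      _ = (x * y) * ↑v⁻¹ := by rw [hv, mul_assoc]
      _ = ↑v⁻¹ := by rw [h, one_mul]
  exact hx ▸ v⁻¹.isUnit

lemma nu_mul_left {x : R} (r : R) (h : ¬IsUnit x) : ¬IsUnit (r * x) := by
  intro hu
  obtain ⟨u, hu⟩ := hu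
  exact h (unit_of_left_inv (y := ↑u⁻¹ * r)
    (by rw [mul_assoc, ← hu, u.inv_mul]))

lemma nu_mul_right {x : R} (r : R) (h : ¬IsUnit x) : ¬IsUnit (x * r) := by
  intro hu
  obtain ⟨u, hu⟩ := hu
  exact h (unit_of_right_inv (y := r * ↑u⁻¹)
    (by rw [← mul_assoc, ← hu, u.mul_inv]))

lemma nu_add {x y : R} (hx : ¬IsUnit x) (hy : ¬IsUnit y) : ¬IsUnit (x + y) := by
  intro hu
  obtain ⟨u, hu⟩ := hu
  have h1 : (↑u⁻¹ * x) + (↑u⁻¹ * y) = 1 := by rw [← mul_add, ← hu, u.inv_mul]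
  rcases IsLocalRing.isUnit_or_isUnit_of_add_one h1 with h | h
  · exact nu_mul_left (↑u⁻¹) hx h
  · exact nu_mul_left (↑u⁻¹) hy h

lemma unit_add_nu {x y : R} (hx : IsUnit x) (hy : ¬IsUnit y) : IsUnit (x + y) := by
  by_contra h
  have hny : ¬IsUnit (-y) := fun h' => hy (by simpa using h'.neg)
  have h2 := nu_add h hny
  rw [add_neg_cancel_right] at h2
  exact h2 hx

lemma unit_sub_nu {x y : R} (hx : IsUnit x) (hy : ¬IsUnit y) : IsUnit (x - y) := by
  rw [sub_eq_add_neg]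
  exact unit_add_nu hx (fun h' => hy (by simpa using h'.neg))


end SCAux

section MatrixAux

variable {R : Type*} [Ring R]

lemma unit_upper {u v : R} (b : R) (hu : IsUnit u) (hv : IsUnit v) :
    IsUnit !![u, b; 0, v] := by
  obtain ⟨u, rfl⟩ := hu
  obtain ⟨v, rfl⟩ := hv
  refine ⟨⟨!![↑u, b; 0, ↑v], !![↑u⁻¹, -(↑u⁻¹ * (b * ↑v⁻¹)); 0, ↑v⁻¹], ?_, ?_⟩, rfl⟩ <;>
  · ext i j
    fin_cases i <;> fin_cases j <;>
      simp [Matrix.mul_apply, Fin.sum_univ_two, mul_assoc]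

lemma unit_lower {u v : R} (b : R) (hu : IsUnit u) (hv : IsUnit v) :
    IsUnit !![u, 0; b, v] := by
  obtain ⟨u, rfl⟩ := hu
  obtain ⟨v, rfl⟩ := hv
  refine ⟨⟨!![↑u, 0; b, ↑v], !![↑u⁻¹, 0; -(↑v⁻¹ * (b * ↑u⁻¹)), ↑v⁻¹], ?_, ?_⟩, rfl⟩ <;>
  · ext i j
    fin_cases i <;> fin_cases j <;>
      simp [Matrix.mul_apply, Fin.sum_univ_two, mul_assoc]

lemma unit_diag {M : Matrix (Fin 2) (Fin 2) R} (h : IsUnit M)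
    (h01 : M 0 1 = 0) (h10 : M 1 0 = 0) : IsUnit (M 0 0) ∧ IsUnit (M 1 1) := by
  obtain ⟨⟨V, N, hVN, hNV⟩, rfl⟩ := h
  simp only [Units.val_mk] at h01 h10
  constructor
  · refine ⟨⟨V 0 0, N 0 0, ?_, ?_⟩, rfl⟩
    · have h3 := congrFun (congrFun hVN 0) 0
      simpa [Matrix.mul_apply, Fin.sum_univ_two, h01] using h3
    · have h3 := congrFun (congrFun hNV 0) 0
      simpa [Matrix.mul_apply, Fin.sum_univ_two, h10] using h3
  · refine ⟨⟨V 1 1, N 1 1, ?_, ?_⟩, rfl⟩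
    · have h3 := congrFun (congrFun hVN 1) 1
      simpa [Matrix.mul_apply, Fin.sum_univ_two, h10] using h3
    · have h3 := congrFun (congrFun hNV 1) 1
      simpa [Matrix.mul_apply, Fin.sum_univ_two, h01] using h3

end MatrixAux

section Schur

variable {R : Type*} [Ring R]

lemma unit_of_schur {p q r w : R} (hp : IsUnit p)
    (hs : IsUnit (w - r * (↑hp.unit⁻¹ * q))) : IsUnit !![p, q; r, w] := by
  have hfac : !![p, q; r, w] =
      !![1, 0; r * ↑hp.unit⁻¹, 1] * !![p, q; 0, w - r * (↑hp.unit⁻¹ * q)] := by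
    ext i j
    fin_cases i <;> fin_cases j <;>
      simp [Matrix.mul_apply, Fin.sum_univ_two, mul_assoc, IsUnit.val_inv_mul]
  rw [hfac]
  exact (unit_lower _ isUnit_one isUnit_one).mul (unit_upper _ hp hs)

lemma unit_of_schur' {p q r w : R} (hw : IsUnit w)
    (hs : IsUnit (p - q * (↑hw.unit⁻¹ * r))) : IsUnit !![p, q; r, w] := by
  have hfac : !![p, q; r, w] =
      !![1, q * ↑hw.unit⁻¹; 0, 1] * !![p - q * (↑hw.unit⁻¹ * r), 0; r, w] := by
    ext i j
    fin_cases i <;> fin_cases j <;>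
      simp [Matrix.mul_apply, Fin.sum_univ_two, mul_assoc, IsUnit.val_inv_mul]
  rw [hfac]
  exact (unit_upper _ isUnit_one isUnit_one).mul (unit_lower _ hs hw)

lemma cancel_unit_eq_one {x s : R} (hx : IsUnit x) (h : x * s = x) : s = 1 := by
  have h2 : x * s = x * 1 := by rw [mul_one]; exact h
  exact hx.mul_left_cancel h2

lemma conj_mul_conj {M : Type*} [Monoid M] (Q : Mˣ) (X Y : M) :
    (Q.val * X * Q⁻¹.val) * (Q.val * Y * Q⁻¹.val) = Q.val * (X * Y) * Q⁻¹.val := by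
  simp only [mul_assoc, Units.inv_mul_cancel_left]

end Schur

section Idem

variable {R : Type*} [Ring R] [IsLocalRing R]

lemma nu_neg {x : R} (hx : ¬IsUnit x) : ¬IsUnit (-x) :=
  fun h' => hx (by simpa using h'.neg)

lemma idem_rel1 {E : Matrix (Fin 2) (Fin 2) R} (hE : E * E = E) :
    E 0 0 * E 0 0 + E 0 1 * E 1 0 = E 0 0 := by
  have h := congrFun (congrFun hE 0) 0
  simpa [Matrix.mul_apply, Fin.sum_univ_two] using h

lemma idem_rel2 {E : Matrix (Fin 2) (Fin 2) R} (hE : E * E = E) :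
    E 0 0 * E 0 1 + E 0 1 * E 1 1 = E 0 1 := by
  have h := congrFun (congrFun hE 0) 1
  simpa [Matrix.mul_apply, Fin.sum_univ_two] using h

lemma idem_rel3 {E : Matrix (Fin 2) (Fin 2) R} (hE : E * E = E) :
    E 1 0 * E 0 0 + E 1 1 * E 1 0 = E 1 0 := by
  have h := congrFun (congrFun hE 1) 0
  simpa [Matrix.mul_apply, Fin.sum_univ_two] using h

lemma idem_rel4 {E : Matrix (Fin 2) (Fin 2) R} (hE : E * E = E) :
    E 1 0 * E 0 1 + E 1 1 * E 1 1 = E 1 1 := by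
  have h := congrFun (congrFun hE 1) 1
  simpa [Matrix.mul_apply, Fin.sum_univ_two] using h

lemma idem_all_nonunit_eq_zero {F : Matrix (Fin 2) (Fin 2) R} (hF : F * F = F)
    (h : ∀ i j, ¬IsUnit (F i j)) : F = 0 := by
  have h1F : (1 : Matrix (Fin 2) (Fin 2) R) - F =
      !![1 - F 0 0, -(F 0 1); -(F 1 0), 1 - F 1 1] := by
    ext i j
    fin_cases i <;> fin_cases j <;> simp [Matrix.one_apply]
  have hu : IsUnit ((1 : Matrix (Fin 2) (Fin 2) R) - F) := by
    rw [h1F]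
    refine unit_of_schur (unit_one_sub (h 0 0)) ?_
    exact unit_sub_nu (unit_one_sub (h 1 1)) (nu_mul_right _ (nu_neg (h 1 0)))
  obtain ⟨u, huv⟩ := hu
  have hinv : ((1 : Matrix (Fin 2) (Fin 2) R) - F) * u.inv = 1 := by
    rw [← huv]; exact u.val_inv
  have h0 : F * ((1 : Matrix (Fin 2) (Fin 2) R) - F) = 0 := by
    rw [mul_sub, mul_one, hF, sub_self]
  calc F = F * (((1 : Matrix (Fin 2) (Fin 2) R) - F) * u.inv) := by rw [hinv, mul_one]
    _ = (F * ((1 : Matrix (Fin 2) (Fin 2) R) - F)) * u.inv := by rw [mul_assoc]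
    _ = 0 := by rw [h0, zero_mul]

lemma key_b {E : Matrix (Fin 2) (Fin 2) R} (hE : E * E = E) (hb : IsUnit (E 0 1)) :
    1 - E 1 1 = ↑hb.unit⁻¹ * (E 0 0 * E 0 1) := by
  have h6 : E 0 1 * E 1 1 = E 0 1 - E 0 0 * E 0 1 := eq_sub_iff_add_eq'.mpr (idem_rel2 hE)
  have h7 : (↑hb.unit⁻¹ : R) * (E 0 1 * (1 - E 1 1)) = 1 - E 1 1 := by
    rw [← mul_assoc, hb.val_inv_mul, one_mul]
  have h8 : E 0 1 * (1 - E 1 1) = E 0 0 * E 0 1 := by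
    rw [mul_sub, mul_one, h6]
    noncomm_ring
  rw [← h7, h8]

lemma key_c {E : Matrix (Fin 2) (Fin 2) R} (hE : E * E = E) (hc : IsUnit (E 1 0)) :
    1 - E 1 1 = (E 1 0 * E 0 0) * ↑hc.unit⁻¹ := by
  have h6 : E 1 1 * E 1 0 = E 1 0 - E 1 0 * E 0 0 := eq_sub_iff_add_eq'.mpr (idem_rel3 hE)
  have h7 : ((1 - E 1 1) * E 1 0) * (↑hc.unit⁻¹ : R) = 1 - E 1 1 := by
    rw [mul_assoc, hc.mul_val_inv, mul_one]
  have h8 : (1 - E 1 1) * E 1 0 = E 1 0 * E 0 0 := by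
    rw [sub_mul, one_mul, h6]
    noncomm_ring
  rw [← h7, h8]

lemma idem_unit_entry {E : Matrix (Fin 2) (Fin 2) R} (hE : E * E = E) (h0 : E ≠ 0) :
    IsUnit (E 0 0) ∨ IsUnit (E 1 1) := by
  by_contra hcon
  push_neg at hcon
  obtain ⟨hna, hnd⟩ := hcon
  have hnb : ¬IsUnit (E 0 1) := by
    intro hb
    have h1 := unit_one_sub hnd
    rw [key_b hE hb] at h1
    exact nu_mul_left _ (nu_mul_right _ hna) h1
  have hnc : ¬IsUnit (E 1 0) := by
    intro hc
    have h1 := unit_one_sub hnd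
    rw [key_c hE hc] at h1
    exact nu_mul_right _ (nu_mul_left _ hna) h1
  refine h0 (idem_all_nonunit_eq_zero hE ?_)
  intro i j
  fin_cases i <;> fin_cases j <;> assumption

lemma route01 {E : Matrix (Fin 2) (Fin 2) R} (hE : E * E = E) (hd : IsUnit (E 1 1))
    (hs : IsUnit (1 - E 0 0 + E 0 1 * (↑hd.unit⁻¹ * E 1 0))) :
    ∃ Q : (Matrix (Fin 2) (Fin 2) R)ˣ, E = Q.val * !![(0:R), 0; 0, 1] * Q⁻¹.val := by
  have r1 := idem_rel1 hE
  have r2 := idem_rel2 hE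
  have r3 := idem_rel3 hE
  have r4 := idem_rel4 hE
  have hPu : IsUnit !![1 - E 0 0, E 0 1; -(E 1 0), E 1 1] := by
    refine unit_of_schur' hd ?_
    have hconv : (1 - E 0 0) - E 0 1 * (↑hd.unit⁻¹ * -(E 1 0)) =
        1 - E 0 0 + E 0 1 * (↑hd.unit⁻¹ * E 1 0) := by noncomm_ring
    rw [hconv]
    exact hs
  have hEP : E * !![1 - E 0 0, E 0 1; -(E 1 0), E 1 1] =
      !![1 - E 0 0, E 0 1; -(E 1 0), E 1 1] * !![(0:R), 0; 0, 1] := by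
    ext i j
    fin_cases i <;> fin_cases j <;>
      simp [Matrix.mul_apply, Fin.sum_univ_two]
    · rw [show E 0 0 * (1 - E 0 0) + -(E 0 1 * E 1 0)
          = E 0 0 - (E 0 0 * E 0 0 + E 0 1 * E 1 0) from by noncomm_ring, r1, sub_self]
    · exact r2
    · rw [show E 1 0 * (1 - E 0 0) + -(E 1 1 * E 1 0)
          = E 1 0 - (E 1 0 * E 0 0 + E 1 1 * E 1 0) from by noncomm_ring, r3, sub_self]
    · exact r4
  obtain ⟨Pu, hPv⟩ := hPu
  refine ⟨Pu, ?_⟩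
  have h2 : E * Pu.val = Pu.val * !![(0:R), 0; 0, 1] := by rw [hPv]; exact hEP
  calc E = E * Pu.val * Pu⁻¹.val := (Units.mul_inv_cancel_right E Pu).symm
    _ = Pu.val * !![(0:R), 0; 0, 1] * Pu⁻¹.val := by rw [h2]

end Idem

section Diag

variable {R : Type*} [Ring R] [IsLocalRing R]

lemma idem_schur_id {E : Matrix (Fin 2) (Fin 2) R} (hE : E * E = E) (hd : IsUnit (E 1 1)) :
    (1 - E 0 0) * (1 - E 0 0 + E 0 1 * (↑hd.unit⁻¹ * E 1 0)) = 1 - E 0 0 := by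
  have r1 := idem_rel1 hE
  have r2 := idem_rel2 hE
  have h9 : E 0 1 * E 1 1 = E 0 1 - E 0 0 * E 0 1 := eq_sub_iff_add_eq'.mpr r2
  have h9' : (1 - E 0 0) * E 0 1 = E 0 1 * E 1 1 := by
    rw [h9, sub_mul, one_mul]
  have h10 : (1 - E 0 0) * (E 0 1 * (↑hd.unit⁻¹ * E 1 0)) = E 0 1 * E 1 0 := by
    rw [← mul_assoc, h9', mul_assoc, ← mul_assoc (E 1 1), hd.mul_val_inv, one_mul]
  have h11 : E 0 1 * E 1 0 = E 0 0 - E 0 0 * E 0 0 := eq_sub_iff_add_eq'.mpr r1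
  rw [mul_add, h10, h11]
  noncomm_ring

lemma swap_idem {E : Matrix (Fin 2) (Fin 2) R} (hE : E * E = E) :
    (!![E 1 1, E 1 0; E 0 1, E 0 0] : Matrix (Fin 2) (Fin 2) R) *
      !![E 1 1, E 1 0; E 0 1, E 0 0] = !![E 1 1, E 1 0; E 0 1, E 0 0] := by
  have r1 := idem_rel1 hE
  have r2 := idem_rel2 hE
  have r3 := idem_rel3 hE
  have r4 := idem_rel4 hE
  ext i j
  fin_cases i <;> fin_cases j <;> simp [Matrix.mul_apply, Fin.sum_univ_two]
  · rw [add_comm]; exact r4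
  · rw [add_comm]; exact r3
  · rw [add_comm]; exact r2
  · rw [add_comm]; exact r1

lemma good_swap {E : Matrix (Fin 2) (Fin 2) R}
    (h : ∃ Q : (Matrix (Fin 2) (Fin 2) R)ˣ,
      (!![E 1 1, E 1 0; E 0 1, E 0 0] : Matrix (Fin 2) (Fin 2) R) =
        Q.val * !![(0:R), 0; 0, 1] * Q⁻¹.val) :
    ∃ Q : (Matrix (Fin 2) (Fin 2) R)ˣ, E = Q.val * !![(0:R), 0; 0, 1] * Q⁻¹.val := by
  obtain ⟨Q, hQ⟩ := h
  have hSS : (!![(0:R), 1; 1, 0] : Matrix (Fin 2) (Fin 2) R) * !![(0:R), 1; 1, 0] = 1 := by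
    ext i j
    fin_cases i <;> fin_cases j <;>
      simp [Matrix.mul_apply, Fin.sum_univ_two, Matrix.one_apply]
  refine ⟨(⟨!![(0:R), 1; 1, 0], !![(0:R), 1; 1, 0], hSS, hSS⟩ :
    (Matrix (Fin 2) (Fin 2) R)ˣ) * Q, ?_⟩
  show E = (!![(0:R), 1; 1, 0] * Q.val) * !![(0:R), 0; 0, 1] * (Q⁻¹.val * !![(0:R), 1; 1, 0])
  have hswap : E = !![(0:R), 1; 1, 0] * !![E 1 1, E 1 0; E 0 1, E 0 0] * !![(0:R), 1; 1, 0] := by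
    ext i j
    fin_cases i <;> fin_cases j <;> simp [Matrix.mul_apply, Fin.sum_univ_two]
  conv_lhs => rw [hswap, hQ]
  noncomm_ring

lemma main_aux {E : Matrix (Fin 2) (Fin 2) R} (hE : E * E = E) (h1 : E ≠ 1)
    (hd : IsUnit (E 1 1)) :
    ∃ Q : (Matrix (Fin 2) (Fin 2) R)ˣ, E = Q.val * !![(0:R), 0; 0, 1] * Q⁻¹.val := by
  by_cases hs : IsUnit (1 - E 0 0 + E 0 1 * (↑hd.unit⁻¹ * E 1 0))
  · exact route01 hE hd hs
  have hkey := idem_schur_id hE hd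
  have hna1 : ¬IsUnit (1 - E 0 0) := by
    intro hu
    exact hs (by rw [cancel_unit_eq_one hu hkey]; exact isUnit_one)
  have ha : IsUnit (E 0 0) := by simpa using unit_one_sub hna1
  have hE' := swap_idem hE
  have hd' : IsUnit ((!![E 1 1, E 1 0; E 0 1, E 0 0] : Matrix (Fin 2) (Fin 2) R) 1 1) := by
    simpa using ha
  by_cases hs2 : IsUnit (1 - (!![E 1 1, E 1 0; E 0 1, E 0 0] : Matrix (Fin 2) (Fin 2) R) 0 0 +
      (!![E 1 1, E 1 0; E 0 1, E 0 0] : Matrix (Fin 2) (Fin 2) R) 0 1 *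
        (↑hd'.unit⁻¹ * (!![E 1 1, E 1 0; E 0 1, E 0 0] : Matrix (Fin 2) (Fin 2) R) 1 0))
  · exact good_swap (route01 hE' hd' hs2)
  exfalso
  have hkey2 := idem_schur_id hE' hd'
  have hnd1 : ¬IsUnit (1 - (!![E 1 1, E 1 0; E 0 1, E 0 0] : Matrix (Fin 2) (Fin 2) R) 0 0) := by
    intro hu
    exact hs2 (by rw [cancel_unit_eq_one hu hkey2]; exact isUnit_one)
  have hnd : ¬IsUnit (1 - E 1 1) := by simpa using hnd1
  have hnb : ¬IsUnit (E 0 1) := by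
    intro hb
    refine hnd ?_
    rw [key_b hE hb]
    exact (hb.unit⁻¹.isUnit).mul (ha.mul hb)
  have hnc : ¬IsUnit (E 1 0) := by
    intro hc
    refine hnd ?_
    rw [key_c hE hc]
    exact (hc.mul ha).mul hc.unit⁻¹.isUnit
  have hGidem : ((1 : Matrix (Fin 2) (Fin 2) R) - E) * ((1 : Matrix (Fin 2) (Fin 2) R) - E) =
      (1 : Matrix (Fin 2) (Fin 2) R) - E := by
    have hh : ((1 : Matrix (Fin 2) (Fin 2) R) - E) * ((1 : Matrix (Fin 2) (Fin 2) R) - E) =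
        1 - E - (E - E * E) := by noncomm_ring
    rw [hh, hE, sub_self, sub_zero]
  have hall : ∀ i j, ¬IsUnit (((1 : Matrix (Fin 2) (Fin 2) R) - E) i j) := by
    intro i j
    fin_cases i <;> fin_cases j <;> simp [Matrix.one_apply]
    · exact hna1
    · exact fun hx => hnb (by simpa using hx.neg)
    · exact fun hx => hnc (by simpa using hx.neg)
    · exact hnd
  have hz := idem_all_nonunit_eq_zero hGidem hall
  exact h1 (sub_eq_zero.mp hz).symm

lemma idem_conj {E : Matrix (Fin 2) (Fin 2) R} (hE : E * E = E) (h0 : E ≠ 0) (h1 : E ≠ 1) :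
    ∃ Q : (Matrix (Fin 2) (Fin 2) R)ˣ, E = Q.val * !![(0:R), 0; 0, 1] * Q⁻¹.val := by
  rcases idem_unit_entry hE h0 with ha | hd
  · refine good_swap (main_aux (swap_idem hE) ?_ (by simpa using ha))
    intro hcon
    apply h1
    have c00 := congrFun (congrFun hcon 0) 0
    have c01 := congrFun (congrFun hcon 0) 1
    have c10 := congrFun (congrFun hcon 1) 0
    have c11 := congrFun (congrFun hcon 1) 1
    simp [Matrix.one_apply] at c00 c01 c10 c11
    ext i j
    fin_cases i <;> fin_cases j <;> simp [Matrix.one_apply] <;> assumption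
  · exact main_aux hE h1 hd

end Diag

/-- Over a local ring `R` (where `x ∈ J(R)` iff `x` is a nonunit), `A ∈ M₂(R)` is a
non-trivial strongly clean matrix iff `A` is similar to `diag(t₀, t₁)` with
`1 - t₀ ∈ J(R)` and `t₁ ∈ J(R)`. -/
theorem nontrivial_stronglyClean_matrix_two_iff {R : Type*} [Ring R] [IsLocalRing R]
    (A : Matrix (Fin 2) (Fin 2) R) :
    (IsStronglyClean A ∧ ¬ IsUnit A ∧ ¬ IsUnit (1 - A)) ↔
      ∃ (t₀ t₁ : R) (P : (Matrix (Fin 2) (Fin 2) R)ˣ),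
        ¬ IsUnit (1 - t₀) ∧ ¬ IsUnit t₁ ∧
        A = P.val * !![t₀, 0; 0, t₁] *
              (P⁻¹ : (Matrix (Fin 2) (Fin 2) R)ˣ).val := by
  constructor
  · rintro ⟨⟨E, U, hIdem, hU, hsum, hcomm⟩, hA, hA'⟩
    have hE : E * E = E := hIdem.eq
    have hE0 : E ≠ 0 := by
      rintro rfl
      rw [hsum, zero_add] at hA
      exact hA hU
    have hE1 : E ≠ 1 := by
      rintro rfl
      apply hA'
      rw [hsum]
      have hneg : (1 : Matrix (Fin 2) (Fin 2) R) - (1 + U) = -U := by noncomm_ring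
      rw [hneg]
      exact hU.neg
    obtain ⟨Q, hQ⟩ := idem_conj hE hE0 hE1
    set V : Matrix (Fin 2) (Fin 2) R := Q⁻¹.val * U * Q.val with hVdef
    have hUQ : U = Q.val * V * Q⁻¹.val := by
      rw [hVdef]
      simp only [mul_assoc, Units.mul_inv_cancel_left, Units.mul_inv, mul_one]
    have hV : IsUnit V := by
      rw [hVdef]
      exact (Q⁻¹.isUnit.mul hU).mul Q.isUnit
    have hDV : !![(0:R), 0; 0, 1] * V = V * !![(0:R), 0; 0, 1] := by
      have hL : Q.val * (!![(0:R), 0; 0, 1] * V) * Q⁻¹.val = E * U := by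
        rw [← conj_mul_conj Q, ← hQ, ← hUQ]
      have hR : Q.val * (V * !![(0:R), 0; 0, 1]) * Q⁻¹.val = U * E := by
        rw [← conj_mul_conj Q, ← hQ, ← hUQ]
      have h3 : Q.val * (!![(0:R), 0; 0, 1] * V) * Q⁻¹.val =
          Q.val * (V * !![(0:R), 0; 0, 1]) * Q⁻¹.val := by
        rw [hL, hR, hcomm]
      have h4 := (Units.mul_left_inj Q⁻¹).mp h3
      exact (Units.mul_right_inj Q).mp h4
    have hV01 : V 0 1 = 0 := by
      have h := congrFun (congrFun hDV 0) 1
      simpa [Matrix.mul_apply, Fin.sum_univ_two] using h.symm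
    have hV10 : V 1 0 = 0 := by
      have h := congrFun (congrFun hDV 1) 0
      simpa [Matrix.mul_apply, Fin.sum_univ_two] using h
    obtain ⟨hv0, hv1⟩ := unit_diag hV hV01 hV10
    have hsum2 : !![(0:R), 0; 0, 1] + V = !![V 0 0, 0; 0, 1 + V 1 1] := by
      ext i j
      fin_cases i <;> fin_cases j <;> simp [hV01, hV10]
    have hAQ : A = Q.val * !![V 0 0, 0; 0, 1 + V 1 1] * Q⁻¹.val := by
      rw [← hsum2, hsum, hQ, hUQ]
      noncomm_ring
    refine ⟨V 0 0, 1 + V 1 1, Q, ?_, ?_, hAQ⟩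
    · intro hu
      apply hA'
      have h1T : (1 : Matrix (Fin 2) (Fin 2) R) - !![V 0 0, 0; 0, 1 + V 1 1] =
          !![1 - V 0 0, 0; 0, -(V 1 1)] := by
        ext i j
        fin_cases i <;> fin_cases j <;> simp [Matrix.one_apply]
      have hkey : (1 : Matrix (Fin 2) (Fin 2) R) - A =
          Q.val * !![1 - V 0 0, 0; 0, -(V 1 1)] * Q⁻¹.val := by
        rw [hAQ, ← h1T, mul_sub, mul_one, sub_mul, Units.mul_inv]
      rw [hkey]
      exact (Q.isUnit.mul (unit_upper 0 hu hv1.neg)).mul Q⁻¹.isUnit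
    · intro hu
      apply hA
      rw [hAQ]
      exact (Q.isUnit.mul (unit_upper 0 hv0 hu)).mul Q⁻¹.isUnit
  · rintro ⟨t₀, t₁, P, h₀, h₁, hA⟩
    have hu₀ : IsUnit t₀ := by simpa using unit_one_sub h₀
    have hu₁ : IsUnit (t₁ - 1) := by
      have h2 := (unit_one_sub h₁).neg
      simpa [neg_sub] using h2
    have hDD : (!![(0:R), 0; 0, 1] : Matrix (Fin 2) (Fin 2) R) * !![(0:R), 0; 0, 1] =
        !![(0:R), 0; 0, 1] := by
      ext i j
      fin_cases i <;> fin_cases j <;> simp [Matrix.mul_apply, Fin.sum_univ_two]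
    refine ⟨⟨P.val * !![(0:R), 0; 0, 1] * P⁻¹.val, P.val * !![t₀, 0; 0, t₁ - 1] * P⁻¹.val,
      ?_, ?_, ?_, ?_⟩, ?_, ?_⟩
    · show _ * _ = _
      rw [conj_mul_conj, hDD]
    · exact (P.isUnit.mul (unit_upper 0 hu₀ hu₁)).mul P⁻¹.isUnit
    · rw [hA]
      have hadd : !![(0:R), 0; 0, 1] + !![t₀, 0; 0, t₁ - 1] = !![t₀, 0; 0, t₁] := by
        ext i j
        fin_cases i <;> fin_cases j <;> simp
      rw [← hadd]
      noncomm_ring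
    · rw [conj_mul_conj, conj_mul_conj]
      have hcm : !![(0:R), 0; 0, 1] * !![t₀, 0; 0, t₁ - 1] =
          !![t₀, 0; 0, t₁ - 1] * !![(0:R), 0; 0, 1] := by
        ext i j
        fin_cases i <;> fin_cases j <;> simp [Matrix.mul_apply, Fin.sum_univ_two]
      rw [hcm]
    · intro hu
      apply h₁
      have hT : !![t₀, 0; 0, t₁] = P⁻¹.val * A * P.val := by
        rw [hA]
        simp only [mul_assoc, Units.inv_mul_cancel_left, Units.inv_mul, mul_one]
      have hTu : IsUnit !![t₀, 0; 0, t₁] := by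
        rw [hT]
        exact (P⁻¹.isUnit.mul hu).mul P.isUnit
      have h2 := (unit_diag hTu (by simp) (by simp)).2
      simpa using h2
    · intro hu
      apply h₀
      have h1T : (1 : Matrix (Fin 2) (Fin 2) R) - !![t₀, 0; 0, t₁] =
          !![1 - t₀, 0; 0, 1 - t₁] := by
        ext i j
        fin_cases i <;> fin_cases j <;> simp [Matrix.one_apply]
      have hkey : (1 : Matrix (Fin 2) (Fin 2) R) - A =
          P.val * !![1 - t₀, 0; 0, 1 - t₁] * P⁻¹.val := by
        rw [hA, ← h1T, mul_sub, mul_one, sub_mul, Units.mul_inv]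
      have hTu : IsUnit !![1 - t₀, 0; 0, 1 - t₁] := by
        have h2 : !![1 - t₀, 0; 0, 1 - t₁] =
            P⁻¹.val * ((1 : Matrix (Fin 2) (Fin 2) R) - A) * P.val := by
          rw [hkey]
          simp only [mul_assoc, Units.inv_mul_cancel_left, Units.inv_mul, mul_one]
        rw [h2]
        exact (P⁻¹.isUnit.mul hu).mul P.isUnit
      have h2 := (unit_diag hTu (by simp) (by simp)).1
      simpa using h2
end

section
/- A 2×2 integer matrix A is a non-trivial strongly clean element of M₂(ℤ) if and only if A is similar over ℤ to one of the four matrices diag(1,0), diag(-1,0), diag(1,2), diag(-1,2). -/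
/-- `A` and `B` are similar `2×2` matrices. -/
def SimilarMat {R : Type*} [Ring R] (A B : Matrix (Fin 2) (Fin 2) R) : Prop :=
  ∃ P : (Matrix (Fin 2) (Fin 2) R)ˣ, A = P.val * B * (P⁻¹).val

namespace SCAux

abbrev M2 := Matrix (Fin 2) (Fin 2) ℤ

lemma gcd_key (a b c : ℤ) (h : b * c = a - a * a) :
    Int.gcd a c * Int.gcd a b = a.natAbs := by
  have h2 : Nat.gcd (Int.gcd a b) (Int.gcd c (1-a)) = 1 := by
    have d1 : ((Nat.gcd (Int.gcd a b) (Int.gcd c (1-a)) : ℤ)) ∣ a :=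
      dvd_trans (Int.ofNat_dvd_right.mpr (Nat.gcd_dvd_left _ _)) (Int.gcd_dvd_left _ _)
    have d2 : ((Nat.gcd (Int.gcd a b) (Int.gcd c (1-a)) : ℤ)) ∣ (1 - a) :=
      dvd_trans (Int.ofNat_dvd_right.mpr (Nat.gcd_dvd_right _ _)) (Int.gcd_dvd_right _ _)
    have d3 : ((Nat.gcd (Int.gcd a b) (Int.gcd c (1-a)) : ℤ)) ∣ 1 := by
      have := dvd_add d1 d2; simpa using this
    exact Nat.dvd_one.mp (Int.ofNat_dvd.mp (by exact_mod_cast d3))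
  have key : Nat.gcd (Int.gcd (a*a) (a*b)) (Int.gcd (c*a) (c*b)) =
      Nat.gcd (Int.gcd (a*a) (a*b)) (Int.gcd (a*c) (a*(1-a))) := by
    rw [mul_comm c a]
    congr 1
    have : c * b = a * (1 - a) := by rw [mul_comm c b, h]; ring
    rw [this]
  have lhs : Nat.gcd (Int.gcd (a*a) (a*b)) (Int.gcd (c*a) (c*b)) = Int.gcd a c * Int.gcd a b := by
    rw [Int.gcd_mul_left, Int.gcd_mul_left, Nat.gcd_mul_right]; rfl
  have rhs : Nat.gcd (Int.gcd (a*a) (a*b)) (Int.gcd (a*c) (a*(1-a))) = a.natAbs := by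
    rw [Int.gcd_mul_left, Int.gcd_mul_left, Nat.gcd_mul_left]
    rw [show (a.gcd b).gcd (c.gcd (1-a)) = 1 from h2, mul_one]
  rw [← lhs, key, rhs]

lemma unit_of_pm_det (P : M2) (hdet : P.det = 1 ∨ P.det = -1) : ∃ u : M2ˣ, u.val = P := by
  have hu : IsUnit P := (Matrix.isUnit_iff_isUnit_det P).mpr
    (by rcases hdet with h | h <;> rw [h]; exacts [isUnit_one, isUnit_one.neg])
  exact ⟨hu.unit, hu.unit_spec⟩

lemma conj_helper (E P D : M2) (hdet : P.det = 1 ∨ P.det = -1) (h : E * P = P * D) :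
    ∃ u : M2ˣ, E = u.val * D * (u⁻¹).val := by
  obtain ⟨u, hu⟩ := unit_of_pm_det P hdet
  refine ⟨u, ?_⟩
  have h2 : E * u.val = u.val * D := by rw [hu]; exact h
  calc E = E * (u.val * (u⁻¹).val) := by rw [Units.mul_inv, mul_one]
    _ = (E * u.val) * (u⁻¹).val := by rw [mul_assoc]
    _ = u.val * D * (u⁻¹).val := by rw [h2]

lemma conjMulAux (P : M2ˣ) (X Y : M2) :
    (P.val * X * (P⁻¹).val) * (P.val * Y * (P⁻¹).val) = P.val * (X*Y) * (P⁻¹).val := by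
  simp [mul_assoc]

set_option maxHeartbeats 1000000 in
lemma idem_similar (E : M2) (hE : E * E = E) (h0 : E ≠ 0) (h1 : E ≠ 1) :
    ∃ P : M2ˣ, E = P.val * !![(1:ℤ),0;0,0] * (P⁻¹).val := by
  set a := E 0 0 with ha'
  set b := E 0 1 with hb'
  set c := E 1 0 with hc'
  set d := E 1 1 with hd'
  have hA0 : E = !![a,b;c,d] := Matrix.eta_fin_two E
  have key : !![a*a+b*c, a*b+b*d; c*a+d*c, c*b+d*d] = !![a,b;c,d] := by
    rw [← Matrix.mul_fin_two, ← hA0, hE, hA0]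
  have e11 : a*a + b*c = a := by simpa using congrFun (congrFun key 0) 0
  have e12 : a*b + b*d = b := by simpa using congrFun (congrFun key 0) 1
  have e21 : c*a + d*c = c := by simpa using congrFun (congrFun key 1) 0
  have e22 : c*b + d*d = d := by simpa using congrFun (congrFun key 1) 1
  by_cases htr : a + d = 1
  · -- main case
    have hd2 : d = 1 - a := by omega
    have hbc : b * c = a - a * a := by linarith [e11]
    by_cases ha0 : a = 0
    · -- a = 0 : bc = 0
      have : b = 0 ∨ c = 0 := by
        rcases mul_eq_zero.mp (by rw [hbc, ha0]; ring) with h | h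
        · exact Or.inl h
        · exact Or.inr h
      rcases this with hb | hc
      · apply conj_helper E !![0,1;1,-c]
        · right; rw [Matrix.det_fin_two_of]; ring
        · rw [hA0, ha0, hb, hd2, ha0, Matrix.mul_fin_two, Matrix.mul_fin_two]
          ext i j; fin_cases i <;> fin_cases j <;> simp <;> ring
      · apply conj_helper E !![b,1;1,0]
        · right; rw [Matrix.det_fin_two_of]; ring
        · rw [hA0, ha0, hc, hd2, ha0, Matrix.mul_fin_two, Matrix.mul_fin_two]
          ext i j; fin_cases i <;> fin_cases j <;> simp <;> ring
    · -- a ≠ 0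
      obtain ⟨a1, ha1⟩ : ((Int.gcd a c : ℤ)) ∣ a := Int.gcd_dvd_left _ _
      obtain ⟨c1, hc1⟩ : ((Int.gcd a c : ℤ)) ∣ c := Int.gcd_dvd_right _ _
      obtain ⟨a2, ha2⟩ : ((Int.gcd a b : ℤ)) ∣ a := Int.gcd_dvd_left _ _
      obtain ⟨b1, hb1⟩ : ((Int.gcd a b : ℤ)) ∣ b := Int.gcd_dvd_right _ _
      set g : ℤ := (Int.gcd a c : ℤ) with hg'
      set k : ℤ := (Int.gcd a b : ℤ) with hk'
      have hg0 : g ≠ 0 := by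
        simp only [hg', ne_eq, Int.natCast_eq_zero, Int.gcd_eq_zero_iff]
        tauto
      have hk0 : k ≠ 0 := by
        simp only [hk', ne_eq, Int.natCast_eq_zero, Int.gcd_eq_zero_iff]
        tauto
      have hgk : g * k = (a.natAbs : ℤ) := by
        rw [hg', hk']
        exact_mod_cast congrArg (fun n : ℕ => (n : ℤ)) (gcd_key a b c hbc)
      apply conj_helper E !![a1, -b1; c1, a2]
      · -- det = ±1
        have hdet : (!![a1, -b1; c1, a2]).det = a1 * a2 + b1 * c1 := by
          rw [Matrix.det_fin_two_of]; ring
        have hkey : (g * k) * (a1 * a2 + b1 * c1) = a := by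
          have h2 : (g * a1) * (k * a2) + (k * b1) * (g * c1) = a := by
            rw [← ha1, ← hc1, ← ha2, ← hb1]; linarith [e11]
          linear_combination h2
        rcases Int.natAbs_eq a with h | h
        · left
          rw [hdet]
          have hga : g * k = a := by linarith [hgk, h]
          apply mul_left_cancel₀ ha0
          rw [mul_one]
          calc a * (a1 * a2 + b1 * c1) = (g * k) * (a1 * a2 + b1 * c1) := by rw [hga]
            _ = a := hkey
        · right
          rw [hdet]
          have hga : g * k = -a := by linarith [hgk, h]
          apply mul_left_cancel₀ ha0
          linear_combination (a1 * a2 + b1 * c1) * hga - hkey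
      · -- E * P = P * diag(1,0)
        rw [hA0, Matrix.mul_fin_two, Matrix.mul_fin_two]
        have c11 : a * a1 + b * c1 = a1 := by
          apply mul_left_cancel₀ hg0
          calc g * (a * a1 + b * c1) = a * (g * a1) + b * (g * c1) := by ring
            _ = a * a + b * c := by rw [← ha1, ← hc1]
            _ = a := e11
            _ = g * a1 := ha1
        have c21 : c * a1 + d * c1 = c1 := by
          apply mul_left_cancel₀ hg0
          calc g * (c * a1 + d * c1) = c * (g * a1) + d * (g * c1) := by ring
            _ = c * a + d * c := by rw [← ha1, ← hc1]
            _ = c := e21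
            _ = g * c1 := hc1
        have c12 : a * (-b1) + b * a2 = 0 := by
          apply mul_left_cancel₀ hk0
          calc k * (a * (-b1) + b * a2) = -(a * (k * b1)) + b * (k * a2) := by ring
            _ = -(a*b) + b * a := by rw [← hb1, ← ha2]
            _ = 0 := by ring
            _ = k * 0 := by ring
        have c22 : c * (-b1) + d * a2 = 0 := by
          apply mul_left_cancel₀ hk0
          calc k * (c * (-b1) + d * a2) = -(c * (k * b1)) + d * (k * a2) := by ring
            _ = -(c*b) + d * a := by rw [← hb1, ← ha2]
            _ = 0 := by rw [hd2]; nlinarith [hbc]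
            _ = k * 0 := by ring
        ext i j; fin_cases i <;> fin_cases j <;> simp <;> linarith [c11, c21, c12, c22]
  · -- trivial case: E = 0 or 1, contradiction
    have hb : b = 0 := by
      have : b * (a + d - 1) = 0 := by linarith [e12]
      rcases mul_eq_zero.mp this with h | h
      · exact h
      · omega
    have hc : c = 0 := by
      have : c * (a + d - 1) = 0 := by linarith [e21]
      rcases mul_eq_zero.mp this with h | h
      · exact h
      · omega
    have ha : a = 0 ∨ a = 1 := by
      have h2 : a * (a - 1) = 0 := by nlinarith [e11, hb]
      rcases mul_eq_zero.mp h2 with h | h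
      · exact Or.inl h
      · right; omega
    have hdd : d = 0 ∨ d = 1 := by
      have h2 : d * (d - 1) = 0 := by nlinarith [e22, hc]
      rcases mul_eq_zero.mp h2 with h | h
      · exact Or.inl h
      · right; omega
    rcases ha with h | h <;> rcases hdd with h' | h'
    · exact absurd (by rw [hA0, h, h', hb, hc]; ext i j; fin_cases i <;> fin_cases j <;> simp) h0
    · omega
    · omega
    · exact absurd (by rw [hA0, h, h', hb, hc, Matrix.one_fin_two]) h1

/-- the swap unit -/
def JU : M2ˣ :=
  ⟨!![0,1;1,0], !![0,1;1,0],
   by rw [Matrix.mul_fin_two, Matrix.one_fin_two]; norm_num,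
   by rw [Matrix.mul_fin_two, Matrix.one_fin_two]; norm_num⟩

lemma reverse (A : M2) (σ τ : ℤ) (hσ : σ = 1 ∨ σ = -1) (hτ : τ = 0 ∨ τ = 2)
    (hsim : SimilarMat A !![σ,0;0,τ]) :
    IsStronglyClean A ∧ ¬IsUnit A ∧ ¬IsUnit (1 - A) := by
  obtain ⟨P, hP⟩ := hsim
  have hBA : (P⁻¹).val * A * P.val = !![σ,0;0,τ] := by
    rw [hP]; simp [mul_assoc]
  refine ⟨?_, ?_, ?_⟩
  · refine ⟨P.val * !![0,0;0,1] * (P⁻¹).val, P.val * !![σ,0;0,τ-1] * (P⁻¹).val, ?_, ?_, ?_, ?_⟩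
    · show _ * _ = _
      rw [conjMulAux]
      have m1 : !![(0:ℤ),0;0,1] * !![0,0;0,1] = !![0,0;0,1] := by
        rw [Matrix.mul_fin_two]; norm_num
      rw [m1]
    · have hu0 : IsUnit !![σ,0;0,τ-1] := by
        apply (Matrix.isUnit_iff_isUnit_det _).mpr
        rw [Matrix.det_fin_two_of, Int.isUnit_iff]
        rcases hσ with rfl | rfl <;> rcases hτ with rfl | rfl <;> norm_num
      exact (P.isUnit.mul hu0).mul (P⁻¹).isUnit
    · have hadd : !![(0:ℤ),0;0,1] + !![σ,0;0,τ-1] = !![σ,0;0,τ] := by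
        ext i j; fin_cases i <;> fin_cases j <;> simp
      rw [hP, ← hadd, mul_add, add_mul]
    · rw [conjMulAux, conjMulAux]
      have m1 : !![(0:ℤ),0;0,1] * !![σ,0;0,τ-1] = !![σ,0;0,τ-1] * !![0,0;0,1] := by
        rw [Matrix.mul_fin_two, Matrix.mul_fin_two]; norm_num
      rw [m1]
  · intro h
    have h2 : IsUnit (!![σ,0;0,τ]) := by
      rw [← hBA]; exact ((P⁻¹).isUnit.mul h).mul P.isUnit
    have h3 := (Matrix.isUnit_iff_isUnit_det _).mp h2
    rw [Matrix.det_fin_two_of, Int.isUnit_iff] at h3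
    rcases hσ with rfl | rfl <;> rcases hτ with rfl | rfl <;> omega
  · intro h
    have hsub : (1 : M2) - !![σ,0;0,τ] = !![1-σ,0;0,1-τ] := by
      rw [Matrix.one_fin_two]; ext i j; fin_cases i <;> fin_cases j <;> simp
    have h1A : (P⁻¹).val * (1 - A) * P.val = !![1-σ,0;0,1-τ] := by
      rw [← hsub, mul_sub, sub_mul, hBA]
      congr 1
      simp
    have h2 : IsUnit (!![1-σ,0;0,1-τ]) := by
      rw [← h1A]; exact ((P⁻¹).isUnit.mul h).mul P.isUnit
    have h3 := (Matrix.isUnit_iff_isUnit_det _).mp h2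
    rw [Matrix.det_fin_two_of, Int.isUnit_iff] at h3
    rcases hσ with rfl | rfl <;> rcases hτ with rfl | rfl <;> omega

end SCAux

open SCAux in
/-- A `2×2` integer matrix is a non-trivial strongly clean element of `M₂(ℤ)` iff it is
similar to one of `diag(1,0)`, `diag(-1,0)`, `diag(1,2)`, `diag(-1,2)`. -/
theorem nontrivial_stronglyClean_int_matrix_iff (A : Matrix (Fin 2) (Fin 2) ℤ) :
    (IsStronglyClean A ∧ ¬ IsUnit A ∧ ¬ IsUnit (1 - A)) ↔
      (SimilarMat A !![(1 : ℤ), 0; 0, 0] ∨ SimilarMat A !![(-1 : ℤ), 0; 0, 0] ∨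
       SimilarMat A !![(1 : ℤ), 0; 0, 2] ∨ SimilarMat A !![(-1 : ℤ), 0; 0, 2]) := by
  constructor
  · rintro ⟨⟨e, u, he, hu, hsum, hcomm⟩, hA, hA1⟩
    have he' : e * e = e := he
    have h0 : e ≠ 0 := by
      rintro rfl; exact hA (by rw [hsum, zero_add]; exact hu)
    have h1 : e ≠ 1 := by
      rintro rfl
      apply hA1
      have h2 : 1 - A = -u := by rw [hsum]; abel
      rw [h2]; exact hu.neg
    obtain ⟨P, hP⟩ := idem_similar e he' h0 h1
    set V : M2 := (P⁻¹).val * u * P.val with hV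
    have hD2 : !![(1:ℤ),0;0,0] = (P⁻¹).val * e * P.val := by
      rw [hP]; simp [mul_assoc]
    have inner : e * (u * P.val) = u * (e * P.val) := by
      rw [← mul_assoc, ← mul_assoc, hcomm]
    have hDV : !![(1:ℤ),0;0,0] * V = V * !![(1:ℤ),0;0,0] := by
      rw [hD2, hV]
      simp only [mul_assoc, Units.inv_mul_cancel_left, Units.mul_inv_cancel_left, inner]
    have hVunit : IsUnit V := ((P⁻¹).isUnit.mul hu).mul P.isUnit
    have hAV : A = P.val * (!![(1:ℤ),0;0,0] + V) * (P⁻¹).val := by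
      rw [hsum, hP, hV, mul_add, add_mul]
      congr 1
      simp [mul_assoc]
    have hVeta : V = !![V 0 0, V 0 1; V 1 0, V 1 1] := Matrix.eta_fin_two V
    have hcompute : !![1 * V 0 0 + 0 * V 1 0, 1 * V 0 1 + 0 * V 1 1;
        0 * V 0 0 + 0 * V 1 0, 0 * V 0 1 + 0 * V 1 1] =
        !![V 0 0 * 1 + V 0 1 * 0, V 0 0 * 0 + V 0 1 * 0;
        V 1 0 * 1 + V 1 1 * 0, V 1 0 * 0 + V 1 1 * 0] := by
      rw [← Matrix.mul_fin_two, ← Matrix.mul_fin_two, ← hVeta]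
      exact hDV
    have hq : V 0 1 = 0 := by simpa using congrFun (congrFun hcompute 0) 1
    have hr : V 1 0 = 0 := by have := congrFun (congrFun hcompute 1) 0; simpa using this.symm
    have hdetV : IsUnit (V 0 0 * V 1 1) := by
      have := (Matrix.isUnit_iff_isUnit_det V).mp hVunit
      rwa [Matrix.det_fin_two, hq, hr, mul_zero, sub_zero] at this
    have hp : V 0 0 = 1 ∨ V 0 0 = -1 := Int.isUnit_iff.mp (isUnit_of_mul_isUnit_left hdetV)
    have hs : V 1 1 = 1 ∨ V 1 1 = -1 :=
      Int.isUnit_iff.mp (isUnit_of_mul_isUnit_left (mul_comm (V 0 0) (V 1 1) ▸ hdetV))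
    have hsumV : !![(1:ℤ),0;0,0] + V = !![1 + V 0 0, 0; 0, V 1 1] := by
      rw [hVeta, hq, hr]; ext i j; fin_cases i <;> fin_cases j <;> simp
    have hswap : !![1 + V 0 0, 0; 0, V 1 1] =
        JU.val * !![V 1 1, 0; 0, 1 + V 0 0] * (JU⁻¹).val := by
      show _ = _ * _ * JU.inv
      show _ = !![0,1;1,0] * _ * !![0,1;1,0]
      rw [Matrix.mul_fin_two, Matrix.mul_fin_two]
      norm_num
    have hfin : A = (P * JU).val * !![V 1 1, 0; 0, 1 + V 0 0] * ((P * JU)⁻¹).val := by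
      rw [hAV, hsumV, hswap, mul_inv_rev]
      simp [mul_assoc]
    rcases hs with hs | hs <;> rcases hp with hp | hp
    · rw [hs, hp, show (1:ℤ) + 1 = 2 from rfl] at hfin
      exact Or.inr (Or.inr (Or.inl ⟨P * JU, hfin⟩))
    · rw [hs, hp, show (1:ℤ) + -1 = 0 by norm_num] at hfin
      exact Or.inl ⟨P * JU, hfin⟩
    · rw [hs, hp, show (1:ℤ) + 1 = 2 from rfl] at hfin
      exact Or.inr (Or.inr (Or.inr ⟨P * JU, hfin⟩))
    · rw [hs, hp, show (1:ℤ) + -1 = 0 by norm_num] at hfin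
      exact Or.inr (Or.inl ⟨P * JU, hfin⟩)
  · rintro (h | h | h | h)
    · exact reverse A 1 0 (Or.inl rfl) (Or.inl rfl) h
    · exact reverse A (-1) 0 (Or.inr rfl) (Or.inl rfl) h
    · exact reverse A 1 2 (Or.inl rfl) (Or.inr rfl) h
    · exact reverse A (-1) 2 (Or.inr rfl) (Or.inr rfl) h
end

section
/- Let R be a local ring and A ∈ M₂(R). Then either A is invertible, or I - A is invertible, or A is similar to the companion matrix [[0, w₀], [1, 1 + w₁]] for some w₀, w₁ ∈ J(R). -/
section NoncommLocalHelpers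


variable {R : Type*} [Ring R] [IsLocalRing R]

private lemma locu (a : R) : IsUnit a ∨ IsUnit (1 - a) :=
  IsLocalRing.isUnit_or_isUnit_of_add_one (by abel)

private lemma unit_of_mul_one {a b : R} (h : a * b = 1) : IsUnit a ∧ IsUnit b := by
  haveI : Nontrivial R := IsLocalRing.toNontrivial
  rcases locu (b * a) with he | he
  · have hee : (b * a) * (b * a) = (b * a) * 1 := by
      rw [mul_one]
      calc b * a * (b * a) = b * (a * b) * a := by noncomm_ring
        _ = b * a := by rw [h]; noncomm_ring
    have hba : b * a = 1 := he.mul_left_cancel hee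
    exact ⟨⟨⟨a, b, h, hba⟩, rfl⟩, ⟨⟨b, a, hba, h⟩, rfl⟩⟩
  · exfalso
    have hz : (1 - b * a) * b = (1 - b * a) * 0 := by
      rw [mul_zero]
      calc (1 - b * a) * b = b - b * (a * b) := by noncomm_ring
        _ = 0 := by rw [h]; noncomm_ring
    have hb0 : b = 0 := he.mul_left_cancel hz
    rw [hb0, mul_zero] at h
    exact zero_ne_one h

private lemma nonunit_mul_left {x : R} (r : R) (hx : ¬IsUnit x) : ¬IsUnit (r * x) := by
  intro h
  obtain ⟨u, hu⟩ := h
  have : ((↑u⁻¹ : R) * r) * x = 1 := by rw [mul_assoc, ← hu, u.inv_mul]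
  exact hx (unit_of_mul_one this).2

private lemma nonunit_mul_right {x : R} (r : R) (hx : ¬IsUnit x) : ¬IsUnit (x * r) := by
  intro h
  obtain ⟨u, hu⟩ := h
  have : x * (r * (↑u⁻¹ : R)) = 1 := by rw [← mul_assoc, ← hu, u.mul_inv]
  exact hx (unit_of_mul_one this).1

private lemma nonunit_neg {a : R} (ha : ¬IsUnit a) : ¬IsUnit (-a) := by
  intro h
  exact ha (by simpa using h.neg)

private lemma nonunit_add {a b : R} (ha : ¬IsUnit a) (hb : ¬IsUnit b) : ¬IsUnit (a + b) := by
  intro h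
  obtain ⟨u, hu⟩ := h
  have h1 : (↑u⁻¹ : R) * a + (↑u⁻¹ : R) * b = 1 := by
    rw [← mul_add, ← hu, u.inv_mul]
  rcases IsLocalRing.isUnit_or_isUnit_of_add_one h1 with h2 | h2
  · refine ha ?_
    have hh : a = (↑u : R) * ((↑u⁻¹ : R) * a) := by rw [← mul_assoc, u.mul_inv, one_mul]
    rw [hh]; exact u.isUnit.mul h2
  · refine hb ?_
    have hh : b = (↑u : R) * ((↑u⁻¹ : R) * b) := by rw [← mul_assoc, u.mul_inv, one_mul]
    rw [hh]; exact u.isUnit.mul h2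

private lemma unit_add_nonunit {a j : R} (ha : IsUnit a) (hj : ¬IsUnit j) : IsUnit (a + j) := by
  obtain ⟨u, hu⟩ := ha
  have hnu : ¬IsUnit ((↑u⁻¹ : R) * j) := nonunit_mul_left _ hj
  have key : IsUnit (1 + (↑u⁻¹ : R) * j) := by
    rcases locu (-((↑u⁻¹ : R) * j)) with h | h
    · exact absurd (by simpa using h.neg) hnu
    · rwa [sub_neg_eq_add] at h
  have : a + j = (↑u : R) * (1 + (↑u⁻¹ : R) * j) := by
    rw [mul_add, mul_one, ← mul_assoc, u.mul_inv, one_mul, hu]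
  rw [this]; exact u.isUnit.mul key

private lemma schur {A : Matrix (Fin 2) (Fin 2) R} (h00 : IsUnit (A 0 0))
    (h01 : ¬IsUnit (A 0 1)) (h10 : ¬IsUnit (A 1 0))
    (hdiag : ¬IsUnit (A 1 1 - A 0 0)) : IsUnit A := by
  obtain ⟨u, hu⟩ := h00
  set a' : R := ↑u⁻¹ with ha'def
  have ha : A 0 0 * a' = 1 := by rw [← hu]; exact u.mul_inv
  have ha' : a' * A 0 0 = 1 := by rw [← hu]; exact u.inv_mul
  have hs : IsUnit (A 1 1 - A 1 0 * a' * A 0 1) := by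
    have he : A 1 1 - A 1 0 * a' * A 0 1
        = A 0 0 + ((A 1 1 - A 0 0) + -(A 1 0 * a' * A 0 1)) := by abel
    rw [he]
    exact unit_add_nonunit ⟨u, hu⟩
      (nonunit_add hdiag (nonunit_neg (nonunit_mul_left _ h01)))
  obtain ⟨v, hv⟩ := hs
  set s' : R := ↑v⁻¹ with hs'def
  have hsv : (A 1 1 - A 1 0 * a' * A 0 1) * s' = 1 := by rw [← hv]; exact v.mul_inv
  have hvs : s' * (A 1 1 - A 1 0 * a' * A 0 1) = 1 := by rw [← hv]; exact v.inv_mul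
  refine ⟨⟨A, !![a' + a' * A 0 1 * s' * A 1 0 * a', -(a' * A 0 1 * s');
      -(s' * A 1 0 * a'), s'], ?_, ?_⟩, rfl⟩
  · ext i j
    fin_cases i <;> fin_cases j <;>
      simp [Matrix.mul_apply, Fin.sum_univ_two, Matrix.one_apply]
    · calc A 0 0 * (a' + a' * A 0 1 * s' * A 1 0 * a') + -(A 0 1 * (s' * A 1 0 * a'))
          = A 0 0 * a' + (A 0 0 * a') * (A 0 1 * s' * A 1 0 * a')
            - A 0 1 * s' * A 1 0 * a' := by noncomm_ring
        _ = 1 := by rw [ha]; noncomm_ring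
    · calc -(A 0 0 * (a' * A 0 1 * s')) + A 0 1 * s'
          = -((A 0 0 * a') * (A 0 1 * s')) + A 0 1 * s' := by noncomm_ring
        _ = 0 := by rw [ha]; noncomm_ring
    · calc A 1 0 * (a' + a' * A 0 1 * s' * A 1 0 * a') + -(A 1 1 * (s' * A 1 0 * a'))
          = A 1 0 * a' - ((A 1 1 - A 1 0 * a' * A 0 1) * s') * (A 1 0 * a') := by noncomm_ring
        _ = 0 := by rw [hsv]; noncomm_ring
    · calc -(A 1 0 * (a' * A 0 1 * s')) + A 1 1 * s'
          = (A 1 1 - A 1 0 * a' * A 0 1) * s' := by noncomm_ring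
        _ = 1 := hsv
  · ext i j
    fin_cases i <;> fin_cases j <;>
      simp [Matrix.mul_apply, Fin.sum_univ_two, Matrix.one_apply]
    · calc (a' + a' * A 0 1 * s' * A 1 0 * a') * A 0 0 + -(a' * A 0 1 * s' * A 1 0)
          = a' * A 0 0 + (a' * A 0 1 * s' * A 1 0) * (a' * A 0 0)
            - a' * A 0 1 * s' * A 1 0 := by noncomm_ring
        _ = 1 := by rw [ha']; noncomm_ring
    · calc (a' + a' * A 0 1 * s' * A 1 0 * a') * A 0 1 + -(a' * A 0 1 * s' * A 1 1)
          = a' * A 0 1 - (a' * A 0 1) * (s' * (A 1 1 - A 1 0 * a' * A 0 1)) := by noncomm_ring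
        _ = 0 := by rw [hvs]; noncomm_ring
    · calc -(s' * A 1 0 * a' * A 0 0) + s' * A 1 0
          = -((s' * A 1 0) * (a' * A 0 0)) + s' * A 1 0 := by noncomm_ring
        _ = 0 := by rw [ha']; noncomm_ring
    · calc -(s' * A 1 0 * a' * A 0 1) + s' * A 1 1
          = s' * (A 1 1 - A 1 0 * a' * A 0 1) := by noncomm_ring
        _ = 1 := hvs

private lemma key {A P Q : Matrix (Fin 2) (Fin 2) R}
    (hPQ : P * Q = 1) (hQP : Q * P = 1)
    (h00 : (Q * A * P) 0 0 = 0) (h10 : (Q * A * P) 1 0 = 1)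
    (hA : ¬IsUnit A) (h1A : ¬IsUnit (1 - A)) :
    ∃ (w₀ w₁ : R) (P' : (Matrix (Fin 2) (Fin 2) R)ˣ),
      ¬ IsUnit w₀ ∧ ¬ IsUnit w₁ ∧
      A = P'.val * !![0, w₀; 1, 1 + w₁] * (P'⁻¹).val := by
  set B := Q * A * P with hBdef
  set w₀ := B 0 1 with hw₀def
  set t := B 1 1 with htdef
  have hB : B = !![0, w₀; 1, t] := by
    conv_lhs => rw [Matrix.eta_fin_two B]
    rw [h00, h10]
  have hAB : A = P * B * Q := by
    have h1 : P * (Q * A * P) * Q = (P * Q) * A * (P * Q) := by noncomm_ring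
    rw [hBdef, h1, hPQ, one_mul, mul_one]
  have transfer : ∀ C : Matrix (Fin 2) (Fin 2) R, IsUnit C → IsUnit (P * C * Q) := by
    intro C hC
    exact (((⟨P, Q, hPQ, hQP⟩ : (Matrix (Fin 2) (Fin 2) R)ˣ).isUnit.mul hC).mul
      (⟨Q, P, hQP, hPQ⟩ : (Matrix (Fin 2) (Fin 2) R)ˣ).isUnit)
  have hw₀ : ¬IsUnit w₀ := by
    intro h
    obtain ⟨u, hu⟩ := h
    have hBu : IsUnit B := by
      refine ⟨⟨B, !![-(t * (↑u⁻¹ : R)), 1; (↑u⁻¹ : R), 0], ?_, ?_⟩, rfl⟩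
      · rw [hB]
        ext i j
        fin_cases i <;> fin_cases j <;>
          simp [Matrix.mul_apply, Fin.sum_univ_two, Matrix.one_apply, ← hu]
      · rw [hB]
        ext i j
        fin_cases i <;> fin_cases j <;>
          simp [Matrix.mul_apply, Fin.sum_univ_two, Matrix.one_apply, ← hu]
    exact hA (hAB ▸ transfer B hBu)
  have hnu : ¬IsUnit (1 - t - w₀) := by
    intro h
    obtain ⟨u, hu⟩ := h
    have h1B : (1 : Matrix (Fin 2) (Fin 2) R) - B = !![1, -w₀; -1, 1 - t] := by
      rw [hB]
      ext i j
      fin_cases i <;> fin_cases j <;>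
        simp [Matrix.one_apply]
    have hBu : IsUnit ((1 : Matrix (Fin 2) (Fin 2) R) - B) := by
      rw [h1B]
      refine ⟨⟨!![1, -w₀; -1, 1 - t],
        !![1 + w₀ * (↑u⁻¹ : R), w₀ * (↑u⁻¹ : R); (↑u⁻¹ : R), (↑u⁻¹ : R)], ?_, ?_⟩, rfl⟩
      · ext i j
        fin_cases i <;> fin_cases j <;>
          simp [Matrix.mul_apply, Fin.sum_univ_two, Matrix.one_apply]
        · calc -(w₀ * (↑u⁻¹ : R)) + -1 + (1 - t) * (↑u⁻¹ : R)
              = (1 - t - w₀) * (↑u⁻¹ : R) - 1 := by noncomm_ring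
            _ = 0 := by rw [← hu, u.mul_inv]; noncomm_ring
        · calc -(w₀ * (↑u⁻¹ : R)) + (1 - t) * (↑u⁻¹ : R)
              = (1 - t - w₀) * (↑u⁻¹ : R) := by noncomm_ring
            _ = 1 := by rw [← hu]; exact u.mul_inv
      · ext i j
        fin_cases i <;> fin_cases j <;>
          simp [Matrix.mul_apply, Fin.sum_univ_two, Matrix.one_apply]
        · calc -((1 + w₀ * (↑u⁻¹ : R)) * w₀) + w₀ * (↑u⁻¹ : R) * (1 - t)
              = -w₀ + w₀ * ((↑u⁻¹ : R) * (1 - t - w₀)) := by noncomm_ring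
            _ = 0 := by rw [← hu, u.inv_mul]; noncomm_ring
        · calc -((↑u⁻¹ : R) * w₀) + (↑u⁻¹ : R) * (1 - t)
              = (↑u⁻¹ : R) * (1 - t - w₀) := by noncomm_ring
            _ = 1 := by rw [← hu]; exact u.inv_mul
    have h2 : (1 : Matrix (Fin 2) (Fin 2) R) - A = P * ((1 : Matrix (Fin 2) (Fin 2) R) - B) * Q := by
      have h3 : P * ((1 : Matrix (Fin 2) (Fin 2) R) - B) * Q = P * Q - P * B * Q := by noncomm_ring
      rw [h3, hPQ, ← hAB]
    exact h1A (h2 ▸ transfer _ hBu)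
  have hw₁ : ¬IsUnit (t - 1) := by
    have h1t : ¬IsUnit (1 - t) := by
      have he : 1 - t = (1 - t - w₀) + w₀ := by abel
      rw [he]; exact nonunit_add hnu hw₀
    have := nonunit_neg h1t
    simpa [neg_sub] using this
  refine ⟨w₀, t - 1, ⟨P, Q, hPQ, hQP⟩, hw₀, hw₁, ?_⟩
  have hts : 1 + (t - 1) = t := by abel
  show A = P * !![0, w₀; 1, 1 + (t - 1)] * Q
  rw [hts, hAB, hB]

end NoncommLocalHelpers

/-- Over a local ring `R` (where `J(R)` is the set of nonunits), every `A ∈ M₂(R)` is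
invertible, or `I - A` is invertible, or `A` is similar to a companion matrix
`[[0, w₀], [1, 1 + w₁]]` with `w₀, w₁ ∈ J(R)`. -/
theorem matrix_two_trichotomy {R : Type*} [Ring R] [IsLocalRing R]
    (A : Matrix (Fin 2) (Fin 2) R) :
    IsUnit A ∨ IsUnit (1 - A) ∨
      ∃ (w₀ w₁ : R) (P : (Matrix (Fin 2) (Fin 2) R)ˣ),
        ¬ IsUnit w₀ ∧ ¬ IsUnit w₁ ∧
        A = P.val * !![0, w₀; 1, 1 + w₁] * (P⁻¹).val := by
  by_cases hA : IsUnit A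
  · exact Or.inl hA
  by_cases h1A : IsUnit (1 - A)
  · exact Or.inr (Or.inl h1A)
  refine Or.inr (Or.inr ?_)
  by_cases hc : IsUnit (A 1 0)
  · obtain ⟨u, hu⟩ := hc
    refine key (P := !![1, A 0 0; 0, A 1 0]) (Q := !![1, -(A 0 0 * (↑u⁻¹ : R)); 0, (↑u⁻¹ : R)])
      ?_ ?_ ?_ ?_ hA h1A
    · ext i j
      fin_cases i <;> fin_cases j <;>
        simp [Matrix.mul_apply, Fin.sum_univ_two, Matrix.one_apply, ← hu]
    · ext i j
      fin_cases i <;> fin_cases j <;>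
        simp [Matrix.mul_apply, Fin.sum_univ_two, Matrix.one_apply, ← hu]
    · simp [Matrix.mul_apply, Matrix.vecMul, dotProduct, Fin.sum_univ_two, mul_assoc, ← hu]
    · simp [Matrix.mul_apply, Matrix.vecMul, dotProduct, Fin.sum_univ_two, mul_assoc, ← hu]
  by_cases hb : IsUnit (A 0 1)
  · obtain ⟨u, hu⟩ := hb
    refine key (P := !![0, A 0 1; 1, A 1 1]) (Q := !![-(A 1 1 * (↑u⁻¹ : R)), 1; (↑u⁻¹ : R), 0])
      ?_ ?_ ?_ ?_ hA h1A
    · ext i j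
      fin_cases i <;> fin_cases j <;>
        simp [Matrix.mul_apply, Fin.sum_univ_two, Matrix.one_apply, ← hu]
    · ext i j
      fin_cases i <;> fin_cases j <;>
        simp [Matrix.mul_apply, Fin.sum_univ_two, Matrix.one_apply, ← hu]
    · simp [Matrix.mul_apply, Matrix.vecMul, dotProduct, Fin.sum_univ_two, mul_assoc, ← hu]
    · simp [Matrix.mul_apply, Matrix.vecMul, dotProduct, Fin.sum_univ_two, mul_assoc, ← hu]
  by_cases he : IsUnit (A 1 0 + A 1 1 - A 0 0 - A 0 1)
  · obtain ⟨u, hu⟩ := he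
    have hxy : A 0 0 + A 0 1 = A 1 0 + A 1 1 - (↑u : R) := by rw [hu]; abel
    have hI1 : (A 1 0 + A 1 1) * (↑u⁻¹ : R) - (A 0 0 + A 0 1) * (↑u⁻¹ : R) = 1 := by
      rw [hxy]
      calc (A 1 0 + A 1 1) * (↑u⁻¹ : R) - (A 1 0 + A 1 1 - (↑u : R)) * (↑u⁻¹ : R)
          = (↑u : R) * (↑u⁻¹ : R) := by noncomm_ring
        _ = 1 := u.mul_inv
    have hI3 : (A 1 0 + A 1 1) * (↑u⁻¹ : R) * (A 0 0 + A 0 1)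
        - (A 0 0 + A 0 1) * (↑u⁻¹ : R) * (A 1 0 + A 1 1) = 0 := by
      rw [hxy]
      calc (A 1 0 + A 1 1) * (↑u⁻¹ : R) * (A 1 0 + A 1 1 - (↑u : R))
            - (A 1 0 + A 1 1 - (↑u : R)) * (↑u⁻¹ : R) * (A 1 0 + A 1 1)
          = ((↑u : R) * (↑u⁻¹ : R)) * (A 1 0 + A 1 1)
            - (A 1 0 + A 1 1) * ((↑u⁻¹ : R) * (↑u : R)) := by noncomm_ring
        _ = 0 := by rw [u.mul_inv, u.inv_mul]; noncomm_ring
    have hI4 : (↑u⁻¹ : R) * (A 1 0 + A 1 1) - (↑u⁻¹ : R) * (A 0 0 + A 0 1) = 1 := by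
      rw [hxy]
      calc (↑u⁻¹ : R) * (A 1 0 + A 1 1) - (↑u⁻¹ : R) * (A 1 0 + A 1 1 - (↑u : R))
          = (↑u⁻¹ : R) * (↑u : R) := by noncomm_ring
        _ = 1 := u.inv_mul
    refine key (P := !![1, A 0 0 + A 0 1; 1, A 1 0 + A 1 1])
      (Q := !![(A 1 0 + A 1 1) * (↑u⁻¹ : R), -((A 0 0 + A 0 1) * (↑u⁻¹ : R));
        -(↑u⁻¹ : R), (↑u⁻¹ : R)]) ?_ ?_ ?_ ?_ hA h1A
    · ext i j
      fin_cases i <;> fin_cases j <;>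
        simp [Matrix.mul_apply, Fin.sum_univ_two, Matrix.one_apply]
      · calc (A 1 0 + A 1 1) * (↑u⁻¹ : R) + -((A 0 0 + A 0 1) * (↑u⁻¹ : R))
            = (A 1 0 + A 1 1) * (↑u⁻¹ : R) - (A 0 0 + A 0 1) * (↑u⁻¹ : R) := by noncomm_ring
          _ = 1 := hI1
      · calc -((A 0 0 + A 0 1) * (↑u⁻¹ : R)) + (A 1 0 + A 1 1) * (↑u⁻¹ : R)
            = (A 1 0 + A 1 1) * (↑u⁻¹ : R) - (A 0 0 + A 0 1) * (↑u⁻¹ : R) := by noncomm_ring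
          _ = 1 := hI1
    · ext i j
      fin_cases i <;> fin_cases j <;>
        simp [Matrix.mul_apply, Fin.sum_univ_two, Matrix.one_apply]
      · calc (A 1 0 + A 1 1) * (↑u⁻¹ : R) + -((A 0 0 + A 0 1) * (↑u⁻¹ : R))
            = (A 1 0 + A 1 1) * (↑u⁻¹ : R) - (A 0 0 + A 0 1) * (↑u⁻¹ : R) := by noncomm_ring
          _ = 1 := hI1
      · calc (A 1 0 + A 1 1) * (↑u⁻¹ : R) * (A 0 0 + A 0 1)
              + -((A 0 0 + A 0 1) * (↑u⁻¹ : R) * (A 1 0 + A 1 1))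
            = (A 1 0 + A 1 1) * (↑u⁻¹ : R) * (A 0 0 + A 0 1)
              - (A 0 0 + A 0 1) * (↑u⁻¹ : R) * (A 1 0 + A 1 1) := by noncomm_ring
          _ = 0 := hI3
      · calc -((↑u⁻¹ : R) * (A 0 0 + A 0 1)) + (↑u⁻¹ : R) * (A 1 0 + A 1 1)
            = (↑u⁻¹ : R) * (A 1 0 + A 1 1) - (↑u⁻¹ : R) * (A 0 0 + A 0 1) := by noncomm_ring
          _ = 1 := hI4
    · simp only [Matrix.mul_apply, Matrix.vecMul, dotProduct, Fin.sum_univ_two]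
      simp
      calc (A 1 0 + A 1 1) * (↑u⁻¹ : R) * A 0 0 + -((A 0 0 + A 0 1) * (↑u⁻¹ : R) * A 1 0)
            + ((A 1 0 + A 1 1) * (↑u⁻¹ : R) * A 0 1 + -((A 0 0 + A 0 1) * (↑u⁻¹ : R) * A 1 1))
          = (A 1 0 + A 1 1) * (↑u⁻¹ : R) * (A 0 0 + A 0 1)
            - (A 0 0 + A 0 1) * (↑u⁻¹ : R) * (A 1 0 + A 1 1) := by noncomm_ring
        _ = 0 := hI3
    · simp only [Matrix.mul_apply, Matrix.vecMul, dotProduct, Fin.sum_univ_two]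
      simp
      calc -((↑u⁻¹ : R) * A 0 0) + (↑u⁻¹ : R) * A 1 0 + (-((↑u⁻¹ : R) * A 0 1) + (↑u⁻¹ : R) * A 1 1)
          = (↑u⁻¹ : R) * (A 1 0 + A 1 1) - (↑u⁻¹ : R) * (A 0 0 + A 0 1) := by noncomm_ring
        _ = 1 := hI4
  · exfalso
    have hd : ¬IsUnit (A 1 1 - A 0 0) := by
      have heq : A 1 1 - A 0 0
          = ((A 1 0 + A 1 1 - A 0 0 - A 0 1) + -(A 1 0)) + A 0 1 := by abel
      rw [heq]
      exact nonunit_add (nonunit_add he (nonunit_neg hc)) hb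
    rcases locu (A 0 0) with h | h
    · exact hA (schur h hb hc hd)
    · refine h1A (schur (A := 1 - A) ?_ ?_ ?_ ?_)
      · simpa [Matrix.one_apply] using h
      · simpa [Matrix.one_apply] using nonunit_neg hb
      · simpa [Matrix.one_apply] using nonunit_neg hc
      · have : ((1 : Matrix (Fin 2) (Fin 2) R) - A) 1 1 - ((1 : Matrix (Fin 2) (Fin 2) R) - A) 0 0
            = -(A 1 1 - A 0 0) := by
          simp [Matrix.one_apply]
        rw [this]
        exact nonunit_neg hd
end

section
/- Let R be a local ring and w₀, w₁ ∈ J(R), and let h(t) = t² - (1+w₁)t - w₀ with companion matrix C_h = [[0, w₀],[1, 1+w₁]]. Then C_h is strongly clean in M₂(R) if and only if h has a left root in J(R) and a left root in 1 + J(R). -/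
set_option maxHeartbeats 1600000
set_option linter.unusedSectionVars false

namespace CompanionSCAux

variable {R : Type*} [Ring R] [IsLocalRing R]

lemma unit_pair_of_mul_eq_one {a b : R} (h : a * b = 1) : IsUnit a ∧ IsUnit b := by
  have hsum : b * a + (1 - b * a) = 1 := by abel
  rcases IsLocalRing.isUnit_or_isUnit_of_add_one hsum with he | he
  · -- b*a is a unit and idempotent, hence b*a = 1
    have hid : (b * a) * (b * a) = b * a := by
      calc (b * a) * (b * a) = b * (a * b) * a := by noncomm_ring
        _ = b * a := by rw [h, mul_one]
    obtain ⟨u, hu⟩ := he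
    have hba : b * a = 1 := by
      have h1 : (↑u⁻¹ : R) * ((b * a) * (b * a)) = ↑u⁻¹ * (b * a) := by rw [hid]
      rw [← hu, ← mul_assoc, Units.inv_mul, one_mul] at h1
      rw [← hu]; exact h1
    exact ⟨⟨⟨a, b, h, hba⟩, rfl⟩, ⟨⟨b, a, hba, h⟩, rfl⟩⟩
  · obtain ⟨u, hu⟩ := he
    have ha0 : a * (1 - b * a) = 0 := by
      calc a * (1 - b * a) = a - (a * b) * a := by noncomm_ring
        _ = 0 := by rw [h, one_mul, sub_self]
    have ha : a = 0 := by
      have : a * ((1 - b * a) * ↑u⁻¹) = 0 := by rw [← mul_assoc, ha0, zero_mul]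
      rwa [← hu, Units.mul_inv, mul_one] at this
    exfalso
    rw [ha, zero_mul] at h
    exact zero_ne_one h

lemma isUnit_left_of_mul {a b : R} (h : IsUnit (a * b)) : IsUnit a := by
  obtain ⟨u, hu⟩ := h
  have : a * (b * ↑u⁻¹) = 1 := by rw [← mul_assoc, ← hu, Units.mul_inv]
  exact (unit_pair_of_mul_eq_one this).1

lemma isUnit_right_of_mul {a b : R} (h : IsUnit (a * b)) : IsUnit b := by
  obtain ⟨u, hu⟩ := h
  have : (↑u⁻¹ * a) * b = 1 := by rw [mul_assoc, ← hu, Units.inv_mul]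
  exact (unit_pair_of_mul_eq_one this).2

lemma not_isUnit_add {a b : R} (ha : ¬ IsUnit a) (hb : ¬ IsUnit b) : ¬ IsUnit (a + b) := by
  intro h
  obtain ⟨u, hu⟩ := h
  have hsum : a * ↑u⁻¹ + b * ↑u⁻¹ = 1 := by
    rw [← add_mul, ← hu, Units.mul_inv]
  rcases IsLocalRing.isUnit_or_isUnit_of_add_one hsum with h' | h'
  · exact ha (isUnit_left_of_mul h')
  · exact hb (isUnit_left_of_mul h')

lemma isUnit_one_sub {a : R} (ha : ¬ IsUnit a) : IsUnit (1 - a) := by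
  have hsum : a + (1 - a) = 1 := by abel
  rcases IsLocalRing.isUnit_or_isUnit_of_add_one hsum with h | h
  · exact absurd h ha
  · exact h

lemma isUnit_sub_one {a : R} (ha : ¬ IsUnit a) : IsUnit (a - 1) := by
  have := (isUnit_one_sub ha).neg
  rwa [neg_sub] at this

lemma isUnit_of_sub_one_not_isUnit {a : R} (h : ¬ IsUnit (a - 1)) : IsUnit a := by
  rcases IsLocalRing.isUnit_or_isUnit_of_add_one (show a + (1 - a) = 1 by abel) with h' | h'
  · exact h'
  · exfalso
    apply h
    have := h'.neg
    rwa [neg_sub] at this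

lemma isUnit_add_unit {a b : R} (ha : ¬ IsUnit a) (hb : IsUnit b) : IsUnit (a + b) := by
  by_contra h
  have hna : ¬ IsUnit (-a) := fun hn => ha (by simpa using hn.neg)
  have hsum := not_isUnit_add h hna
  apply hsum
  have hb' : a + b + -a = b := by abel
  rw [hb']
  exact hb

omit [IsLocalRing R] in
lemma isUnit_conj {p p' x : R} (h1 : p * p' = 1) (h2 : p' * p = 1) :
    IsUnit (p' * x * p) ↔ IsUnit x := by
  have hp : IsUnit p := ⟨⟨p, p', h1, h2⟩, rfl⟩
  have hp' : IsUnit p' := ⟨⟨p', p, h2, h1⟩, rfl⟩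
  constructor
  · intro h
    have hx : x = p * (p' * x * p) * p' := by
      calc x = 1 * x * 1 := by rw [one_mul, mul_one]
        _ = (p * p') * x * (p * p') := by rw [h1]
        _ = p * (p' * x * p) * p' := by noncomm_ring
    rw [hx]
    exact (hp.mul h).mul hp'
  · intro h
    exact (hp'.mul h).mul hp

lemma isUnit_sub_nonunit {x y : R} (hx : IsUnit x) (hy : ¬ IsUnit y) : IsUnit (x - y) := by
  have he : x - y = -y + x := by abel
  rw [he]
  exact isUnit_add_unit (fun h => hy (by simpa using h.neg)) hx

omit [IsLocalRing R] in
lemma mk_eq {a b c d e f g h : R} (h1 : a = e) (h2 : b = f) (h3 : c = g) (h4 : d = h) :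
    !![a, b; c, d] = !![e, f; g, h] := by rw [h1, h2, h3, h4]

omit [IsLocalRing R] in
lemma inv2 {p q r s p' t' : R} (hp : p * p' = 1) (hp' : p' * p = 1)
    (ht : (s - r * p' * q) * t' = 1) (ht' : t' * (s - r * p' * q) = 1) :
    ∃ N : Matrix (Fin 2) (Fin 2) R,
      !![p, q; r, s] * N = 1 ∧ N * !![p, q; r, s] = 1 := by
  refine ⟨!![p' + p' * q * t' * r * p', -(p' * q * t'); -(t' * r * p'), t'], ?_, ?_⟩
  · rw [Matrix.mul_fin_two, Matrix.one_fin_two]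
    apply mk_eq
    · have he : p * (p' + p' * q * t' * r * p') + q * -(t' * r * p')
          = p * p' + (p * p') * (q * (t' * (r * p'))) - q * (t' * (r * p')) := by noncomm_ring
      rw [he, hp]; simp
    · have he : p * -(p' * q * t') + q * t'
          = -((p * p') * (q * t')) + q * t' := by noncomm_ring
      rw [he, hp]; simp
    · have he : r * (p' + p' * q * t' * r * p') + s * -(t' * r * p')
          = r * p' - ((s - r * p' * q) * t') * (r * p') := by noncomm_ring
      rw [he, ht]; simp
    · have he : r * -(p' * q * t') + s * t' = (s - r * p' * q) * t' := by noncomm_ring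
      rw [he, ht]
  · rw [Matrix.mul_fin_two, Matrix.one_fin_two]
    apply mk_eq
    · have he : (p' + p' * q * t' * r * p') * p + -(p' * q * t') * r
          = p' * p + p' * (q * (t' * (r * (p' * p)))) - p' * (q * (t' * r)) := by noncomm_ring
      rw [he, hp']; simp
    · have he : (p' + p' * q * t' * r * p') * q + -(p' * q * t') * s
          = p' * q - (p' * q) * (t' * (s - r * p' * q)) := by noncomm_ring
      rw [he, ht']; simp
    · have he : -(t' * r * p') * p + t' * r
          = -(t' * (r * (p' * p))) + t' * r := by noncomm_ring
      rw [he, hp']; simp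
    · have he : -(t' * r * p') * q + t' * s = t' * (s - r * p' * q) := by noncomm_ring
      rw [he, ht']

lemma diag_idem {E : Matrix (Fin 2) (Fin 2) R} (hE : E * E = E) (h0 : E ≠ 0) (h1 : E ≠ 1) :
    ∃ P Q : Matrix (Fin 2) (Fin 2) R,
      P * Q = 1 ∧ Q * P = 1 ∧ P * E = !![(1 : R), 0; 0, 0] * P := by
  obtain ⟨a, b, c, d, rfl⟩ : ∃ a b c d, E = !![a, b; c, d] :=
    ⟨_, _, _, _, (Matrix.etaExpand_eq E).symm⟩
  rw [Matrix.mul_fin_two] at hE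
  have h00 : a * a + b * c = a := by simpa using congrFun (congrFun hE 0) 0
  have h01 : a * b + b * d = b := by simpa using congrFun (congrFun hE 0) 1
  have h10 : c * a + d * c = c := by simpa using congrFun (congrFun hE 1) 0
  have h11 : c * b + d * d = d := by simpa using congrFun (congrFun hE 1) 1
  by_cases hb : IsUnit b
  · obtain ⟨ub, hub⟩ := hb
    set b' : R := ↑ub⁻¹ with hb'def
    have hbb' : b * b' = 1 := by rw [hb'def, ← hub, Units.mul_inv]
    have hb'b : b' * b = 1 := by rw [hb'def, ← hub, Units.inv_mul]
    refine ⟨!![a, b; 1-a, -b], !![1, 1; b' * (1-a), b' * (1-a) - b'], ?_, ?_, ?_⟩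
    · rw [Matrix.mul_fin_two, Matrix.one_fin_two]
      apply mk_eq
      · have he : a * 1 + b * (b' * (1-a)) = a + (b * b') * (1-a) := by noncomm_ring
        rw [he, hbb', one_mul]; abel
      · have he : a * 1 + b * (b' * (1-a) - b') = a + (b * b') * (1-a) - (b * b') := by
          noncomm_ring
        rw [he, hbb', one_mul]; abel
      · have he : (1-a) * 1 + -b * (b' * (1-a)) = (1-a) - (b * b') * (1-a) := by noncomm_ring
        rw [he, hbb', one_mul]; abel
      · have he : (1-a) * 1 + -b * (b' * (1-a) - b')
            = (1-a) - (b * b') * (1-a) + (b * b') := by noncomm_ring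
        rw [he, hbb', one_mul]; abel
    · rw [Matrix.mul_fin_two, Matrix.one_fin_two]
      apply mk_eq
      · noncomm_ring
      · noncomm_ring
      · noncomm_ring
      · have he : (b' * (1-a)) * b + (b' * (1-a) - b') * (-b) = b' * b := by noncomm_ring
        rw [he, hb'b]
    · rw [Matrix.mul_fin_two, Matrix.mul_fin_two]
      apply mk_eq
      · simpa using h00
      · simpa using h01
      · have he : (1-a) * a + -b * c = a - (a * a + b * c) := by noncomm_ring
        rw [he, h00]; simp
      · have he : (1-a) * b + -b * d = b - (a * b + b * d) := by noncomm_ring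
        rw [he, h01]; simp
  by_cases hc : IsUnit c
  · obtain ⟨uc, huc⟩ := hc
    set c' : R := ↑uc⁻¹ with hc'def
    have hcc' : c * c' = 1 := by rw [hc'def, ← huc, Units.mul_inv]
    have hc'c : c' * c = 1 := by rw [hc'def, ← huc, Units.inv_mul]
    refine ⟨!![c, d; -c, 1-d], !![c' - c' * d, -(c' * d); 1, 1], ?_, ?_, ?_⟩
    · rw [Matrix.mul_fin_two, Matrix.one_fin_two]
      apply mk_eq
      · have he : c * (c' - c' * d) + d * 1 = (c * c') - (c * c') * d + d := by noncomm_ring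
        rw [he, hcc', one_mul]; abel
      · have he : c * -(c' * d) + d * 1 = -((c * c') * d) + d := by noncomm_ring
        rw [he, hcc', one_mul]; abel
      · have he : -c * (c' - c' * d) + (1-d) * 1
            = -(c * c') + (c * c') * d + (1 - d) := by noncomm_ring
        rw [he, hcc', one_mul]; abel
      · have he : -c * -(c' * d) + (1-d) * 1 = (c * c') * d + (1 - d) := by noncomm_ring
        rw [he, hcc', one_mul]; abel
    · rw [Matrix.mul_fin_two, Matrix.one_fin_two]
      apply mk_eq
      · have he : (c' - c' * d) * c + -(c' * d) * (-c) = c' * c := by noncomm_ring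
        rw [he, hc'c]
      · noncomm_ring
      · noncomm_ring
      · noncomm_ring
    · rw [Matrix.mul_fin_two, Matrix.mul_fin_two]
      apply mk_eq
      · simpa using h10
      · simpa using h11
      · have he : -c * a + (1-d) * c = c - (c * a + d * c) := by noncomm_ring
        rw [he, h10]; simp
      · have he : -c * b + (1-d) * d = d - (c * b + d * d) := by noncomm_ring
        rw [he, h11]; simp
  -- both b and c nonunits
  · by_cases hA : IsUnit a <;> by_cases hD : IsUnit d
    · -- a, d units: E is invertible, E = 1, contradiction
      exfalso
      obtain ⟨ua, hua⟩ := hA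
      set a' : R := ↑ua⁻¹ with ha'def
      have haa' : a * a' = 1 := by rw [ha'def, ← hua, Units.mul_inv]
      have ha'a : a' * a = 1 := by rw [ha'def, ← hua, Units.inv_mul]
      have hnprod : ¬ IsUnit (c * a' * b) := fun h =>
        hc (isUnit_left_of_mul (isUnit_left_of_mul h))
      have ht : IsUnit (d - c * a' * b) := isUnit_sub_nonunit hD hnprod
      obtain ⟨ut, hut⟩ := ht
      obtain ⟨N, hEN, hNE⟩ := inv2 haa' ha'a
        (show (d - c * a' * b) * ↑ut⁻¹ = 1 by rw [← hut, Units.mul_inv])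
        (show (↑ut⁻¹ : R) * (d - c * a' * b) = 1 by rw [← hut, Units.inv_mul])
      have key : !![a, b; c, d] = (!![a, b; c, d] * !![a, b; c, d]) * N := by
        rw [mul_assoc, hEN, mul_one]
      rw [Matrix.mul_fin_two, hE, hEN] at key
      exact h1 key
    · -- a unit, d nonunit
      obtain ⟨ua, hua⟩ := hA
      set a' : R := ↑ua⁻¹ with ha'def
      have haa' : a * a' = 1 := by rw [ha'def, ← hua, Units.mul_inv]
      have ha'a : a' * a = 1 := by rw [ha'def, ← hua, Units.inv_mul]
      have hnprod : ¬ IsUnit (c * a' * b) := fun h =>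
        hc (isUnit_left_of_mul (isUnit_left_of_mul h))
      have ht : IsUnit ((1 - d) - -c * a' * b) := by
        have he : (1 - d) - -c * a' * b = (1 - d) - -(c * a' * b) := by noncomm_ring
        rw [he]
        exact isUnit_sub_nonunit (isUnit_one_sub hD) fun h => hnprod (by simpa using h.neg)
      obtain ⟨ut, hut⟩ := ht
      obtain ⟨N, hPN, hNP⟩ := inv2 haa' ha'a
        (show ((1-d) - -c * a' * b) * ↑ut⁻¹ = 1 by rw [← hut, Units.mul_inv])
        (show (↑ut⁻¹ : R) * ((1-d) - -c * a' * b) = 1 by rw [← hut, Units.inv_mul])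
      refine ⟨!![a, b; -c, 1-d], N, hPN, hNP, ?_⟩
      rw [Matrix.mul_fin_two, Matrix.mul_fin_two]
      apply mk_eq
      · simpa using h00
      · simpa using h01
      · have he : -c * a + (1-d) * c = c - (c * a + d * c) := by noncomm_ring
        rw [he, h10]; simp
      · have he : -c * b + (1-d) * d = d - (c * b + d * d) := by noncomm_ring
        rw [he, h11]; simp
    · -- a nonunit, d unit
      obtain ⟨ud, hud⟩ := hD
      set d' : R := ↑ud⁻¹ with hd'def
      have hdd' : d * d' = 1 := by rw [hd'def, ← hud, Units.mul_inv]
      have hd'd : d' * d = 1 := by rw [hd'def, ← hud, Units.inv_mul]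
      have hnprod : ¬ IsUnit (b * d' * c) := fun h =>
        hb (isUnit_left_of_mul (isUnit_left_of_mul h))
      have ht : IsUnit ((1 - a) - -b * d' * c) := by
        have he : (1 - a) - -b * d' * c = (1 - a) - -(b * d' * c) := by noncomm_ring
        rw [he]
        exact isUnit_sub_nonunit (isUnit_one_sub hA) fun h => hnprod (by simpa using h.neg)
      obtain ⟨ut, hut⟩ := ht
      obtain ⟨N, hMN, hNM⟩ := inv2 hdd' hd'd
        (show ((1-a) - -b * d' * c) * ↑ut⁻¹ = 1 by rw [← hut, Units.mul_inv])
        (show (↑ut⁻¹ : R) * ((1-a) - -b * d' * c) = 1 by rw [← hut, Units.inv_mul])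
      set P : Matrix (Fin 2) (Fin 2) R := !![c, d; 1-a, -b] with hPdef
      set S : Matrix (Fin 2) (Fin 2) R := !![(0:R), 1; 1, 0] with hSdef
      have hPS : P * S = !![d, c; -b, 1-a] := by
        rw [hPdef, hSdef, Matrix.mul_fin_two]
        apply mk_eq <;> noncomm_ring
      have hSS : S * S = 1 := by
        rw [hSdef, Matrix.mul_fin_two, Matrix.one_fin_two]
        apply mk_eq <;> noncomm_ring
      refine ⟨P, S * N, ?_, ?_, ?_⟩
      · rw [← mul_assoc, hPS, hMN]
      · calc S * N * P = (S * N * P) * (S * S) := by rw [hSS, mul_one]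
          _ = S * (N * (P * S)) * S := by noncomm_ring
          _ = 1 := by rw [hPS, hNM, mul_one, hSS]
      · rw [hPdef, Matrix.mul_fin_two, Matrix.mul_fin_two]
        apply mk_eq
        · simpa using h10
        · simpa using h11
        · have he : (1-a) * a + -b * c = a - (a * a + b * c) := by noncomm_ring
          rw [he, h00]; simp
        · have he : (1-a) * b + -b * d = b - (a * b + b * d) := by noncomm_ring
          rw [he, h01]; simp
    · -- a, d nonunits: E = 0, contradiction
      exfalso
      obtain ⟨ua, hua⟩ := isUnit_one_sub hA
      set a' : R := ↑ua⁻¹ with ha'def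
      have haa' : (1-a) * a' = 1 := by rw [ha'def, ← hua, Units.mul_inv]
      have ha'a : a' * (1-a) = 1 := by rw [ha'def, ← hua, Units.inv_mul]
      have hnprod : ¬ IsUnit (c * a' * b) := fun h =>
        hc (isUnit_left_of_mul (isUnit_left_of_mul h))
      have ht : IsUnit ((1 - d) - -c * a' * -b) := by
        have he : (1 - d) - -c * a' * -b = (1 - d) - c * a' * b := by noncomm_ring
        rw [he]
        exact isUnit_sub_nonunit (isUnit_one_sub hD) hnprod
      obtain ⟨ut, hut⟩ := ht
      obtain ⟨N, hFN, hNF⟩ := inv2 haa' ha'a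
        (show ((1-d) - -c * a' * -b) * ↑ut⁻¹ = 1 by rw [← hut, Units.mul_inv])
        (show (↑ut⁻¹ : R) * ((1-d) - -c * a' * -b) = 1 by rw [← hut, Units.inv_mul])
      have hEF : !![a, b; c, d] * !![1-a, -b; -c, 1-d] = 0 := by
        rw [Matrix.mul_fin_two]
        have z : (0 : Matrix (Fin 2) (Fin 2) R) = !![0, 0; 0, 0] := by
          ext i j; fin_cases i <;> fin_cases j <;> simp
        rw [z]
        apply mk_eq
        · have he : a * (1-a) + b * -c = a - (a * a + b * c) := by noncomm_ring
          rw [he, h00]; simp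
        · have he : a * -b + b * (1-d) = b - (a * b + b * d) := by noncomm_ring
          rw [he, h01]; simp
        · have he : c * (1-a) + d * -c = c - (c * a + d * c) := by noncomm_ring
          rw [he, h10]; simp
        · have he : c * -b + d * (1-d) = d - (c * b + d * d) := by noncomm_ring
          rw [he, h11]; simp
      have key : !![a, b; c, d] = (!![a, b; c, d] * !![1-a, -b; -c, 1-d]) * N := by
        rw [mul_assoc, hFN, mul_one]
      rw [hEF, zero_mul] at key
      exact h0 key

/-- The root extraction step. -/
lemma root_extract {w₀ w₁ p α : R} (hp : IsUnit p)
    (h : p * w₀ + α * p * (1 + w₁) = α * (α * p)) :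
    ∃ lam : R, lam ^ 2 - lam * (1 + w₁) - w₀ = 0 ∧
      (IsUnit lam ↔ IsUnit α) ∧ (IsUnit (lam - 1) ↔ IsUnit (α - 1)) := by
  obtain ⟨up, hup⟩ := hp
  set p' : R := ↑up⁻¹ with hp'def
  have hpp' : p * p' = 1 := by rw [hp'def, ← hup, Units.mul_inv]
  have hp'p : p' * p = 1 := by rw [hp'def, ← hup, Units.inv_mul]
  refine ⟨p' * α * p, ?_, isUnit_conj hpp' hp'p, ?_⟩
  · have e1 : p * (p' * α * p) = α * p := by
      calc p * (p' * α * p) = (p * p') * (α * p) := by noncomm_ring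
        _ = α * p := by rw [hpp', one_mul]
    have key : p * ((p' * α * p) ^ 2 - (p' * α * p) * (1 + w₁) - w₀) = 0 := by
      calc p * ((p' * α * p) ^ 2 - (p' * α * p) * (1 + w₁) - w₀)
          = (p * (p' * α * p)) * (p' * α * p) - (p * (p' * α * p)) * (1 + w₁) - p * w₀ := by
            rw [pow_two]; noncomm_ring
        _ = (α * p) * (p' * α * p) - (α * p) * (1 + w₁) - p * w₀ := by rw [e1]
        _ = α * (p * (p' * α * p)) - α * p * (1 + w₁) - p * w₀ := by noncomm_ring
        _ = α * (α * p) - α * p * (1 + w₁) - p * w₀ := by rw [e1]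
        _ = 0 := by rw [← h]; abel
    calc (p' * α * p) ^ 2 - (p' * α * p) * (1 + w₁) - w₀
        = (p' * p) * ((p' * α * p) ^ 2 - (p' * α * p) * (1 + w₁) - w₀) := by
          rw [hp'p, one_mul]
      _ = p' * (p * ((p' * α * p) ^ 2 - (p' * α * p) * (1 + w₁) - w₀)) := by rw [mul_assoc]
      _ = 0 := by rw [key, mul_zero]
  · have e2 : p' * α * p - 1 = p' * (α - 1) * p := by
      calc p' * α * p - 1 = p' * α * p - p' * p := by rw [hp'p]
        _ = p' * (α - 1) * p := by noncomm_ring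
    rw [e2]
    exact isUnit_conj hpp' hp'p

end CompanionSCAux

open CompanionSCAux

/-- Let `R` be a local ring (where `J(R)` is the set of nonunits), `w₀, w₁ ∈ J(R)` and
`h(t) = t² - (1+w₁)t - w₀` with companion matrix `C_h = [[0, w₀],[1, 1+w₁]]`. Then `C_h`
is strongly clean in `M₂(R)` iff `h` has a left root in `J(R)` and one in `1 + J(R)`. -/
theorem companion_stronglyClean_iff {R : Type*} [Ring R] [IsLocalRing R]
    (w₀ w₁ : R) (hw₀ : ¬ IsUnit w₀) (hw₁ : ¬ IsUnit w₁) :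
    IsStronglyClean !![0, w₀; 1, 1 + w₁] ↔
      (∃ lam : R, ¬ IsUnit lam ∧ lam ^ 2 - lam * (1 + w₁) - w₀ = 0) ∧
      (∃ lam : R, ¬ IsUnit (lam - 1) ∧ lam ^ 2 - lam * (1 + w₁) - w₀ = 0) := by
  set A : Matrix (Fin 2) (Fin 2) R := !![0, w₀; 1, 1 + w₁] with hAdef
  have hAnu : ∀ B : Matrix (Fin 2) (Fin 2) R, A * B = 1 → False := by
    intro B hB
    have h := congrFun (congrFun hB 0) 0
    simp [hAdef, Matrix.mul_apply, Fin.sum_univ_two, Matrix.one_apply] at h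
    exact hw₀ (unit_pair_of_mul_eq_one h).1
  have hA1nu : ∀ B : Matrix (Fin 2) (Fin 2) R, (A - 1) * B = 1 → False := by
    intro B hB
    have h1 := congrFun (congrFun hB 0) 0
    have h2 := congrFun (congrFun hB 1) 0
    simp [hAdef, Matrix.mul_apply, Fin.sum_univ_two, Matrix.one_apply, Matrix.sub_apply] at h1 h2
    have key : (w₀ + w₁) * B 1 0 = 1 := by
      have : (w₀ + w₁) * B 1 0 = (-(B 0 0) + w₀ * B 1 0) + (B 0 0 + w₁ * B 1 0) := by
        noncomm_ring
      rw [this, h1, h2]; abel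
    exact not_isUnit_add hw₀ hw₁ (unit_pair_of_mul_eq_one key).1
  constructor
  · rintro ⟨E, U, hIdem, hU, hAEU, hcom⟩
    have hEE : E * E = E := hIdem
    obtain ⟨u, hu⟩ := hU
    have hE0 : E ≠ 0 := by
      rintro rfl
      apply hAnu u⁻¹.val
      rw [hAEU, zero_add, ← hu, Units.mul_inv]
    have hE1 : E ≠ 1 := by
      rintro rfl
      apply hA1nu u⁻¹.val
      have : A - 1 = U := by rw [hAEU]; abel
      rw [this, ← hu, Units.mul_inv]
    obtain ⟨P, Q, hPQ, hQP, hPE⟩ := diag_idem hEE hE0 hE1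
    set D₀ : Matrix (Fin 2) (Fin 2) R := !![(1 : R), 0; 0, 0] with hD₀def
    have hAE : A * E = E * A := by
      rw [hAEU]
      calc (E + U) * E = E * E + U * E := by noncomm_ring
        _ = E * E + E * U := by rw [hcom]
        _ = E * (E + U) := by noncomm_ring
    have hEQ : E = Q * (D₀ * P) := by
      calc E = (Q * P) * E := by rw [hQP, one_mul]
        _ = Q * (P * E) := by rw [mul_assoc]
        _ = Q * (D₀ * P) := by rw [hPE]
    set B : Matrix (Fin 2) (Fin 2) R := P * A * Q with hBdef
    have hBD : B * D₀ = D₀ * B := by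
      calc B * D₀ = (P * A * Q) * D₀ * (P * Q) := by rw [hPQ, mul_one]
        _ = P * (A * (Q * (D₀ * P))) * Q := by noncomm_ring
        _ = P * (A * E) * Q := by rw [← hEQ]
        _ = P * (E * A) * Q := by rw [hAE]
        _ = P * ((Q * (D₀ * P)) * A) * Q := by rw [← hEQ]
        _ = (P * Q) * (D₀ * (P * A * Q)) := by noncomm_ring
        _ = D₀ * B := by rw [hPQ, one_mul]
    have hB01 : B 0 1 = 0 := by
      have h := congrFun (congrFun hBD 0) 1
      simpa [hD₀def, Matrix.mul_apply, Fin.sum_univ_two] using h.symm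
    have hB10 : B 1 0 = 0 := by
      have h := congrFun (congrFun hBD 1) 0
      simpa [hD₀def, Matrix.mul_apply, Fin.sum_univ_two] using h
    set α : R := B 0 0 with hαdef
    set δ : R := B 1 1 with hδdef
    have hB : B = !![α, 0; 0, δ] := by
      have h2 : B = !![B 0 0, B 0 1; B 1 0, B 1 1] := (Matrix.etaExpand_eq B).symm
      rwa [hB01, hB10, ← hαdef, ← hδdef] at h2
    -- W = P U Q = B - D₀ has diagonal entries α - 1 and δ, both units
    have hUAE : U = A - E := by rw [hAEU]; abel
    have hW : P * U * Q = B - D₀ := by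
      rw [hUAE]
      calc P * (A - E) * Q = P * A * Q - P * E * Q := by noncomm_ring
        _ = B - D₀ * (P * Q) := by rw [← hBdef, hPE, mul_assoc]
        _ = B - D₀ := by rw [hPQ, mul_one]
    have hWX : (B - D₀) * (P * u⁻¹.val * Q) = 1 := by
      rw [← hW]
      calc (P * U * Q) * (P * u⁻¹.val * Q)
          = P * (U * ((Q * P) * (u⁻¹.val * Q))) := by noncomm_ring
        _ = P * ((U * u⁻¹.val) * Q) := by
            rw [hQP, one_mul]; noncomm_ring
        _ = P * Q := by rw [← hu, Units.mul_inv, one_mul]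
        _ = 1 := hPQ
    obtain ⟨X, hWX'⟩ : ∃ X : Matrix (Fin 2) (Fin 2) R, !![α - 1, 0; 0, δ] * X = 1 := by
      refine ⟨P * u⁻¹.val * Q, ?_⟩
      have hBD0 : !![α - 1, 0; 0, δ] = B - D₀ := by
        rw [hB, hD₀def]
        ext i j
        fin_cases i <;> fin_cases j <;> simp
      rw [hBD0]
      exact hWX
    have hα1 : IsUnit (α - 1) := by
      have h := congrFun (congrFun hWX' 0) 0
      simp [Matrix.mul_apply, Fin.sum_univ_two, Matrix.one_apply] at h
      exact (unit_pair_of_mul_eq_one h).1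
    have hδu : IsUnit δ := by
      have h := congrFun (congrFun hWX' 1) 1
      simp [Matrix.mul_apply, Fin.sum_univ_two, Matrix.one_apply] at h
      exact (unit_pair_of_mul_eq_one h).1
    have hAQBP : A = Q * B * P := by
      calc A = (Q * P) * A * (Q * P) := by rw [hQP, one_mul, mul_one]
        _ = Q * (P * A * Q) * P := by noncomm_ring
        _ = Q * B * P := by rw [← hBdef]
    have hαnu : ¬ IsUnit α := by
      intro hαu
      obtain ⟨uα, huα⟩ := hαu
      obtain ⟨uδ, huδ⟩ := hδu
      apply hAnu (Q * !![(↑uα⁻¹ : R), 0; 0, ↑uδ⁻¹] * P)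
      have hdiag : B * !![(↑uα⁻¹ : R), 0; 0, ↑uδ⁻¹] = 1 := by
        rw [hB, Matrix.mul_fin_two, Matrix.one_fin_two]
        apply mk_eq
        · rw [← huα, Units.mul_inv]; simp
        · simp
        · simp
        · rw [← huδ, Units.mul_inv]; simp
      calc A * (Q * !![(↑uα⁻¹ : R), 0; 0, ↑uδ⁻¹] * P)
          = Q * (B * ((P * Q) * (!![(↑uα⁻¹ : R), 0; 0, ↑uδ⁻¹] * P))) := by
            rw [hAQBP]; noncomm_ring
        _ = Q * ((B * !![(↑uα⁻¹ : R), 0; 0, ↑uδ⁻¹]) * P) := by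
            rw [hPQ, one_mul]; noncomm_ring
        _ = 1 := by rw [hdiag, one_mul, hQP]
    have hδ1nu : ¬ IsUnit (δ - 1) := by
      intro hδ1
      obtain ⟨uα, huα⟩ := hα1
      obtain ⟨uδ, huδ⟩ := hδ1
      apply hA1nu (Q * !![(↑uα⁻¹ : R), 0; 0, ↑uδ⁻¹] * P)
      have hA1 : A - 1 = Q * (B - 1) * P := by
        calc A - 1 = Q * B * P - Q * P := by rw [← hAQBP, hQP]
          _ = Q * (B - 1) * P := by noncomm_ring
      have hB1 : B - 1 = !![α - 1, 0; 0, δ - 1] := by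
        rw [hB, Matrix.one_fin_two]
        ext i j
        fin_cases i <;> fin_cases j <;> simp
      have hdiag : (B - 1) * !![(↑uα⁻¹ : R), 0; 0, ↑uδ⁻¹] = 1 := by
        rw [hB1, Matrix.mul_fin_two, Matrix.one_fin_two]
        apply mk_eq
        · rw [← huα, Units.mul_inv]; simp
        · simp
        · simp
        · rw [← huδ, Units.mul_inv]; simp
      calc (A - 1) * (Q * !![(↑uα⁻¹ : R), 0; 0, ↑uδ⁻¹] * P)
          = Q * ((B - 1) * ((P * Q) * (!![(↑uα⁻¹ : R), 0; 0, ↑uδ⁻¹] * P))) := by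
            rw [hA1]; noncomm_ring
        _ = Q * (((B - 1) * !![(↑uα⁻¹ : R), 0; 0, ↑uδ⁻¹]) * P) := by
            rw [hPQ, one_mul]; noncomm_ring
        _ = 1 := by rw [hdiag, one_mul, hQP]
    -- rows of P are left eigenvectors
    have hPA : P * A = B * P := by
      calc P * A = P * (Q * B * P) := by rw [← hAQBP]
        _ = (P * Q) * (B * P) := by noncomm_ring
        _ = B * P := by rw [hPQ, one_mul]
    have e00 := congrFun (congrFun hPA 0) 0
    have e01 := congrFun (congrFun hPA 0) 1
    have e10 := congrFun (congrFun hPA 1) 0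
    have e11 := congrFun (congrFun hPA 1) 1
    rw [hB] at e00 e01 e10 e11
    simp [hAdef, Matrix.mul_apply, Fin.sum_univ_two] at e00 e01 e10 e11
    -- e00 : P 0 1 = α * P 0 0, e01 : P 0 0 * w₀ + P 0 1 * (1 + w₁) = α * P 0 1
    -- e10 : P 1 1 = δ * P 1 0, e11 : P 1 0 * w₀ + P 1 1 * (1 + w₁) = δ * P 1 1
    constructor
    · -- root in J from row 0
      have hq : ¬ IsUnit (P 0 1) := by
        rw [e00]; exact fun h => hαnu (isUnit_left_of_mul h)
      have hp : IsUnit (P 0 0) := by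
        by_contra hp
        have h := congrFun (congrFun hPQ 0) 0
        simp [Matrix.mul_apply, Fin.sum_univ_two, Matrix.one_apply] at h
        have h1 : ¬ IsUnit (P 0 0 * Q 0 0) := fun hh => hp (isUnit_left_of_mul hh)
        have h2 : ¬ IsUnit (P 0 1 * Q 1 0) := fun hh => hq (isUnit_left_of_mul hh)
        exact not_isUnit_add h1 h2 (h ▸ isUnit_one)
      have hrel : P 0 0 * w₀ + α * P 0 0 * (1 + w₁) = α * (α * P 0 0) := by
        rw [e00] at e01; exact e01
      obtain ⟨lam, hroot, hiff, _⟩ := root_extract hp hrel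
      exact ⟨lam, fun h => hαnu (hiff.mp h), hroot⟩
    · -- root in 1 + J from row 1
      have hδiu : IsUnit δ := hδu
      have hs : IsUnit (P 1 1) ↔ IsUnit (P 1 0) := by
        rw [e10]
        exact ⟨fun h => isUnit_right_of_mul h, fun h => hδiu.mul h⟩
      have hr : IsUnit (P 1 0) := by
        by_contra hr
        have h := congrFun (congrFun hPQ 1) 1
        simp [Matrix.mul_apply, Fin.sum_univ_two, Matrix.one_apply] at h
        have h1 : ¬ IsUnit (P 1 0 * Q 0 1) := fun hh => hr (isUnit_left_of_mul hh)
        have h2 : ¬ IsUnit (P 1 1 * Q 1 1) := fun hh => hr (hs.mp (isUnit_left_of_mul hh))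
        exact not_isUnit_add h1 h2 (h ▸ isUnit_one)
      have hrel : P 1 0 * w₀ + δ * P 1 0 * (1 + w₁) = δ * (δ * P 1 0) := by
        rw [e10] at e11; exact e11
      obtain ⟨lam, hroot, _, hiff1⟩ := root_extract hr hrel
      exact ⟨lam, fun h => hδ1nu (hiff1.mp h), hroot⟩
  · rintro ⟨⟨l, hl, hlr⟩, m, hm1, hmr⟩
    have hul : IsUnit (l - 1) := isUnit_sub_one hl
    have hum : IsUnit m := isUnit_of_sub_one_not_isUnit hm1
    have hδ : IsUnit (m - l) := by
      have he : m - l = (m - 1) + (1 - l) := by abel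
      rw [he]
      exact isUnit_add_unit hm1 (isUnit_one_sub hl)
    obtain ⟨uv, huv⟩ := hδ
    set v : R := ↑uv⁻¹ with hvdef
    have hδv : (m - l) * v = 1 := by rw [hvdef, ← huv, Units.mul_inv]
    have hvδ : v * (m - l) = 1 := by rw [hvdef, ← huv, Units.inv_mul]
    set P : Matrix (Fin 2) (Fin 2) R := !![1, l; 1, m] with hPdef
    set Q : Matrix (Fin 2) (Fin 2) R := !![1 + l * v, -(l * v); -v, v] with hQdef
    have hPQ : P * Q = 1 := by
      rw [hPdef, hQdef, Matrix.mul_fin_two, Matrix.one_fin_two]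
      apply mk_eq
      · noncomm_ring
      · noncomm_ring
      · have he : 1 * (1 + l * v) + m * (-v) = 1 - (m - l) * v := by noncomm_ring
        rw [he, hδv, sub_self]
      · have he : 1 * (-(l * v)) + m * v = (m - l) * v := by noncomm_ring
        rw [he, hδv]
    have hQP : Q * P = 1 := by
      rw [hPdef, hQdef, Matrix.mul_fin_two, Matrix.one_fin_two]
      apply mk_eq
      · noncomm_ring
      · have he : (1 + l * v) * l + -(l * v) * m = l - l * (v * (m - l)) := by noncomm_ring
        rw [he, hvδ, mul_one, sub_self]
      · noncomm_ring
      · have he : -v * l + v * m = v * (m - l) := by noncomm_ring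
        rw [he, hvδ]
    set D : Matrix (Fin 2) (Fin 2) R := !![l, 0; 0, m] with hDdef
    have hPA : P * A = D * P := by
      rw [hPdef, hDdef, hAdef, Matrix.mul_fin_two, Matrix.mul_fin_two]
      apply mk_eq
      · noncomm_ring
      · have he : 1 * w₀ + l * (1 + w₁) - (l * l + 0 * m)
            = -(l ^ 2 - l * (1 + w₁) - w₀) := by noncomm_ring
        rw [hlr, neg_zero] at he
        exact sub_eq_zero.mp he
      · noncomm_ring
      · have he : 1 * w₀ + m * (1 + w₁) - (0 * l + m * m)
            = -(m ^ 2 - m * (1 + w₁) - w₀) := by noncomm_ring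
        rw [hmr, neg_zero] at he
        exact sub_eq_zero.mp he
    have hA : A = Q * D * P := by
      calc A = (Q * P) * A := by rw [hQP, one_mul]
        _ = Q * (P * A) := by rw [mul_assoc]
        _ = Q * (D * P) := by rw [hPA]
        _ = Q * D * P := by rw [mul_assoc]
    have conj : ∀ X Y : Matrix (Fin 2) (Fin 2) R,
        (Q * X * P) * (Q * Y * P) = Q * (X * Y) * P := by
      intro X Y
      calc (Q * X * P) * (Q * Y * P) = Q * (X * ((P * Q) * (Y * P))) := by noncomm_ring
        _ = Q * (X * Y) * P := by rw [hPQ, one_mul, ← mul_assoc, ← mul_assoc, mul_assoc Q X Y]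
    refine ⟨Q * !![(1 : R), 0; 0, 0] * P, Q * !![l - 1, 0; 0, m] * P, ?_, ?_, ?_, ?_⟩
    · show _ * _ = _
      rw [conj]
      congr 2
      rw [Matrix.mul_fin_two]
      apply mk_eq <;> simp
    · obtain ⟨u1, hu1⟩ := hul
      obtain ⟨u2, hu2⟩ := hum
      refine isUnit_iff_exists.mpr ⟨Q * !![(↑u1⁻¹ : R), 0; 0, ↑u2⁻¹] * P, ?_, ?_⟩
      · rw [conj]
        have hd : !![l - 1, 0; 0, m] * !![(↑u1⁻¹ : R), 0; 0, ↑u2⁻¹] = 1 := by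
          rw [Matrix.mul_fin_two, Matrix.one_fin_two]
          apply mk_eq
          · rw [← hu1, Units.mul_inv]; simp
          · simp
          · simp
          · rw [← hu2, Units.mul_inv]; simp
        rw [hd, mul_one, hQP]
      · rw [conj]
        have hd : !![(↑u1⁻¹ : R), 0; 0, ↑u2⁻¹] * !![l - 1, 0; 0, m] = 1 := by
          rw [Matrix.mul_fin_two, Matrix.one_fin_two]
          apply mk_eq
          · rw [← hu1, Units.inv_mul]; simp
          · simp
          · simp
          · rw [← hu2, Units.inv_mul]; simp
        rw [hd, mul_one, hQP]
    · rw [hA]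
      have hsplit : (D : Matrix (Fin 2) (Fin 2) R)
          = !![(1 : R), 0; 0, 0] + !![l - 1, 0; 0, m] := by
        rw [hDdef]
        ext i j
        fin_cases i <;> fin_cases j <;> simp
      rw [hsplit]
      noncomm_ring
    · rw [conj, conj]
      have hd1 : !![(1 : R), 0; 0, 0] * !![l - 1, 0; 0, m] = !![l - 1, 0; 0, 0] := by
        rw [Matrix.mul_fin_two]; apply mk_eq <;> simp
      have hd2 : !![l - 1, 0; 0, m] * !![(1 : R), 0; 0, 0] = !![l - 1, 0; 0, 0] := by
        rw [Matrix.mul_fin_two]; apply mk_eq <;> simp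
      rw [hd1, hd2]
end

section
/- For a local ring R, the matrix ring M₂(R) is strongly clean if and only if for all w₀, w₁ ∈ J(R) the polynomial t² - (1+w₁)t - w₀ has a left root λ ∈ J(R) (i.e., λ² - λ(1+w₁) - w₀ = 0). -/
set_option linter.unusedSectionVars false
set_option maxHeartbeats 1600000

namespace SCAux
open Matrix

section Ring
variable {R : Type*} [Ring R]

local notation "M2" => Matrix (Fin 2) (Fin 2) R

lemma exists_inv {a : R} (ha : IsUnit a) : ∃ a', a * a' = 1 ∧ a' * a = 1 := by
  exact ⟨↑ha.unit⁻¹, ha.mul_val_inv, ha.val_inv_mul⟩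

lemma mat2_ext {a b c d a' b' c' d' : R} (h1 : a = a') (h2 : b = b') (h3 : c = c')
    (h4 : d = d') : !![a,b;c,d] = !![a',b';c',d'] := by rw [h1, h2, h3, h4]

lemma add2 (a b c d a' b' c' d' : R) :
    !![a,b;c,d] + !![a',b';c',d'] = !![a+a', b+b'; c+c', d+d'] := by
  ext i j; fin_cases i <;> fin_cases j <;> simp [Matrix.add_apply]

lemma sub2 (a b c d a' b' c' d' : R) :
    !![a,b;c,d] - !![a',b';c',d'] = !![a-a', b-b'; c-c', d-d'] := by
  ext i j; fin_cases i <;> fin_cases j <;> simp [Matrix.sub_apply]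

lemma one2 : (1 : M2) = !![1,0;0,1] := Matrix.one_fin_two

lemma unit_of_inv (A B : M2) (h1 : A * B = 1) (h2 : B * A = 1) :
    IsUnit A := ⟨⟨A, B, h1, h2⟩, rfl⟩

lemma mat_inv {A : M2} (h : IsUnit A) : ∃ B : M2, A * B = 1 ∧ B * A = 1 := by
  obtain ⟨Xu, hXu⟩ := h
  refine ⟨Units.val (Xu⁻¹), ?_, ?_⟩
  · rw [← hXu]; exact Xu.mul_inv
  · rw [← hXu]; exact Xu.inv_mul

lemma unit2_of_schur (a b c d a' s' : R) (haa' : a * a' = 1) (ha'a : a' * a = 1)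
    (hss' : (d - c * (a' * b)) * s' = 1) (hs's : s' * (d - c * (a' * b)) = 1) :
    IsUnit !![a, b; c, d] := by
  set s := d - c * (a' * b) with hs
  have hd : d = s + c * (a' * b) := by rw [hs]; abel
  apply unit_of_inv _ !![a' + a' * (b * (s' * (c * a'))), -(a' * (b * s'));
    -(s' * (c * a')), s']
  · rw [mul_fin_two, hd]
    ext i j; fin_cases i <;> fin_cases j <;> simp only [cons_val', cons_val_zero, cons_val_one,
      head_cons, head_fin_const, empty_val', cons_val_fin_one, one_apply, Matrix.one_fin_two]
    · calc a * (a' + a' * (b * (s' * (c * a')))) + b * -(s' * (c * a'))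
          = (a * a') + ((a * a') * (b * (s' * (c*a'))) - b * (s' * (c * a'))) := by noncomm_ring
        _ = 1 := by rw [haa']; noncomm_ring
    · calc a * -(a' * (b * s')) + b * s' = -((a * a') * (b * s')) + b * s' := by noncomm_ring
        _ = 0 := by rw [haa']; noncomm_ring
    · calc c * (a' + a' * (b * (s' * (c * a')))) + (s + c * (a' * b)) * -(s' * (c * a'))
          = c * a' + c * (a' * b) * (s' * (c * a')) - (s * s') * (c * a')
            - c * (a' * b) * (s' * (c * a')) := by noncomm_ring
        _ = 0 := by rw [hss']; noncomm_ring
    · calc c * -(a' * (b * s')) + (s + c * (a' * b)) * s'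
          = s * s' := by noncomm_ring
        _ = 1 := hss'
  · rw [mul_fin_two, hd]
    ext i j; fin_cases i <;> fin_cases j <;> simp only [cons_val', cons_val_zero, cons_val_one,
      head_cons, head_fin_const, empty_val', cons_val_fin_one, one_apply, Matrix.one_fin_two]
    · calc (a' + a' * (b * (s' * (c * a')))) * a + -(a' * (b * s')) * c
          = a' * a + a' * (b * (s' * (c * (a' * a)))) - a' * (b * (s' * c)) := by noncomm_ring
        _ = 1 := by rw [ha'a]; noncomm_ring
    · calc (a' + a' * (b * (s' * (c * a')))) * b + -(a' * (b * s')) * (s + c * (a' * b))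
          = a' * b + a' * (b * (s' * (c * (a' * b)))) - a' * (b * ((s' * s)))
            - a' * (b * (s' * (c * (a' * b)))) := by noncomm_ring
        _ = 0 := by rw [hs's]; noncomm_ring
    · calc -(s' * (c * a')) * a + s' * c = -(s' * (c * (a' * a))) + s' * c := by noncomm_ring
        _ = 0 := by rw [ha'a]; noncomm_ring
    · calc -(s' * (c * a')) * b + s' * (s + c * (a' * b))
          = s' * s + (s' * (c * (a' * b)) - s' * (c * (a' * b))) := by noncomm_ring
        _ = 1 := by rw [hs's]; noncomm_ring

lemma unit2 (a b c d a' : R) (haa' : a * a' = 1) (ha'a : a' * a = 1)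
    (hs : IsUnit (d - c * (a' * b))) : IsUnit !![a, b; c, d] := by
  obtain ⟨s', hss', hs's⟩ := exists_inv hs
  exact unit2_of_schur a b c d a' s' haa' ha'a hss' hs's

lemma swap_unit : IsUnit !![(0:R), 1; 1, 0] := by
  apply unit_of_inv _ !![(0:R), 1; 1, 0] <;>
    · rw [mul_fin_two]; rw [Matrix.one_fin_two]; norm_num

lemma unit_swap_iff (a b c d : R) : IsUnit !![a, b; c, d] ↔ IsUnit !![b, a; d, c] := by
  have key : ∀ x y z w : R, !![x, y; z, w] * !![(0:R),1;1,0] = !![y, x; w, z] := by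
    intro x y z w; rw [mul_fin_two]; norm_num
  constructor
  · intro h; have := h.mul swap_unit; rwa [key] at this
  · intro h; have := h.mul swap_unit; rwa [key] at this

lemma unit2_col (a b c d b' : R) (hbb' : b * b' = 1) (hb'b : b' * b = 1)
    (hs : IsUnit (c - d * (b' * a))) : IsUnit !![a, b; c, d] := by
  rw [unit_swap_iff]
  exact unit2 b a d c b' hbb' hb'b hs

lemma diag_unit (p q : R) (hp : IsUnit p) (hq : IsUnit q) : IsUnit !![p, (0:R); 0, q] := by
  obtain ⟨p', h1, h2⟩ := exists_inv hp
  apply unit2 p 0 0 q p' h1 h2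
  simpa using hq

lemma conj_mul_s10 {Q Qi : M2} (hQQi : Q * Qi = 1) (X Y : M2) :
    (Qi * X * Q) * (Qi * Y * Q) = Qi * (X * Y) * Q := by
  have h : ∀ Z : M2, Q * (Qi * Z) = Z := fun Z => by rw [← mul_assoc, hQQi, one_mul]
  calc (Qi * X * Q) * (Qi * Y * Q) = Qi * X * (Q * (Qi * (Y * Q))) := by simp [mul_assoc]
    _ = Qi * X * (Y * Q) := by rw [h]
    _ = Qi * (X * Y) * Q := by simp [mul_assoc]

lemma conj_isUnit {Q Qi : M2} (hQQi : Q * Qi = 1) (hQiQ : Qi * Q = 1) {X : M2}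
    (h : IsUnit X) : IsUnit (Qi * X * Q) := by
  obtain ⟨Xu, hXu⟩ := h
  set Xi : M2 := Units.val (Xu⁻¹) with hXi
  have h1 : X * Xi = 1 := by rw [← hXu, hXi]; exact Xu.mul_inv
  have h2 : Xi * X = 1 := by rw [← hXu, hXi]; exact Xu.inv_mul
  refine ⟨⟨Qi * X * Q, Qi * Xi * Q, ?_, ?_⟩, rfl⟩
  · rw [conj_mul_s10 hQQi, h1]
    calc Qi * 1 * Q = Qi * Q := by rw [mul_one]
      _ = 1 := hQiQ
  · rw [conj_mul_s10 hQQi, h2]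
    calc Qi * 1 * Q = Qi * Q := by rw [mul_one]
      _ = 1 := hQiQ

lemma eq_conj {Q Qi : M2} (hQiQ : Qi * Q = 1) {X Y : M2} (h : Q * X = Y * Q) :
    X = Qi * Y * Q := by
  calc X = Qi * (Q * X) := by rw [← mul_assoc, hQiQ, one_mul]
    _ = Qi * (Y * Q) := by rw [h]
    _ = Qi * Y * Q := by rw [mul_assoc]

lemma clean_conj {P Pi : M2} (hP1 : P * Pi = 1) (hP2 : Pi * P = 1) {C : M2}
    (h : IsStronglyClean C) : IsStronglyClean (P * C * Pi) := by
  obtain ⟨e, u, he, hu, hsum, hcomm⟩ := h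
  refine ⟨P * e * Pi, P * u * Pi, ?_, conj_isUnit hP2 hP1 hu, ?_, ?_⟩
  · show _ * _ = _
    rw [conj_mul_s10 hP2, he.eq]
  · rw [hsum]
    noncomm_ring
  · rw [conj_mul_s10 hP2, conj_mul_s10 hP2, hcomm]

end Ring

section Local
variable {R : Type*} [Ring R] [IsLocalRing R]

local notation "M2" => Matrix (Fin 2) (Fin 2) R

lemma unit_or {a b : R} (h : a + b = 1) : IsUnit a ∨ IsUnit b :=
  IsLocalRing.isUnit_or_isUnit_of_add_one h

lemma unit_one_sub {a : R} (h : ¬IsUnit a) : IsUnit (1 - a) := by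
  rcases unit_or (a := a) (b := 1 - a) (by abel) with h' | h'
  · exact absurd h' h
  · exact h'

lemma unit_sub_one {a : R} (h : ¬IsUnit a) : IsUnit (a - 1) := by
  have := (unit_one_sub h).neg; rwa [neg_sub] at this

lemma idem_zero_or_one {e : R} (h : e * e = e) : e = 0 ∨ e = 1 := by
  rcases unit_or (a := e) (b := 1 - e) (by abel) with h' | h'
  · right; exact h'.mul_left_cancel (by rw [h, mul_one])
  · left
    have h0 : (1 - e) * e = (1 - e) * 0 := by rw [sub_mul, one_mul, h, mul_zero, sub_self]
    exact h'.mul_left_cancel h0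

lemma unit_of_mul_eq_one_left {a b : R} (h : a * b = 1) : IsUnit a := by
  have hidem : (b * a) * (b * a) = b * a := by
    calc (b * a) * (b * a) = b * (a * b) * a := by noncomm_ring
    _ = b * a := by rw [h, mul_one]
  rcases idem_zero_or_one hidem with h0 | h1
  · exfalso
    have : a = 0 := by
      calc a = (a * b) * a := by rw [h, one_mul]
      _ = a * (b * a) := by rw [mul_assoc]
      _ = 0 := by rw [h0, mul_zero]
    rw [this, zero_mul] at h
    exact one_ne_zero h.symm
  · exact ⟨⟨a, b, h, h1⟩, rfl⟩

lemma unit_of_mul_eq_one_right {a b : R} (h : a * b = 1) : IsUnit b := by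
  have hidem : (a * b) * (a * b) = a * b := by rw [h, one_mul]
  rcases idem_zero_or_one hidem with h0 | _
  · rw [h] at h0; exact absurd h0 one_ne_zero
  · have hba : b * a = 1 := by
      have ha := unit_of_mul_eq_one_left h
      rcases ha with ⟨u, rfl⟩
      have : b = (u⁻¹ : Rˣ) := by
        calc (b : R) = (u⁻¹ : Rˣ) * (u * b) := by rw [← mul_assoc, Units.inv_mul, one_mul]
        _ = (u⁻¹ : Rˣ) := by rw [h, mul_one]
      rw [this, Units.inv_mul]
    exact ⟨⟨b, a, hba, h⟩, rfl⟩

lemma nonunit_mul_right {a : R} (h : ¬IsUnit a) (b : R) : ¬IsUnit (a * b) := by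
  intro hab
  rcases hab with ⟨u, hu⟩
  apply h
  apply unit_of_mul_eq_one_left (b := b * (u⁻¹ : Rˣ))
  rw [← mul_assoc, ← hu, Units.mul_inv]

lemma nonunit_mul_left {a : R} (h : ¬IsUnit a) (b : R) : ¬IsUnit (b * a) := by
  intro hab
  rcases hab with ⟨u, hu⟩
  apply h
  apply unit_of_mul_eq_one_right (a := (u⁻¹ : Rˣ) * b)
  rw [mul_assoc, ← hu, Units.inv_mul]

lemma nonunit_add {a b : R} (ha : ¬IsUnit a) (hb : ¬IsUnit b) : ¬IsUnit (a + b) := by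
  rintro ⟨u, hu⟩
  have h1 : (u⁻¹ : Rˣ) * a + (u⁻¹ : Rˣ) * b = 1 := by
    rw [← mul_add, ← hu, Units.inv_mul]
  rcases unit_or h1 with h' | h'
  · exact ha (by simpa using (u.isUnit.mul h'))
  · exact hb (by simpa using (u.isUnit.mul h'))

lemma nonunit_neg {a : R} (ha : ¬IsUnit a) : ¬IsUnit (-a) := fun h => ha (by simpa using h.neg)

lemma unit_add_nonunit {a b : R} (ha : IsUnit a) (hb : ¬IsUnit b) : IsUnit (a + b) := by
  by_contra h
  have h2 := nonunit_add h (nonunit_neg hb)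
  simp only [add_neg_cancel_right] at h2
  exact h2 ha

lemma unit_sub_nonunit {a b : R} (ha : IsUnit a) (hb : ¬IsUnit b) : IsUnit (a - b) := by
  rw [sub_eq_add_neg]; exact unit_add_nonunit ha (nonunit_neg hb)

lemma unit_extract_01 {α β : R} (h : IsUnit !![(0:R), α; 1, β]) : IsUnit α := by
  obtain ⟨B, h1, h2⟩ := mat_inv h
  have h00 := congrFun (congrFun h1 0) 0
  simp [Matrix.mul_apply, Fin.sum_univ_two, Matrix.one_apply] at h00
  exact unit_of_mul_eq_one_left h00

lemma unit_extract_tri {x y γ : R} (h : IsUnit !![x, y; (0:R), γ]) : IsUnit γ := by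
  obtain ⟨B, h1, h2⟩ := mat_inv h
  have h11 := congrFun (congrFun h1 1) 1
  simp [Matrix.mul_apply, Fin.sum_univ_two, Matrix.one_apply] at h11
  exact unit_of_mul_eq_one_left h11

lemma unit_extract_diag {p q : R} (h : IsUnit !![p, (0:R); 0, q]) :
    IsUnit p ∧ IsUnit q := by
  obtain ⟨B, h1, h2⟩ := mat_inv h
  have h00 := congrFun (congrFun h1 0) 0
  have h11 := congrFun (congrFun h1 1) 1
  simp [Matrix.mul_apply, Fin.sum_univ_two, Matrix.one_apply] at h00 h11
  exact ⟨unit_of_mul_eq_one_left h00, unit_of_mul_eq_one_left h11⟩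

lemma one_sub_entries_unit (N : M2) (h : ∀ i j, ¬IsUnit (N i j)) : IsUnit ((1 : M2) - N) := by
  have e : (1 : M2) - N = !![1 - N 0 0, 0 - N 0 1; 0 - N 1 0, 1 - N 1 1] := by
    conv_lhs => rw [eta_fin_two N, one2, sub2]
  rw [e]
  obtain ⟨a', h1, h2⟩ := exists_inv (unit_one_sub (h 0 0))
  apply unit2 _ _ _ _ a' h1 h2
  have e2 : (1 - N 1 1) - (0 - N 1 0) * (a' * (0 - N 0 1))
      = (1 - N 1 1) - (N 1 0) * (a' * (N 0 1)) := by noncomm_ring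
  rw [e2]
  exact unit_sub_nonunit (unit_one_sub (h 1 1)) (nonunit_mul_right (h 1 0) _)

lemma idem_structure (E : M2) (hE : E * E = E) (hE0 : E ≠ 0) (hE1 : E ≠ 1) :
    ∃ P Pi : M2, P * Pi = 1 ∧ Pi * P = 1 ∧ P * E = !![(1:R),0;0,0] * P := by
  set F : M2 := 1 - E with hF
  have hFE : F * E = 0 := by rw [hF, sub_mul, one_mul, hE, sub_self]
  -- some entry of E is a unit
  have hEex : ∃ j : Fin 2, IsUnit (E 0 j) ∨ IsUnit (E 1 j) := by
    by_contra hcon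
    push_neg at hcon
    have hall : ∀ i j, ¬IsUnit (E i j) := by
      intro i j; fin_cases i
      · exact (hcon j).1
      · exact (hcon j).2
    obtain ⟨W, hW1, hW2⟩ := mat_inv (one_sub_entries_unit E hall)
    apply hE0
    calc E = E * (((1:M2) - E) * W) := by rw [hW1, mul_one]
      _ = (E * ((1:M2) - E)) * W := by rw [mul_assoc]
      _ = 0 := by rw [mul_sub, mul_one, hE, sub_self, zero_mul]
  have hFex : ∃ j : Fin 2, IsUnit (F 0 j) ∨ IsUnit (F 1 j) := by
    by_contra hcon
    push_neg at hcon
    have hall : ∀ i j, ¬IsUnit (F i j) := by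
      intro i j; fin_cases i
      · exact (hcon j).1
      · exact (hcon j).2
    have hEu : IsUnit E := by
      have := one_sub_entries_unit F hall
      rwa [hF, sub_sub_cancel] at this
    obtain ⟨B, hB1, hB2⟩ := mat_inv hEu
    apply hE1
    calc E = (E * E) * B := by rw [mul_assoc, hB1, mul_one]
      _ = E * B := by rw [hE]
      _ = 1 := hB1
  obtain ⟨j₀, hj₀⟩ := hEex
  obtain ⟨j₁, hj₁⟩ := hFex
  -- pick the row of E (resp. F) containing a unit entry
  obtain ⟨i₀, hvu⟩ : ∃ i, IsUnit (E i j₀) := by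
    rcases hj₀ with h | h
    exacts [⟨0, h⟩, ⟨1, h⟩]
  obtain ⟨i₁, hwu⟩ : ∃ i, IsUnit (F i j₁) := by
    rcases hj₁ with h | h
    exacts [⟨0, h⟩, ⟨1, h⟩]
  set v0 := E i₀ 0; set v1 := E i₀ 1
  set w0 := F i₁ 0; set w1 := F i₁ 1
  set e1 := E 0 0; set e2 := E 0 1; set e3 := E 1 0; set e4 := E 1 1
  have hv0e : v0 * e1 + v1 * e3 = v0 := by
    have := congrFun (congrFun hE i₀) 0
    simpa [Matrix.mul_apply, Fin.sum_univ_two] using this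
  have hv1e : v0 * e2 + v1 * e4 = v1 := by
    have := congrFun (congrFun hE i₀) 1
    simpa [Matrix.mul_apply, Fin.sum_univ_two] using this
  have hw0e : w0 * e1 + w1 * e3 = 0 := by
    have := congrFun (congrFun hFE i₁) 0
    simpa [Matrix.mul_apply, Fin.sum_univ_two] using this
  have hw1e : w0 * e2 + w1 * e4 = 0 := by
    have := congrFun (congrFun hFE i₁) 1
    simpa [Matrix.mul_apply, Fin.sum_univ_two] using this
  have hwu' : IsUnit w0 ∨ IsUnit w1 := by
    fin_cases j₁
    exacts [Or.inl hwu, Or.inr hwu]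
  -- P is a unit
  have hPu : IsUnit !![v0, v1; w0, w1] := by
    have hvu' : IsUnit v0 ∨ IsUnit v1 := by
      fin_cases j₀
      exacts [Or.inl hvu, Or.inr hvu]
    rcases hvu' with hv | hv
    · obtain ⟨v0', h1, h2⟩ := exists_inv hv
      have hs : IsUnit (w1 - w0 * (v0' * v1)) := by
        by_contra hs
        set s := w1 - w0 * (v0' * v1) with hsdef
        have hw1e3 : w1 * e3 = -(w0 * e1) := by
          rw [eq_neg_iff_add_eq_zero, add_comm]; exact hw0e
        have hv1e3 : v1 * e3 = v0 - v0 * e1 := by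
          rw [eq_sub_iff_add_eq, add_comm]; exact hv0e
        have key1 : s * e3 = -w0 := by
          calc s * e3 = w1 * e3 - w0 * (v0' * (v1 * e3)) := by rw [hsdef]; noncomm_ring
            _ = -(w0 * e1) - w0 * (v0' * (v0 - v0 * e1)) := by rw [hw1e3, hv1e3]
            _ = -(w0 * e1) - w0 * ((v0' * v0) - (v0' * v0) * e1) := by noncomm_ring
            _ = -(w0 * e1) - w0 * (1 - 1 * e1) := by rw [h2]
            _ = -w0 := by noncomm_ring
        have hw0n : ¬IsUnit w0 := by
          have := nonunit_neg (nonunit_mul_right hs e3)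
          rw [key1, neg_neg] at this
          exact this
        have hw1n : ¬IsUnit w1 := by
          have hw1 : w1 = s + w0 * (v0' * v1) := by rw [hsdef]; abel
          rw [hw1]
          exact nonunit_add hs (nonunit_mul_right hw0n _)
        rcases hwu' with h | h
        exacts [hw0n h, hw1n h]
      exact unit2 v0 v1 w0 w1 v0' h1 h2 hs
    · obtain ⟨v1', h1, h2⟩ := exists_inv hv
      have hs : IsUnit (w0 - w1 * (v1' * v0)) := by
        by_contra hs
        set s := w0 - w1 * (v1' * v0) with hsdef
        have hw0e2 : w0 * e2 = -(w1 * e4) := by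
          rw [eq_neg_iff_add_eq_zero]; exact hw1e
        have hv0e2 : v0 * e2 = v1 - v1 * e4 := by
          rw [eq_sub_iff_add_eq]; exact hv1e
        have key1 : s * e2 = -w1 := by
          calc s * e2 = w0 * e2 - w1 * (v1' * (v0 * e2)) := by rw [hsdef]; noncomm_ring
            _ = -(w1 * e4) - w1 * (v1' * (v1 - v1 * e4)) := by rw [hw0e2, hv0e2]
            _ = -(w1 * e4) - w1 * ((v1' * v1) - (v1' * v1) * e4) := by noncomm_ring
            _ = -(w1 * e4) - w1 * (1 - 1 * e4) := by rw [h2]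
            _ = -w1 := by noncomm_ring
        have hw1n : ¬IsUnit w1 := by
          have := nonunit_neg (nonunit_mul_right hs e2)
          rw [key1, neg_neg] at this
          exact this
        have hw0n : ¬IsUnit w0 := by
          have hw0 : w0 = s + w1 * (v1' * v0) := by rw [hsdef]; abel
          rw [hw0]
          exact nonunit_add hs (nonunit_mul_right hw1n _)
        rcases hwu' with h | h
        exacts [hw0n h, hw1n h]
      exact unit2_col v0 v1 w0 w1 v1' h1 h2 hs
  obtain ⟨Pi, hP1, hP2⟩ := mat_inv hPu
  refine ⟨!![v0, v1; w0, w1], Pi, hP1, hP2, ?_⟩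
  ext i j
  fin_cases i <;> fin_cases j <;>
    simp only [Matrix.mul_apply, Fin.sum_univ_two, cons_val', cons_val_zero, cons_val_one,
      head_cons, head_fin_const, empty_val', cons_val_fin_one]
  · simpa using hv0e
  · simpa using hv1e
  · simpa using hw0e
  · simpa using hw1e

/-- Core sufficiency step: a "companion-type" matrix is strongly clean,
given the root hypothesis. -/
lemma comp_clean
    (H : ∀ w₀ w₁ : R, ¬ IsUnit w₀ → ¬ IsUnit w₁ →
        ∃ lam : R, ¬ IsUnit lam ∧ lam ^ 2 - lam * (1 + w₁) - w₀ = 0)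
    {α β : R} (hα : ¬IsUnit α) (hαβ : ¬IsUnit (α + β - 1)) :
    IsStronglyClean !![(0:R), α; 1, β] := by
  have hw1 : ¬IsUnit (β - 1) := by
    have h := nonunit_add hαβ (nonunit_neg hα)
    have e : α + β - 1 + -α = β - 1 := by abel
    rwa [e] at h
  obtain ⟨lam, hlam, hlameq⟩ := H α (β - 1) hα hw1
  obtain ⟨lam', hlam', hlameq'⟩ := H (α + β - 1) (-(β - 1)) hαβ (nonunit_neg hw1)
  have r1 : lam * lam = lam * β + α := by
    rw [pow_two] at hlameq
    have h2 : lam * lam - (lam * β + α) = lam * lam - lam * (1 + (β - 1)) - α := by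
      noncomm_ring
    rw [hlameq] at h2
    exact sub_eq_zero.mp h2
  have r2 : (1 - lam') * (1 - lam') = (1 - lam') * β + α := by
    rw [pow_two] at hlameq'
    have h2 : (1 - lam') * (1 - lam') - ((1 - lam') * β + α)
        = lam' * lam' - lam' * (1 + -(β - 1)) - (α + β - 1) := by noncomm_ring
    rw [hlameq'] at h2
    exact sub_eq_zero.mp h2
  -- Q diagonalizes the companion matrix
  have hQu : IsUnit !![(1:R), lam; 1, 1 - lam'] := by
    apply unit2 1 lam 1 (1 - lam') 1 (one_mul 1) (one_mul 1)
    have e : (1 - lam') - 1 * (1 * lam) = 1 - (lam + lam') := by noncomm_ring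
    rw [e]
    exact unit_one_sub (nonunit_add hlam hlam')
  obtain ⟨Qi, hQ1, hQ2⟩ := mat_inv hQu
  set Q : M2 := !![(1:R), lam; 1, 1 - lam'] with hQdef
  have hQC : Q * !![(0:R), α; 1, β] = !![lam, 0; 0, 1 - lam'] * Q := by
    rw [hQdef, mul_fin_two, mul_fin_two]
    refine mat2_ext ?_ ?_ ?_ ?_
    · noncomm_ring
    · rw [r1]; noncomm_ring
    · noncomm_ring
    · rw [r2]; noncomm_ring
  have hCeq : !![(0:R), α; 1, β] = Qi * !![lam, 0; 0, 1 - lam'] * Q := eq_conj hQ2 hQC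
  refine ⟨Qi * !![(1:R), 0; 0, 0] * Q, Qi * !![lam - 1, 0; 0, 1 - lam'] * Q, ?_, ?_, ?_, ?_⟩
  · show _ * _ = _
    rw [conj_mul_s10 hQ1]
    congr 2
    rw [mul_fin_two]
    refine mat2_ext ?_ ?_ ?_ ?_ <;> noncomm_ring
  · exact conj_isUnit hQ1 hQ2 (diag_unit _ _ (unit_sub_one hlam) (unit_one_sub hlam'))
  · rw [hCeq]
    have : (!![(1:R), 0; 0, 0] : M2) + !![lam - 1, 0; 0, 1 - lam'] = !![lam, 0; 0, 1 - lam'] := by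
      rw [add2]
      refine mat2_ext ?_ ?_ ?_ ?_ <;> abel
    rw [← this]
    have hadd : ∀ X Y : M2, (Qi * X * Q) + (Qi * Y * Q) = Qi * (X + Y) * Q := by
      intro X Y; noncomm_ring
    rw [hadd]
  · rw [conj_mul_s10 hQ1, conj_mul_s10 hQ1]
    congr 2
    rw [mul_fin_two, mul_fin_two]
    refine mat2_ext ?_ ?_ ?_ ?_ <;> noncomm_ring

lemma necessity (hSC : ∀ A : M2, IsStronglyClean A) (w₀ w₁ : R)
    (h0 : ¬IsUnit w₀) (h1 : ¬IsUnit w₁) :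
    ∃ lam : R, ¬IsUnit lam ∧ lam ^ 2 - lam * (1 + w₁) - w₀ = 0 := by
  set C : M2 := !![0, w₀; 1, 1 + w₁] with hCdef
  have hC : ¬IsUnit C := fun h => h0 (unit_extract_01 h)
  have hC1 : ¬IsUnit (C - 1) := by
    intro h
    have e : C - 1 = !![(-1:R), w₀; 1, w₁] := by
      rw [hCdef, one2, sub2]
      refine mat2_ext ?_ ?_ ?_ ?_ <;> abel
    rw [e] at h
    have hT : (!![(1:R),0;1,1] : M2) * !![(-1:R), w₀; 1, w₁] = !![(-1:R), w₀; 0, w₀ + w₁] := by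
      rw [mul_fin_two]
      refine mat2_ext ?_ ?_ ?_ ?_ <;> noncomm_ring
    have hTu : IsUnit (!![(1:R),0;1,1] : M2) := by
      apply unit_of_inv _ !![(1:R),0;-1,1] <;>
        · rw [mul_fin_two, one2]
          refine mat2_ext ?_ ?_ ?_ ?_ <;> noncomm_ring
    have h2 := hTu.mul h
    rw [hT] at h2
    exact nonunit_add h0 h1 (unit_extract_tri h2)
  obtain ⟨E, U, hEi, hUu, hsum, hcomm⟩ := hSC C
  have hE0 : E ≠ 0 := by
    rintro rfl
    rw [zero_add] at hsum
    exact hC (hsum ▸ hUu)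
  have hE1 : E ≠ 1 := by
    rintro rfl
    apply hC1
    have e : C - 1 = U := by rw [hsum]; abel
    rw [e]; exact hUu
  obtain ⟨P, Pi, hP1, hP2, hPE⟩ := idem_structure E hEi hE0 hE1
  have hd2 : (!![(1:R),0;0,0] : M2) = P * E * Pi := by
    calc (!![(1:R),0;0,0] : M2) = !![(1:R),0;0,0] * (P * Pi) := by rw [hP1, mul_one]
      _ = (!![(1:R),0;0,0] * P) * Pi := by rw [mul_assoc]
      _ = (P * E) * Pi := by rw [hPE]
  have hEC : E * C = C * E := by
    calc E * C = E * (E + U) := by rw [← hsum]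
      _ = E * E + E * U := by rw [mul_add]
      _ = E * E + U * E := by rw [hcomm]
      _ = (E + U) * E := by rw [add_mul]
      _ = C * E := by rw [← hsum]
  have hPC : P * C = (P * C * Pi) * P := by
    calc P * C = (P * C) * (Pi * P) := by rw [hP2, mul_one]
      _ = (P * C * Pi) * P := by noncomm_ring
  have hdB : (!![(1:R),0;0,0] : M2) * (P * C * Pi) = (P * C * Pi) * !![(1:R),0;0,0] := by
    rw [hd2, conj_mul_s10 hP2, conj_mul_s10 hP2, hEC]
  set B : M2 := P * C * Pi with hBdef
  have hB01 : B 0 1 = 0 := by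
    have h' := congrFun (congrFun hdB 0) 1
    simpa [Matrix.mul_apply, Fin.sum_univ_two] using h'
  have hB10 : B 1 0 = 0 := by
    have h' := congrFun (congrFun hdB 1) 0
    have h'' : (0:R) = B 1 0 := by
      simpa [Matrix.mul_apply, Fin.sum_univ_two] using h'
    exact h''.symm
  have hBeta : B = !![B 0 0, 0; 0, B 1 1] := by
    have h' := eta_fin_two B
    rw [hB01, hB10] at h'
    exact h'
  -- q := B 1 1 is a unit
  have hBdU : B - !![(1:R),0;0,0] = P * U * Pi := by
    have hCU : C - E = U := by rw [hsum]; abel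
    calc B - !![(1:R),0;0,0] = P * C * Pi - P * E * Pi := by rw [hBdef, hd2]
      _ = P * (C - E) * Pi := by noncomm_ring
      _ = P * U * Pi := by rw [hCU]
  have hqu : IsUnit (B 1 1) := by
    have hu : IsUnit (B - !![(1:R),0;0,0]) := by
      rw [hBdU]; exact conj_isUnit hP2 hP1 hUu
    have e : B - !![(1:R),0;0,0] = !![B 0 0 - 1, 0; 0, B 1 1] := by
      conv_lhs => rw [hBeta, sub2]
      refine mat2_ext ?_ ?_ ?_ ?_ <;> abel
    rw [e] at hu
    exact (unit_extract_diag hu).2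
  have hp : ¬IsUnit (B 0 0) := by
    intro hpu
    apply hC
    have hCB : C = Pi * B * P := eq_conj hP2 hPC
    have hBu : IsUnit B := by
      rw [hBeta]; exact diag_unit _ _ hpu hqu
    rw [hCB]
    exact conj_isUnit hP1 hP2 hBu
  -- eigenvector equations from row 0 of P
  have hPC' : P * C = !![B 0 0, 0; 0, B 1 1] * P := by rw [← hBeta]; exact hPC
  have heig0 : P 0 1 = B 0 0 * P 0 0 := by
    have h' := congrFun (congrFun hPC' 0) 0
    simpa [hCdef, Matrix.mul_apply, Fin.sum_univ_two] using h'
  have heig1 : P 0 0 * w₀ + P 0 1 * (1 + w₁) = B 0 0 * P 0 1 := by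
    have h' := congrFun (congrFun hPC' 0) 1
    simpa [hCdef, Matrix.mul_apply, Fin.sum_univ_two] using h'
  have hyn : ¬IsUnit (P 0 1) := by
    rw [heig0]; exact nonunit_mul_right hp _
  have hx : IsUnit (P 0 0) := by
    by_contra hx
    have h' := congrFun (congrFun hP1 0) 0
    simp [Matrix.mul_apply, Fin.sum_univ_two, Matrix.one_apply] at h'
    have : ¬IsUnit (P 0 0 * Pi 0 0 + P 0 1 * Pi 1 0) :=
      nonunit_add (nonunit_mul_right hx _) (nonunit_mul_right hyn _)
    rw [h'] at this
    exact this isUnit_one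
  obtain ⟨x', hxx', hx'x⟩ := exists_inv hx
  refine ⟨x' * (B 0 0 * P 0 0), ?_, ?_⟩
  · intro hlu
    apply hp
    have e : P 0 0 * (x' * (B 0 0 * P 0 0)) * x' = B 0 0 := by
      calc P 0 0 * (x' * (B 0 0 * P 0 0)) * x'
          = (P 0 0 * x') * B 0 0 * (P 0 0 * x') := by noncomm_ring
        _ = 1 * B 0 0 * 1 := by rw [hxx']
        _ = B 0 0 := by noncomm_ring
    rw [← e]
    exact ((hx.mul hlu).mul (unit_of_mul_eq_one_left hx'x))
  · have key : (x' * (B 0 0 * P 0 0)) * (x' * (B 0 0 * P 0 0))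
        = w₀ + (x' * (B 0 0 * P 0 0)) * (1 + w₁) := by
      calc (x' * (B 0 0 * P 0 0)) * (x' * (B 0 0 * P 0 0))
          = x' * (B 0 0 * ((P 0 0 * x') * (B 0 0 * P 0 0))) := by noncomm_ring
        _ = x' * (B 0 0 * (1 * (B 0 0 * P 0 0))) := by rw [hxx']
        _ = x' * (B 0 0 * (B 0 0 * P 0 0)) := by rw [one_mul]
        _ = x' * (B 0 0 * P 0 1) := by rw [← heig0]
        _ = x' * (P 0 0 * w₀ + P 0 1 * (1 + w₁)) := by rw [← heig1]
        _ = (x' * P 0 0) * w₀ + (x' * P 0 1) * (1 + w₁) := by noncomm_ring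
        _ = 1 * w₀ + (x' * P 0 1) * (1 + w₁) := by rw [hx'x]
        _ = w₀ + (x' * (B 0 0 * P 0 0)) * (1 + w₁) := by rw [one_mul, heig0]
    rw [pow_two, key]
    abel

lemma companionize (A : M2) (hA : ¬IsUnit A) (hA1 : ¬IsUnit (A - 1)) :
    ∃ P Pi : M2, P * Pi = 1 ∧ Pi * P = 1 ∧ ∀ i, (A * P) i 0 = P i 1 := by
  by_cases hc : IsUnit (A 1 0)
  · obtain ⟨c', hcc', hc'c⟩ := exists_inv hc
    refine ⟨!![1, A 0 0; 0, A 1 0], !![1, -(A 0 0 * c'); 0, c'], ?_, ?_, ?_⟩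
    · rw [mul_fin_two, one2]
      refine mat2_ext ?_ ?_ ?_ ?_
      · noncomm_ring
      · noncomm_ring
      · noncomm_ring
      · calc 0 * -(A 0 0 * c') + A 1 0 * c' = A 1 0 * c' := by noncomm_ring
          _ = 1 := hcc'
    · rw [mul_fin_two, one2]
      refine mat2_ext ?_ ?_ ?_ ?_
      · noncomm_ring
      · calc 1 * A 0 0 + -(A 0 0 * c') * A 1 0 = A 0 0 - A 0 0 * (c' * A 1 0) := by noncomm_ring
          _ = A 0 0 - A 0 0 * 1 := by rw [hc'c]
          _ = 0 := by noncomm_ring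
      · noncomm_ring
      · calc 0 * A 0 0 + c' * A 1 0 = c' * A 1 0 := by noncomm_ring
          _ = 1 := hc'c
    · intro i
      fin_cases i <;> simp [Matrix.mul_apply, Fin.sum_univ_two]
  by_cases hb : IsUnit (A 0 1)
  · obtain ⟨b', hbb', hb'b⟩ := exists_inv hb
    refine ⟨!![0, A 0 1; 1, A 1 1], !![-(A 1 1 * b'), 1; b', 0], ?_, ?_, ?_⟩
    · rw [mul_fin_two, one2]
      refine mat2_ext ?_ ?_ ?_ ?_
      · calc 0 * -(A 1 1 * b') + A 0 1 * b' = A 0 1 * b' := by noncomm_ring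
          _ = 1 := hbb'
      · noncomm_ring
      · noncomm_ring
      · noncomm_ring
    · rw [mul_fin_two, one2]
      refine mat2_ext ?_ ?_ ?_ ?_
      · noncomm_ring
      · calc -(A 1 1 * b') * A 0 1 + 1 * A 1 1 = A 1 1 - A 1 1 * (b' * A 0 1) := by noncomm_ring
          _ = A 1 1 - A 1 1 * 1 := by rw [hb'b]
          _ = 0 := by noncomm_ring
      · noncomm_ring
      · calc b' * A 0 1 + 0 * A 1 1 = b' * A 0 1 := by noncomm_ring
          _ = 1 := hb'b
    · intro i
      fin_cases i <;> simp [Matrix.mul_apply, Fin.sum_univ_two]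
  by_cases hcd : IsUnit (A 1 0 + A 1 1 - (A 0 0 + A 0 1))
  · have hPu : IsUnit !![(1:R), A 0 0 + A 0 1; 1, A 1 0 + A 1 1] := by
      apply unit2 1 (A 0 0 + A 0 1) 1 (A 1 0 + A 1 1) 1 (one_mul 1) (one_mul 1)
      have e : A 1 0 + A 1 1 - 1 * (1 * (A 0 0 + A 0 1))
          = A 1 0 + A 1 1 - (A 0 0 + A 0 1) := by noncomm_ring
      rw [e]; exact hcd
    obtain ⟨Pi, h1, h2⟩ := mat_inv hPu
    refine ⟨_, Pi, h1, h2, ?_⟩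
    intro i
    fin_cases i <;> simp [Matrix.mul_apply, Fin.sum_univ_two]
  · exfalso
    have hda : ¬IsUnit (A 1 1 - A 0 0) := by
      have e : A 1 1 - A 0 0 = (A 1 0 + A 1 1 - (A 0 0 + A 0 1)) + A 0 1 + -(A 1 0) := by abel
      rw [e]
      exact nonunit_add (nonunit_add hcd hb) (nonunit_neg hc)
    by_cases ha : IsUnit (A 0 0)
    · apply hA
      obtain ⟨a', h1, h2⟩ := exists_inv ha
      rw [eta_fin_two A]
      apply unit2 _ _ _ _ a' h1 h2
      have e : A 1 1 - A 1 0 * (a' * A 0 1)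
          = A 0 0 + ((A 1 1 - A 0 0) + -(A 1 0 * (a' * A 0 1))) := by abel
      rw [e]
      exact unit_add_nonunit ha (nonunit_add hda (nonunit_neg (nonunit_mul_right hc _)))
    · apply hA1
      obtain ⟨a', h1, h2⟩ := exists_inv (unit_sub_one ha)
      have e : A - 1 = !![A 0 0 - 1, A 0 1 - 0; A 1 0 - 0, A 1 1 - 1] := by
        conv_lhs => rw [eta_fin_two A, one2, sub2]
      rw [e]
      apply unit2 _ _ _ _ a' h1 h2
      have e2 : A 1 1 - 1 - (A 1 0 - 0) * (a' * (A 0 1 - 0))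
          = (A 0 0 - 1) + ((A 1 1 - A 0 0) + -(A 1 0 * (a' * A 0 1))) := by noncomm_ring
      rw [e2]
      exact unit_add_nonunit (unit_sub_one ha)
        (nonunit_add hda (nonunit_neg (nonunit_mul_right hc _)))

lemma sufficiency
    (H : ∀ w₀ w₁ : R, ¬ IsUnit w₀ → ¬ IsUnit w₁ →
        ∃ lam : R, ¬ IsUnit lam ∧ lam ^ 2 - lam * (1 + w₁) - w₀ = 0)
    (A : M2) : IsStronglyClean A := by
  by_cases hA : IsUnit A
  · exact ⟨0, A, by simp [IsIdempotentElem], hA, (zero_add A).symm, by simp⟩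
  by_cases hA1 : IsUnit (A - 1)
  · exact ⟨1, A - 1, by simp [IsIdempotentElem], hA1, by abel, by simp⟩
  obtain ⟨P, Pi, hP1, hP2, hcol⟩ := companionize A hA hA1
  set C : M2 := Pi * A * P with hCdef
  have hAC : A = P * C * Pi := by
    calc A = (P * Pi) * A * (P * Pi) := by rw [hP1]; noncomm_ring
      _ = P * (Pi * A * P) * Pi := by noncomm_ring
      _ = P * C * Pi := by rw [← hCdef]
  have hC0 : ∀ i, C i 0 = (1 : M2) i 1 := by
    intro i
    have h1' : C = Pi * (A * P) := by rw [hCdef, mul_assoc]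
    calc C i 0 = Pi i 0 * (A * P) 0 0 + Pi i 1 * (A * P) 1 0 := by
          rw [h1']; simp [Matrix.mul_apply, Fin.sum_univ_two]
      _ = Pi i 0 * P 0 1 + Pi i 1 * P 1 1 := by rw [hcol 0, hcol 1]
      _ = (Pi * P) i 1 := by simp [Matrix.mul_apply, Fin.sum_univ_two]
      _ = (1 : M2) i 1 := by rw [hP2]
  have hC00 : C 0 0 = 0 := by simpa [Matrix.one_apply] using hC0 0
  have hC10 : C 1 0 = 1 := by simpa [Matrix.one_apply] using hC0 1
  have hCeta : C = !![0, C 0 1; 1, C 1 1] := by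
    have h' := eta_fin_two C
    rw [hC00, hC10] at h'
    exact h'
  have hCn : ¬IsUnit C := fun h => hA (by rw [hAC]; exact conj_isUnit hP2 hP1 h)
  have hC1n : ¬IsUnit (C - 1) := by
    intro h
    apply hA1
    have e : A - 1 = P * (C - 1) * Pi := by
      calc A - 1 = P * C * Pi - P * Pi := by rw [hAC, hP1]
        _ = P * (C - 1) * Pi := by noncomm_ring
    rw [e]
    exact conj_isUnit hP2 hP1 h
  have hαn : ¬IsUnit (C 0 1) := by
    intro h
    apply hCn
    rw [hCeta]
    obtain ⟨α', ha1, ha2⟩ := exists_inv h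
    apply unit2_col _ _ _ _ α' ha1 ha2
    have e : (1:R) - C 1 1 * (α' * 0) = 1 := by noncomm_ring
    rw [e]; exact isUnit_one
  have hαβn : ¬IsUnit (C 0 1 + C 1 1 - 1) := by
    intro h
    apply hC1n
    have e : C - 1 = !![(-1:R), C 0 1; 1, C 1 1 - 1] := by
      conv_lhs => rw [hCeta, one2, sub2]
      refine mat2_ext ?_ ?_ ?_ ?_ <;> abel
    rw [e]
    apply unit2 _ _ _ _ (-1 : R) (by noncomm_ring) (by noncomm_ring)
    have e2 : C 1 1 - 1 - 1 * (-1 * C 0 1) = C 0 1 + C 1 1 - 1 := by noncomm_ring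
    rw [e2]; exact h
  have hclean := comp_clean H hαn hαβn
  rw [hAC, hCeta]
  exact clean_conj hP1 hP2 hclean

end Local
end SCAux

/-- For a local ring `R` (where `J(R)` is the set of nonunits), `M₂(R)` is strongly clean
iff for all `w₀, w₁ ∈ J(R)` the polynomial `t² - (1+w₁)t - w₀` has a left root in
`J(R)`. -/
theorem matrix_two_stronglyClean_iff_left_root {R : Type*} [Ring R] [IsLocalRing R] :
    (∀ A : Matrix (Fin 2) (Fin 2) R, IsStronglyClean A) ↔
      (∀ w₀ w₁ : R, ¬ IsUnit w₀ → ¬ IsUnit w₁ →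
        ∃ lam : R, ¬ IsUnit lam ∧ lam ^ 2 - lam * (1 + w₁) - w₀ = 0) := by
  constructor
  · exact fun h w₀ w₁ h0 h1 => SCAux.necessity h w₀ w₁ h0 h1
  · exact fun H A => SCAux.sufficiency H A
end

section
/- For a local ring R, and W the set of monic degree-2 polynomials f over R with f(0) ∈ J(R) and f(1) ∈ J(R): every f ∈ W has a left root in J(R) if and only if every f ∈ W has a left root in 1 + J(R). -/
/-- For a local ring `R` (where `J(R)` is the set of nonunits), with `W` the set of monic
quadratics `f(t) = t² + at + b` such that `f(0), f(1) ∈ J(R)`: every `f ∈ W` has a left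
root in `J(R)` iff every `f ∈ W` has a left root in `1 + J(R)`. -/
theorem left_root_in_jacobson_iff_in_one_add_jacobson {R : Type*} [Ring R]
    [IsLocalRing R] :
    (∀ a b : R, ¬ IsUnit b → ¬ IsUnit (1 + a + b) →
        ∃ lam : R, ¬ IsUnit lam ∧ lam ^ 2 + lam * a + b = 0) ↔
      (∀ a b : R, ¬ IsUnit b → ¬ IsUnit (1 + a + b) →
        ∃ lam : R, ¬ IsUnit (lam - 1) ∧ lam ^ 2 + lam * a + b = 0) := by
  constructor
  · intro H a b hb h1
    obtain ⟨μ, hμu, hμ⟩ := H (-(2 + a)) (1 + a + b) h1 (by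
      intro h; apply hb; convert h using 1; rw [show (2:R) = 1 + 1 by norm_num]; abel)
    refine ⟨1 - μ, ?_, ?_⟩
    · intro h; apply hμu; simpa using h.neg
    · have key : (1 - μ) ^ 2 + (1 - μ) * a + b
          = μ ^ 2 + μ * (-(2 + a)) + (1 + a + b) := by noncomm_ring
      rw [key, hμ]
  · intro H a b hb h1
    obtain ⟨μ, hμu, hμ⟩ := H (-(2 + a)) (1 + a + b) h1 (by
      intro h; apply hb; convert h using 1; rw [show (2:R) = 1 + 1 by norm_num]; abel)
    refine ⟨1 - μ, ?_, ?_⟩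
    · intro h; apply hμu; simpa using h.neg
    · have key : (1 - μ) ^ 2 + (1 - μ) * a + b
          = μ ^ 2 + μ * (-(2 + a)) + (1 + a + b) := by noncomm_ring
      rw [key, hμ]
end
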